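/- arXiv:1702.03075 — 5 statements merged into one kernel-verified Lean document; each statement's English description precedes it below -/
import Mathlib

section
/- For every positive integer k, every k-in-out graph has at least 2k−1 vertices. -/
/-- A directed path in the digraph with edge relation `E` and vertex set `Vset`:
a nonempty list of distinct vertices of `Vset`, with consecutive vertices joined
by directed edges. -/
def IsPathOn {α : Type*} (E : α → α → Prop) (Vset : Finset α) (p : List α) : Prop :=
  p ≠ [] ∧ p.Nodup ∧ p.Chain' E ∧ ∀ x ∈ p, x ∈ Vset

/-- A Hamiltonian path from `u` to `v` in the digraph with edge relation `E`
and vertex set `Vset`: a list of distinct vertices containing every vertex of `Vset`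
(and no others), starting at `u`, ending at `v`, with consecutive vertices joined
by directed edges. -/
def IsHamPathOn {α : Type*} (E : α → α → Prop) (Vset : Finset α) (u v : α)
    (p : List α) : Prop :=
  p.Nodup ∧ p.Chain' E ∧ p.head? = some u ∧ p.getLast? = some v ∧ ∀ x, x ∈ p ↔ x ∈ Vset

/-- The single visit condition: there is no collection of two or more pairwise
vertex-disjoint directed paths, each starting at an incoming vertex and ending at an
outgoing vertex, whose union visits every vertex. -/
def SingleVisit {α : Type*} (E : α → α → Prop) (Vset : Finset α) {k : ℕ}
    (inc out : Fin k → α) : Prop :=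
  ¬ ∃ P : Finset (List α), 2 ≤ P.card ∧
      (∀ p ∈ P, IsPathOn E Vset p ∧ (∃ j, p.head? = some (inc j)) ∧
        (∃ m, p.getLast? = some (out m))) ∧
      (∀ p ∈ P, ∀ q ∈ P, p ≠ q → ∀ x, x ∈ p → x ∉ q) ∧
      (∀ x ∈ Vset, ∃ p ∈ P, x ∈ p)

/-- A `k`-in-out graph: a digraph (no loops, all edges within the vertex set) together
with `k` distinct incoming vertices and `k` distinct outgoing vertices (the two sets may
overlap), satisfying the paired vertices condition and the single visit condition. -/
structure IsInOutGraph {α : Type*} (E : α → α → Prop) (Vset : Finset α) {k : ℕ}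
    (inc out : Fin k → α) : Prop where
  no_loops : ∀ x, ¬ E x x
  edge_mem : ∀ x y, E x y → x ∈ Vset ∧ y ∈ Vset
  inc_mem : ∀ j, inc j ∈ Vset
  out_mem : ∀ j, out j ∈ Vset
  inc_inj : Function.Injective inc
  out_inj : Function.Injective out
  paired : ∀ j m, (∃ p, IsHamPathOn E Vset (inc j) (out m) p) ↔ j = m
  single_visit : SingleVisit E Vset inc out

private lemma list_getLast?_append_right {α : Type*} {l₁ l₂ : List α} (h : l₂ ≠ []) :
    (l₁ ++ l₂).getLast? = l₂.getLast? := by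
  rw [List.getLast?_append]
  obtain ⟨a, ha⟩ := Option.isSome_iff_exists.mp (List.getLast?_isSome.mpr h)
  rw [ha]; rfl

private lemma list_head?_append_left {α : Type*} {l₁ l₂ : List α} (h : l₁ ≠ []) :
    (l₁ ++ l₂).head? = l₁.head? := by
  rw [List.head?_append]
  obtain ⟨a, ha⟩ := Option.isSome_iff_exists.mp (List.isSome_head?.mpr h)
  rw [ha]; rfl

theorem inOut_card_lower_bound' {α : Type*} [DecidableEq α] {k : ℕ} (hk : 1 ≤ k)
    (E : α → α → Prop) (Vset : Finset α) (inc out : Fin k → α)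
    (h : IsInOutGraph E Vset inc out) :
    2 * k - 1 ≤ Vset.card := by
  by_contra hcon
  push_neg at hcon
  set j0 : Fin k := ⟨0, hk⟩ with hj0
  obtain ⟨p, hnd, hch, hhead, hlast, hmem⟩ := (h.paired j0 j0).mpr rfl
  have hpne : p ≠ [] := by
    intro he; rw [he] at hhead; simp at hhead
  set n := p.length with hn
  have hn1 : 1 ≤ n := List.length_pos_iff.mpr hpne
  have hcard : Vset.card = n := by
    have ht : p.toFinset = Vset := by
      ext x; simp [List.mem_toFinset, hmem x]
    rw [← ht, List.toFinset_card_of_nodup hnd]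
  have hcard1 : 0 < Vset.card := Finset.card_pos.mpr ⟨inc j0, h.inc_mem j0⟩
  have hk2 : 2 ≤ k := by omega
  have hnlt : n < 2 * k - 1 := by omega
  -- endpoints of p
  have h0 : p[0]'(by omega) = inc j0 := by
    have h' := hhead
    rw [List.head?_eq_getElem?, List.getElem?_eq_getElem (by omega : 0 < p.length)] at h'
    exact Option.some.inj h'
  have hN : p[n-1]'(by omega) = out j0 := by
    have h' := hlast
    rw [List.getLast?_eq_getElem?, List.getElem?_eq_getElem (by omega : p.length - 1 < p.length)] at h'
    exact Option.some.inj h'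
  -- indexOf facts
  have hidx_inc : ∀ j : Fin k, List.idxOf (inc j) p < n :=
    fun j => List.idxOf_lt_length_iff.mpr ((hmem _).mpr (h.inc_mem j))
  have hidx_out : ∀ m : Fin k, List.idxOf (out m) p < n :=
    fun m => List.idxOf_lt_length_iff.mpr ((hmem _).mpr (h.out_mem m))
  have hget_inc : ∀ j : Fin k, p[List.idxOf (inc j) p]'(hidx_inc j) = inc j :=
    fun j => List.getElem_idxOf (hidx_inc j)
  have hget_out : ∀ m : Fin k, p[List.idxOf (out m) p]'(hidx_out m) = out m :=
    fun m => List.getElem_idxOf (hidx_out m)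
  -- the counting sets
  set s : Finset (Fin k) := Finset.univ.erase j0 with hsdef
  have hs : s.card = k - 1 := by
    rw [hsdef, Finset.card_erase_of_mem (Finset.mem_univ _), Finset.card_univ, Fintype.card_fin]
  set A : Finset ℕ := s.image (fun j => List.idxOf (inc j) p) with hAdef
  set B : Finset ℕ := s.image (fun m => List.idxOf (out m) p + 1) with hBdef
  have hAcard : A.card = k - 1 := by
    rw [hAdef, Finset.card_image_of_injOn, hs]
    intro j _ j' _ hjj'
    apply h.inc_inj
    have e1 := hget_inc j
    have e2 := hget_inc j'
    rw [← e1, ← e2]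
    congr 1
  have hBcard : B.card = k - 1 := by
    rw [hBdef, Finset.card_image_of_injOn, hs]
    intro m _ m' _ hmm'
    apply h.out_inj
    dsimp only at hmm'
    have hmm'' : List.idxOf (out m) p = List.idxOf (out m') p := by omega
    have e1 := hget_out m
    have e2 := hget_out m'
    rw [← e1, ← e2]
    congr 1
  have hAsub : A ⊆ Finset.Icc 1 (n - 1) := by
    intro i hi
    rw [hAdef, Finset.mem_image] at hi
    obtain ⟨j, hj, rfl⟩ := hi
    have hjne : j ≠ j0 := Finset.ne_of_mem_erase hj
    have hne0 : List.idxOf (inc j) p ≠ 0 := by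
      intro hz
      apply hjne
      apply h.inc_inj
      have := hget_inc j
      rw [← this, ← h0]
      congr 1
    have := hidx_inc j
    rw [Finset.mem_Icc]
    omega
  have hBsub : B ⊆ Finset.Icc 1 (n - 1) := by
    intro i hi
    rw [hBdef, Finset.mem_image] at hi
    obtain ⟨m, hm, rfl⟩ := hi
    have hmne : m ≠ j0 := Finset.ne_of_mem_erase hm
    have hneN : List.idxOf (out m) p ≠ n - 1 := by
      intro hz
      apply hmne
      apply h.out_inj
      have := hget_out m
      rw [← this, ← hN]
      congr 1
    have := hidx_out m
    rw [Finset.mem_Icc]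
    omega
  have hIcc : (Finset.Icc 1 (n - 1)).card = n - 1 := by
    rw [Nat.card_Icc]; omega
  have hunion : (A ∪ B).card ≤ n - 1 := by
    calc (A ∪ B).card ≤ (Finset.Icc 1 (n - 1)).card :=
          Finset.card_le_card (Finset.union_subset hAsub hBsub)
      _ = n - 1 := hIcc
  have hinter : (A ∩ B).Nonempty := by
    rw [← Finset.card_pos]
    have := Finset.card_union_add_card_inter A B
    omega
  obtain ⟨i, hi⟩ := hinter
  rw [Finset.mem_inter] at hi
  obtain ⟨hiA, hiB⟩ := hi
  rw [hAdef, Finset.mem_image] at hiA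
  rw [hBdef, Finset.mem_image] at hiB
  obtain ⟨j, hjs, hji⟩ := hiA
  obtain ⟨m, hms, hmi⟩ := hiB
  set i2 : ℕ := List.idxOf (out m) p with hi2def
  have hi2lt : i2 + 1 < n := by
    have := hidx_inc j
    omega
  have hpi2 : p[i2]'(by omega) = out m := hget_out m
  have hpi21 : p[i2+1]'(by omega) = inc j := by
    have := hget_inc j
    rw [← this]
    congr 1
    omega
  -- the two pieces
  set l₁ : List α := p.take (i2 + 1) with hl1def
  set l₂ : List α := p.drop (i2 + 1) with hl2def
  have happ : l₁ ++ l₂ = p := List.take_append_drop _ _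
  have hl1len : l₁.length = i2 + 1 := by
    rw [hl1def, List.length_take]; omega
  have hl2len : l₂.length = n - (i2 + 1) := by
    rw [hl2def, List.length_drop]
  have hl1ne : l₁ ≠ [] := List.length_pos_iff.mp (by omega)
  have hl2ne : l₂ ≠ [] := List.length_pos_iff.mp (by omega)
  have hndapp : (l₁ ++ l₂).Nodup := by rw [happ]; exact hnd
  rw [List.nodup_append] at hndapp
  obtain ⟨hnd1, hnd2, hdisj⟩ := hndapp
  have hchapp : List.Chain' E (l₁ ++ l₂) := by rw [happ]; exact hch
  replace hchapp := List.isChain_append.mp hchapp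
  obtain ⟨hch1, hch2, -⟩ := hchapp
  -- endpoints of the pieces
  have hhead1 : l₁.head? = some (inc j0) := by
    rw [← list_head?_append_left (l₂ := l₂) hl1ne, happ]
    exact hhead
  have hlast2 : l₂.getLast? = some (out j0) := by
    rw [← list_getLast?_append_right (l₁ := l₁) hl2ne, happ]
    exact hlast
  have hlast1 : l₁.getLast? = some (out m) := by
    rw [List.getLast?_eq_getElem?, hl1len, Nat.add_sub_cancel,
      List.getElem?_eq_getElem (by omega : i2 < l₁.length)]
    congr 1
    exact List.getElem_take.trans hpi2
  have hhead2 : l₂.head? = some (inc j) := by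
    rw [List.head?_eq_getElem?, List.getElem?_eq_getElem (by omega : 0 < l₂.length)]
    congr 1
    exact List.getElem_drop.trans hpi21
  -- the collection
  have hne12 : l₁ ≠ l₂ := by
    intro he
    have h1 : inc j0 ∈ l₁ := List.mem_of_mem_head? (by rw [hhead1]; rfl)
    exact hdisj _ h1 _ (he ▸ h1) rfl
  apply h.single_visit
  refine ⟨{l₁, l₂}, ?_, ?_, ?_, ?_⟩
  · rw [Finset.card_pair hne12]
  · intro q hq
    rw [Finset.mem_insert, Finset.mem_singleton] at hq
    rcases hq with rfl | rfl
    · exact ⟨⟨hl1ne, hnd1, hch1, fun x hx => (hmem x).mp (happ ▸ List.mem_append_left l₂ hx)⟩,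
        ⟨j0, hhead1⟩, ⟨m, hlast1⟩⟩
    · exact ⟨⟨hl2ne, hnd2, hch2, fun x hx => (hmem x).mp (happ ▸ List.mem_append_right l₁ hx)⟩,
        ⟨j, hhead2⟩, ⟨j0, hlast2⟩⟩
  · intro q hq q' hq' hne x hx
    rw [Finset.mem_insert, Finset.mem_singleton] at hq hq'
    rcases hq with rfl | rfl <;> rcases hq' with rfl | rfl
    · exact absurd rfl hne
    · exact fun h' => hdisj _ hx _ h' rfl
    · exact fun h' => hdisj _ h' _ hx rfl
    · exact absurd rfl hne
  · intro x hx
    have : x ∈ l₁ ++ l₂ := happ ▸ (hmem x).mpr hx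
    rcases List.mem_append.mp this with hx1 | hx2
    · exact ⟨l₁, Finset.mem_insert_self _ _, hx1⟩
    · exact ⟨l₂, Finset.mem_insert_of_mem (Finset.mem_singleton_self _), hx2⟩

/-- every `k`-in-out graph (with `k ≥ 1`) has at least `2k - 1` vertices. -/
theorem inOut_card_lower_bound {α : Type*} [DecidableEq α] {k : ℕ} (hk : 1 ≤ k)
    (E : α → α → Prop) (Vset : Finset α) (inc out : Fin k → α)
    (h : IsInOutGraph E Vset inc out) :
    2 * k - 1 ≤ Vset.card := inOut_card_lower_bound' hk E Vset inc out h
end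

section
/- For every positive integer k, every k-in-out graph having exactly 2k−1 vertices has at least 4k−4 directed edges. -/
namespace InOutAux
open List

set_option linter.unusedSectionVars false

variable {α : Type*} [DecidableEq α]

open List

set_option linter.unusedSectionVars false

variable {α : Type*} [DecidableEq α]

lemma mem_zip_tail_iff {p : List α} {x y : α} :
    (x, y) ∈ p.zip p.tail ↔ ∃ n, ∃ _ : n + 1 < p.length, p[n] = x ∧ p[n+1] = y := by
  constructor
  · intro hm
    obtain ⟨n, hn, he⟩ := List.mem_iff_getElem.1 hm
    have hlen : n + 1 < p.length := by
      have h2 := hn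
      rw [List.length_zip, List.length_tail] at h2
      omega
    refine ⟨n, hlen, ?_⟩
    rw [List.getElem_zip] at he
    have ht : p.tail[n]'(by rw [List.length_tail]; omega) = p[n+1] := List.getElem_tail _
    constructor
    · exact congrArg Prod.fst he
    · rw [← ht]; exact congrArg Prod.snd he
  · rintro ⟨n, hlen, hx, hy⟩
    have hn : n < (p.zip p.tail).length := by
      rw [List.length_zip, List.length_tail]; omega
    refine List.mem_iff_getElem.2 ⟨n, hn, ?_⟩
    rw [List.getElem_zip, List.getElem_tail]
    exact Prod.ext hx hy

section HamPath

variable {E : α → α → Prop} {Vset : Finset α} {u v : α} {p : List α}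

lemma ham_length (hp : IsHamPathOn E Vset u v p) : p.length = Vset.card := by
  have : p.toFinset = Vset := by
    ext x; simp [List.mem_toFinset, hp.2.2.2.2 x]
  rw [← this, List.toFinset_card_of_nodup hp.1]

lemma ham_head (hp : IsHamPathOn E Vset u v p) :
    ∃ h : 0 < p.length, p[0] = u := by
  have := hp.2.2.1
  rw [List.head?_eq_getElem?] at this
  exact List.getElem?_eq_some_iff.1 this

lemma ham_last (hp : IsHamPathOn E Vset u v p) :
    ∃ h : p.length - 1 < p.length, p[p.length - 1] = v := by
  have := hp.2.2.2.1
  rw [List.getLast?_eq_getElem?] at this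
  exact List.getElem?_eq_some_iff.1 this

lemma ham_edge (hp : IsHamPathOn E Vset u v p) {x y : α}
    (hm : (x, y) ∈ p.zip p.tail) : E x y := by
  obtain ⟨n, hn, hx, hy⟩ := mem_zip_tail_iff.1 hm
  have := List.isChain_iff_getElem.1 hp.2.1 n (by omega)
  simpa [List.get_eq_getElem, hx, hy] using this

lemma ham_mem_left (hp : IsHamPathOn E Vset u v p) {x y : α}
    (hm : (x, y) ∈ p.zip p.tail) : x ∈ Vset := by
  obtain ⟨n, hn, hx, hy⟩ := mem_zip_tail_iff.1 hm
  exact (hp.2.2.2.2 x).1 (hx ▸ List.getElem_mem _)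

lemma ham_mem_right (hp : IsHamPathOn E Vset u v p) {x y : α}
    (hm : (x, y) ∈ p.zip p.tail) : y ∈ Vset := by
  obtain ⟨n, hn, hx, hy⟩ := mem_zip_tail_iff.1 hm
  exact (hp.2.2.2.2 y).1 (hy ▸ List.getElem_mem _)

lemma ham_succ_unique (hp : IsHamPathOn E Vset u v p) {x y y' : α}
    (hm : (x, y) ∈ p.zip p.tail) (hm' : (x, y') ∈ p.zip p.tail) : y = y' := by
  obtain ⟨n, hn, hx, hy⟩ := mem_zip_tail_iff.1 hm
  obtain ⟨n', hn', hx', hy'⟩ := mem_zip_tail_iff.1 hm'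
  have : n = n' := (hp.1.getElem_inj_iff (hi := by omega) (hj := by omega)).1 (hx.trans hx'.symm)
  subst this
  exact hy.symm.trans hy'

lemma ham_pred_unique (hp : IsHamPathOn E Vset u v p) {x x' y : α}
    (hm : (x, y) ∈ p.zip p.tail) (hm' : (x', y) ∈ p.zip p.tail) : x = x' := by
  obtain ⟨n, hn, hx, hy⟩ := mem_zip_tail_iff.1 hm
  obtain ⟨n', hn', hx', hy'⟩ := mem_zip_tail_iff.1 hm'
  have : n + 1 = n' + 1 := (hp.1.getElem_inj_iff (hi := by omega) (hj := by omega)).1 (hy.trans hy'.symm)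
  have : n = n' := by omega
  subst this
  exact hx.symm.trans hx'

lemma ham_ne_head (hp : IsHamPathOn E Vset u v p) {x y : α}
    (hm : (x, y) ∈ p.zip p.tail) : y ≠ u := by
  obtain ⟨n, hn, hx, hy⟩ := mem_zip_tail_iff.1 hm
  obtain ⟨h0, hu⟩ := ham_head hp
  intro hyu
  have : n + 1 = 0 := (hp.1.getElem_inj_iff (hi := by omega) (hj := h0)).1 (by rw [hy, hu, hyu])
  omega

lemma ham_ne_last (hp : IsHamPathOn E Vset u v p) {x y : α}
    (hm : (x, y) ∈ p.zip p.tail) : x ≠ v := by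
  obtain ⟨n, hn, hx, hy⟩ := mem_zip_tail_iff.1 hm
  obtain ⟨h0, hv⟩ := ham_last hp
  intro hxv
  have : n = p.length - 1 := (hp.1.getElem_inj_iff (hi := by omega) (hj := h0)).1 (by rw [hx, hv, hxv])
  omega

lemma ham_pred_exists (hp : IsHamPathOn E Vset u v p) {y : α}
    (hy : y ∈ Vset) (hyu : y ≠ u) : ∃ x, (x, y) ∈ p.zip p.tail := by
  obtain ⟨m, hm, hym⟩ := List.mem_iff_getElem.1 ((hp.2.2.2.2 y).2 hy)
  obtain ⟨h0, hu⟩ := ham_head hp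
  have hm0 : m ≠ 0 := by
    rintro rfl; exact hyu (hym.symm.trans hu)
  obtain ⟨m', rfl⟩ : ∃ m', m = m' + 1 := ⟨m - 1, by omega⟩
  exact ⟨p[m']'(by omega), mem_zip_tail_iff.2 ⟨m', hm, rfl, hym⟩⟩

end HamPath
open List

set_option linter.unusedSectionVars false

variable {α : Type*} [DecidableEq α]
variable {E : α → α → Prop} {Vset : Finset α} {p : List α}

lemma no_out_to_inc {k : ℕ} {inc out : Fin k → α} {j m l : Fin k}
    (hsv : SingleVisit E Vset inc out)
    (hp : IsHamPathOn E Vset (inc j) (out j) p) {x y : α}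
    (hm : (x, y) ∈ p.zip p.tail) (hx : x = out m) (hy : y = inc l) : False := by
  obtain ⟨n, hlen, hxn, hyn⟩ := mem_zip_tail_iff.1 hm
  set a := p.take (n+1) with hadef
  set b := p.drop (n+1) with hbdef
  have hab : a ++ b = p := List.take_append_drop _ _
  have hla : a.length = n + 1 := by
    rw [hadef, List.length_take]; omega
  have hlb : b.length = p.length - (n+1) := by
    rw [hbdef, List.length_drop]
  have ha0 : a ≠ [] := by
    intro hh; rw [hh] at hla; simp at hla
  have hb0 : b ≠ [] := by
    intro hh; rw [hh] at hlb; simp at hlb; omega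
  have hnd := hp.1
  rw [← hab, List.nodup_append] at hnd
  obtain ⟨hnda, hndb, hdisj⟩ := hnd
  replace hdisj : List.Disjoint a b := fun _ hx hy => hdisj _ hx _ hy rfl
  have hch := hp.2.1
  rw [← hab] at hch; replace hch := List.isChain_append.1 hch
  obtain ⟨hcha, hchb, -⟩ := hch
  have hp0 : p[0]? = some (inc j) := by
    rw [← List.head?_eq_getElem?]; exact hp.2.2.1
  have heada : a.head? = some (inc j) := by
    rw [List.head?_eq_getElem?, hadef, List.getElem?_take, if_pos (by omega)]
    exact hp0
  have lasta : a.getLast? = some x := by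
    rw [List.getLast?_eq_getElem?, hla]
    show (p.take (n+1))[n+1-1]? = some x
    rw [List.getElem?_take, if_pos (by omega)]
    simpa using (List.getElem?_eq_getElem (l := p) (i := n) (by omega)).trans (by rw [hxn])
  have headb : b.head? = some y := by
    rw [List.head?_eq_getElem?, hbdef, List.getElem?_drop]
    simpa using (List.getElem?_eq_getElem (l := p) (i := n+1) hlen).trans (by rw [hyn])
  have lastb : b.getLast? = some (out j) := by
    rw [List.getLast?_eq_getElem?, hlb, hbdef, List.getElem?_drop]
    have heq : n + 1 + (p.length - (n+1) - 1) = p.length - 1 := by omega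
    rw [heq, ← List.getLast?_eq_getElem?]
    exact hp.2.2.2.1
  have hmema : ∀ z ∈ a, z ∈ Vset := fun z hz =>
    (hp.2.2.2.2 z).1 (hab ▸ List.mem_append_left _ hz)
  have hmemb : ∀ z ∈ b, z ∈ Vset := fun z hz =>
    (hp.2.2.2.2 z).1 (hab ▸ List.mem_append_right _ hz)
  have hia : inc j ∈ a := List.mem_of_mem_head? (by rw [heada]; rfl)
  have aneb : a ≠ b := by
    intro he; exact hdisj hia (he ▸ hia)
  refine hsv ⟨{a, b}, ?_, ?_, ?_, ?_⟩
  · rw [Finset.card_pair aneb]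
  · intro q hq
    rcases Finset.mem_insert.1 hq with rfl | hq
    · exact ⟨⟨ha0, hnda, hcha, hmema⟩, ⟨j, heada⟩, ⟨m, by rw [lasta, hx]⟩⟩
    · rw [Finset.mem_singleton.1 hq]
      exact ⟨⟨hb0, hndb, hchb, hmemb⟩, ⟨l, by rw [headb, hy]⟩, ⟨j, lastb⟩⟩
  · intro q hq r hr hne z hzq
    have hq' : q = a ∨ q = b := by simpa using hq
    have hr' : r = a ∨ r = b := by simpa using hr
    rcases hq' with rfl | rfl <;> rcases hr' with rfl | rfl
    · exact absurd rfl hne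
    · exact hdisj hzq
    · exact fun hzr => hdisj hzr hzq
    · exact absurd rfl hne
  · intro z hz
    have : z ∈ a ++ b := hab ▸ (hp.2.2.2.2 z).2 hz
    rcases List.mem_append.1 this with hz' | hz'
    · exact ⟨a, by simp, hz'⟩
    · exact ⟨b, by simp, hz'⟩


variable {E : α → α → Prop} {Vset : Finset α} {p : List α}

section Struct2

variable {k : ℕ} {inc out : Fin k → α} {j : Fin k}

lemma struct (h : IsInOutGraph E Vset inc out) (hcard : Vset.card = 2 * k - 1)
    (hp : IsHamPathOn E Vset (inc j) (out j) p) :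
    (∀ x ∈ Vset, x ∉ Finset.image inc Finset.univ →
      ∃ e ∈ (p.zip p.tail).toFinset, e.2 = x ∧ (∃ m, e.1 = out m) ∧ e.1 ≠ out j) ∧
    (∀ v ∈ Vset, v ∉ Finset.image out Finset.univ →
      ∃ e ∈ (p.zip p.tail).toFinset, e.1 = v ∧ (∃ m, e.2 = inc m) ∧ e.2 ≠ inc j) := by
  classical
  have hk : 1 ≤ k := Nat.pos_of_ne_zero (by rintro rfl; exact j.elim0)
  set I : Finset α := Finset.image inc Finset.univ with hI
  set O : Finset α := Finset.image out Finset.univ with hO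
  have hIcard : I.card = k := by
    rw [hI, Finset.card_image_of_injective _ h.inc_inj, Finset.card_univ, Fintype.card_fin]
  have hOcard : O.card = k := by
    rw [hO, Finset.card_image_of_injective _ h.out_inj, Finset.card_univ, Fintype.card_fin]
  have hIsub : I ⊆ Vset := by
    intro x hx; rw [hI] at hx
    obtain ⟨l, -, rfl⟩ := Finset.mem_image.1 hx; exact h.inc_mem l
  have hOsub : O ⊆ Vset := by
    intro x hx; rw [hO] at hx
    obtain ⟨l, -, rfl⟩ := Finset.mem_image.1 hx; exact h.out_mem l
  set S : Finset (α × α) := (p.zip p.tail).toFinset with hS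
  set A : Finset (α × α) := S.filter (fun e => e.2 ∈ I) with hA
  have hmemS : ∀ {e : α × α}, e ∈ S ↔ e ∈ p.zip p.tail := by
    intro e; rw [hS, List.mem_toFinset]
  -- no edge from O to I
  have hOI : ∀ e ∈ S, e.1 ∈ O → e.2 ∉ I := by
    rintro ⟨x, y⟩ he hxO hyI
    obtain ⟨m, -, rfl⟩ := Finset.mem_image.1 hxO
    obtain ⟨l, -, rfl⟩ := Finset.mem_image.1 hyI
    exact no_out_to_inc h.single_visit hp (hmemS.1 he) rfl rfl
  -- card of A
  have hAcard : A.card = (I.erase (inc j)).card := by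
    apply Finset.card_bij (fun e _ => e.2)
    · rintro ⟨x, y⟩ he
      have h1 := Finset.mem_filter.1 he
      exact Finset.mem_erase.2 ⟨ham_ne_head hp (hmemS.1 h1.1), h1.2⟩
    · rintro ⟨x, y⟩ he ⟨x', y'⟩ he' hyy
      have h1 := (Finset.mem_filter.1 he).1
      have h2 := (Finset.mem_filter.1 he').1
      simp only at hyy
      subst hyy
      have := ham_pred_unique hp (hmemS.1 h1) (hmemS.1 h2)
      simp [this]
    · intro i hi
      obtain ⟨hine, hiI⟩ := Finset.mem_erase.1 hi
      obtain ⟨x, hx⟩ := ham_pred_exists hp (hIsub hiI) hine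
      exact ⟨(x, i), Finset.mem_filter.2 ⟨hmemS.2 hx, hiI⟩, rfl⟩
  have hecard : (I.erase (inc j)).card = k - 1 := by
    rw [Finset.card_erase_of_mem, hIcard]
    rw [hI]; exact Finset.mem_image.2 ⟨j, Finset.mem_univ _, rfl⟩
  have hVOcard : (Vset \ O).card = k - 1 := by
    rw [Finset.card_sdiff_of_subset hOsub, hcard, hOcard]; omega
  -- image of A under fst is Vset \ O
  have himg : A.image Prod.fst = Vset \ O := by
    apply Finset.eq_of_subset_of_card_le
    · intro x hx
      obtain ⟨⟨x', y⟩, he, rfl⟩ := Finset.mem_image.1 hx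
      have h1 := Finset.mem_filter.1 he
      refine Finset.mem_sdiff.2 ⟨ham_mem_left hp (hmemS.1 h1.1), ?_⟩
      intro hxO
      exact hOI _ h1.1 hxO h1.2
    · rw [hVOcard]
      rw [Finset.card_image_of_injOn, hAcard, hecard]
      rintro ⟨x, y⟩ he ⟨x', y'⟩ he' hxx
      simp only at hxx
      subst hxx
      have h1 := (Finset.mem_filter.1 he).1
      have h2 := (Finset.mem_filter.1 he').1
      have := ham_succ_unique hp (hmemS.1 h1) (hmemS.1 h2)
      simp [this]
  constructor
  · -- predecessors of non-incoming vertices are outgoing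
    intro x hx hxI
    obtain ⟨w, hw⟩ := ham_pred_exists hp hx (by rintro rfl; exact hxI (Finset.mem_image.2 ⟨j, Finset.mem_univ _, rfl⟩))
    have hwO : w ∈ O := by
      by_contra hwO
      have : w ∈ Vset \ O := Finset.mem_sdiff.2 ⟨ham_mem_left hp hw, hwO⟩
      rw [← himg] at this
      obtain ⟨⟨w', y⟩, he, rfl⟩ := Finset.mem_image.1 this
      have h1 := Finset.mem_filter.1 he
      have := ham_succ_unique hp (hmemS.1 h1.1) hw
      rw [this] at h1
      exact hxI h1.2
    obtain ⟨m, -, hm⟩ := Finset.mem_image.1 hwO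
    exact ⟨(w, x), hmemS.2 hw, rfl, ⟨m, hm.symm⟩, ham_ne_last hp hw⟩
  · -- every non-outgoing vertex has an incoming successor
    intro v hv hvO
    have : v ∈ A.image Prod.fst := himg ▸ Finset.mem_sdiff.2 ⟨hv, hvO⟩
    obtain ⟨⟨v', y⟩, he, rfl⟩ := Finset.mem_image.1 this
    have h1 := Finset.mem_filter.1 he
    obtain ⟨m, -, hm⟩ := Finset.mem_image.1 h1.2
    exact ⟨(v', y), h1.1, rfl, ⟨m, hm.symm⟩, ham_ne_head hp (hmemS.1 h1.1)⟩

end Struct2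

end InOutAux

set_option maxHeartbeats 1000000 in

/-- every `k`-in-out graph (with `k ≥ 1`) having exactly `2k - 1` vertices
has at least `4k - 4` directed edges. -/
theorem inOut_edges_lower_bound {α : Type*} [DecidableEq α] {k : ℕ} (hk : 1 ≤ k)
    (E : α → α → Prop) (Vset : Finset α) (inc out : Fin k → α)
    (h : IsInOutGraph E Vset inc out) (hcard : Vset.card = 2 * k - 1) :
    4 * k - 4 ≤ {e : α × α | E e.1 e.2}.ncard := by
  classical
  set I : Finset α := Finset.image inc Finset.univ with hI
  set O : Finset α := Finset.image out Finset.univ with hO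
  have hex : ∀ j : Fin k, ∃ p, IsHamPathOn E Vset (inc j) (out j) p :=
    fun j => (h.paired j j).2 rfl
  choose P hP using hex
  set S : Fin k → Finset (α × α) := fun j => ((P j).zip (P j).tail).toFinset with hSdef
  set T : Finset (α × α) := Finset.univ.biUnion S with hTdef
  have hmemT : ∀ {e : α × α}, e ∈ T → ∃ j, e ∈ (P j).zip (P j).tail := by
    intro e he
    obtain ⟨j, -, hj⟩ := Finset.mem_biUnion.1 he
    exact ⟨j, List.mem_toFinset.1 hj⟩
  have hstr := fun j => InOutAux.struct (E := E) h hcard (hP j)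
  have hIcard : I.card = k := by
    rw [hI, Finset.card_image_of_injective _ h.inc_inj, Finset.card_univ, Fintype.card_fin]
  have hOcard : O.card = k := by
    rw [hO, Finset.card_image_of_injective _ h.out_inj, Finset.card_univ, Fintype.card_fin]
  have hIsub : I ⊆ Vset := by
    intro x hx; obtain ⟨l, -, rfl⟩ := Finset.mem_image.1 hx; exact h.inc_mem l
  have hOsub : O ⊆ Vset := by
    intro x hx; obtain ⟨l, -, rfl⟩ := Finset.mem_image.1 hx; exact h.out_mem l
  have hVIcard : (Vset \ I).card = k - 1 := by
    rw [Finset.card_sdiff_of_subset hIsub, hcard, hIcard]; omega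
  have hVOcard : (Vset \ O).card = k - 1 := by
    rw [Finset.card_sdiff_of_subset hOsub, hcard, hOcard]; omega
  set T1 : Finset (α × α) := T.filter (fun e => e.2 ∉ I) with hT1def
  set T2 : Finset (α × α) := T.filter (fun e => e.2 ∈ I) with hT2def
  -- lower bound for T1
  have hT1 : 2 * (k - 1) ≤ T1.card := by
    have hmap : ∀ e ∈ T1, e.2 ∈ Vset \ I := by
      intro e he
      have h1 := Finset.mem_filter.1 he
      obtain ⟨j, hj⟩ := hmemT h1.1
      exact Finset.mem_sdiff.2 ⟨InOutAux.ham_mem_right (hP j) hj, h1.2⟩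
    rw [Finset.card_eq_sum_card_fiberwise hmap]
    have : ∀ x ∈ Vset \ I, 2 ≤ (T1.filter (fun e => e.2 = x)).card := by
      intro x hx
      obtain ⟨hxV, hxI⟩ := Finset.mem_sdiff.1 hx
      obtain ⟨e0, he0, he0x, ⟨m, he0m⟩, -⟩ := (hstr ⟨0, hk⟩).1 x hxV hxI
      obtain ⟨e1, he1, he1x, -, he1ne⟩ := (hstr m).1 x hxV hxI
      have he0T : e0 ∈ T1.filter (fun e => e.2 = x) := by
        refine Finset.mem_filter.2 ⟨Finset.mem_filter.2 ⟨?_, by rw [he0x]; exact hxI⟩, he0x⟩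
        exact Finset.mem_biUnion.2 ⟨⟨0, hk⟩, Finset.mem_univ _, he0⟩
      have he1T : e1 ∈ T1.filter (fun e => e.2 = x) := by
        refine Finset.mem_filter.2 ⟨Finset.mem_filter.2 ⟨?_, by rw [he1x]; exact hxI⟩, he1x⟩
        exact Finset.mem_biUnion.2 ⟨m, Finset.mem_univ _, he1⟩
      have hne : e0 ≠ e1 := by
        intro hh; rw [← hh, he0m] at he1ne; exact he1ne rfl
      exact Finset.one_lt_card.2 ⟨e0, he0T, e1, he1T, hne⟩
    calc 2 * (k - 1) = ∑ _x ∈ Vset \ I, 2 := by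
          rw [Finset.sum_const, hVIcard, smul_eq_mul, mul_comm]
      _ ≤ _ := Finset.sum_le_sum this
  -- lower bound for T2
  have hT2 : 2 * (k - 1) ≤ T2.card := by
    have hmap : ∀ e ∈ T2, e.1 ∈ Vset \ O := by
      intro e he
      have h1 := Finset.mem_filter.1 he
      obtain ⟨j, hj⟩ := hmemT h1.1
      refine Finset.mem_sdiff.2 ⟨InOutAux.ham_mem_left (hP j) hj, ?_⟩
      intro heO
      obtain ⟨m', -, hm'⟩ := Finset.mem_image.1 heO
      obtain ⟨l', -, hl'⟩ := Finset.mem_image.1 h1.2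
      exact InOutAux.no_out_to_inc h.single_visit (hP j) (x := e.1) (y := e.2)
        (by simpa using hj) hm'.symm hl'.symm
    rw [Finset.card_eq_sum_card_fiberwise hmap]
    have : ∀ v ∈ Vset \ O, 2 ≤ (T2.filter (fun e => e.1 = v)).card := by
      intro v hv
      obtain ⟨hvV, hvO⟩ := Finset.mem_sdiff.1 hv
      obtain ⟨e0, he0, he0v, ⟨m, he0m⟩, -⟩ := (hstr ⟨0, hk⟩).2 v hvV hvO
      obtain ⟨e1, he1, he1v, ⟨m1, he1m⟩, he1ne⟩ := (hstr m).2 v hvV hvO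
      have he0T : e0 ∈ T2.filter (fun e => e.1 = v) := by
        refine Finset.mem_filter.2 ⟨Finset.mem_filter.2 ⟨?_, ?_⟩, he0v⟩
        · exact Finset.mem_biUnion.2 ⟨⟨0, hk⟩, Finset.mem_univ _, he0⟩
        · rw [he0m]; exact Finset.mem_image.2 ⟨m, Finset.mem_univ _, rfl⟩
      have he1T : e1 ∈ T2.filter (fun e => e.1 = v) := by
        refine Finset.mem_filter.2 ⟨Finset.mem_filter.2 ⟨?_, ?_⟩, he1v⟩
        · exact Finset.mem_biUnion.2 ⟨m, Finset.mem_univ _, he1⟩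
        · rw [he1m]; exact Finset.mem_image.2 ⟨m1, Finset.mem_univ _, rfl⟩
      have hne : e0 ≠ e1 := by
        intro hh; rw [← hh, he0m] at he1ne; exact he1ne rfl
      exact Finset.one_lt_card.2 ⟨e0, he0T, e1, he1T, hne⟩
    calc 2 * (k - 1) = ∑ _x ∈ Vset \ O, 2 := by
          rw [Finset.sum_const, hVOcard, smul_eq_mul, mul_comm]
      _ ≤ _ := Finset.sum_le_sum this
  have hsum : T2.card + T1.card = T.card := by
    simpa using Finset.card_filter_add_card_filter_not (s := T) (p := fun e : α × α => e.2 ∈ I)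
  have hTE : ∀ e ∈ T, E e.1 e.2 := by
    intro e he
    obtain ⟨j, hj⟩ := hmemT he
    exact InOutAux.ham_edge (hP j) (x := e.1) (y := e.2) (by simpa using hj)
  have hfin : {e : α × α | E e.1 e.2}.Finite := by
    apply Set.Finite.subset (Vset ×ˢ Vset).finite_toSet
    rintro ⟨x, y⟩ he
    simp only [Finset.coe_product, Set.mem_prod]
    exact ⟨(h.edge_mem x y he).1, (h.edge_mem x y he).2⟩
  have hsub : (↑T : Set (α × α)) ⊆ {e | E e.1 e.2} := by
    intro e he
    exact hTE e (Finset.mem_coe.1 he)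
  have h2 : (↑T : Set (α × α)).ncard ≤ {e : α × α | E e.1 e.2}.ncard :=
    Set.ncard_le_ncard hsub hfin
  rw [Set.ncard_coe_finset] at h2
  omega
end

section
/- For every even integer k ≥ 4 and all j, m ∈ {1,…,k} with j ≠ m, there is no Hamiltonian path in the digraph S_k from the incoming vertex i_j to the outgoing vertex o_m. -/
/-- The directed edge set of the graph `S_k` for even `k ≥ 4`. -/
def evenEdges (k : ℕ) : Finset (ℕ × ℕ) :=
  ((Finset.Icc 1 ((k - 2) / 2)).biUnion fun i =>
      {(4*i-2, 4*i-1), (4*i-1, 4*i-2), (4*i-1, 4*i), (4*i, 4*i-1),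
        (4*i, 4*i+1), (4*i+1, 4*i)}) ∪
  ((Finset.Icc 1 ((k - 4) / 2)).biUnion fun i => {(4*i-2, 4*i+5), (4*i+1, 4*i+2)}) ∪
  ({(1, 2), (2*k-6, 2*k-1), (2*k-3, 2*k-2), (2*k-2, 1), (2*k-2, 5),
    (2*k-1, 2*k-2)} : Finset (ℕ × ℕ))

/-- The `m`-th outgoing vertex `o_m` (with `1 ≤ m ≤ k`) of `S_k` for even `k ≥ 4`:
`o_1 = 3`, `o_{k-2} = 2k-1`, `o_{k-1} = 2k-7`, `o_k = 2k-3`, and otherwise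
`o_{2j} = 4j+3` and `o_{2j+1} = 4j-3`. -/
def evenOut (k m : ℕ) : ℕ :=
  if m = 1 then 3
  else if m = k - 2 then 2*k - 1
  else if m = k - 1 then 2*k - 7
  else if m = k then 2*k - 3
  else if Even m then 2*m + 3
  else 2*m - 5

namespace SkAux

/-- `y` immediately follows `x` in the list `p`. -/
def Adj (p : List ℕ) (x y : ℕ) : Prop := ∃ n, p[n]? = some x ∧ p[n+1]? = some y

variable {p : List ℕ} {x y z s c d e : ℕ}

lemma nodup_idx (hnd : p.Nodup) {n m : ℕ} {x : ℕ} (h1 : p[n]? = some x)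
    (h2 : p[m]? = some x) : n = m := by
  obtain ⟨hn, e1⟩ := List.getElem?_eq_some_iff.mp h1
  obtain ⟨hm, e2⟩ := List.getElem?_eq_some_iff.mp h2
  have hg : p.get ⟨n, hn⟩ = p.get ⟨m, hm⟩ := by
    simp only [List.get_eq_getElem, e1, e2]
  have := List.nodup_iff_injective_get.mp hnd hg
  exact congrArg Fin.val this

lemma adj_rel {E : ℕ → ℕ → Prop} (hch : p.Chain' E) (h : Adj p x y) : E x y := by
  obtain ⟨n, h1, h2⟩ := h
  obtain ⟨hn, e1⟩ := List.getElem?_eq_some_iff.mp h1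
  obtain ⟨hm, e2⟩ := List.getElem?_eq_some_iff.mp h2
  have := List.isChain_iff_getElem.mp hch n (by omega)
  rwa [e1, e2] at this

lemma exists_succ (hlst : p.getLast? = some e) (hx : x ∈ p) (hxe : x ≠ e) :
    ∃ y, Adj p x y := by
  obtain ⟨n, hn, hxn⟩ := List.mem_iff_getElem.mp hx
  by_cases h : n + 1 < p.length
  · exact ⟨p[n+1], n, by rw [List.getElem?_eq_getElem hn, hxn], by
      rw [List.getElem?_eq_getElem h]⟩
  · exfalso
    apply hxe
    rw [List.getLast?_eq_getElem?] at hlst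
    have hn' : n = p.length - 1 := by omega
    have h2 : p[n]? = some e := by rwa [hn']
    rw [List.getElem?_eq_getElem hn, hxn] at h2
    exact Option.some_inj.mp h2

lemma exists_pred (hhd : p.head? = some s) (hy : y ∈ p) (hys : y ≠ s) :
    ∃ x, Adj p x y := by
  obtain ⟨n, hn, hyn⟩ := List.mem_iff_getElem.mp hy
  rcases Nat.eq_zero_or_pos n with h0 | h0
  · exfalso
    apply hys
    rw [List.head?_eq_getElem?] at hhd
    have h2 : p[n]? = some s := by rwa [h0]
    rw [List.getElem?_eq_getElem hn, hyn] at h2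
    exact Option.some_inj.mp h2
  · refine ⟨p[n-1]'(by omega), n-1, List.getElem?_eq_getElem (by omega), ?_⟩
    rw [show n - 1 + 1 = n from by omega, List.getElem?_eq_getElem hn, hyn]

lemma succ_unique (hnd : p.Nodup) (h1 : Adj p x y) (h2 : Adj p x z) : y = z := by
  obtain ⟨n, hn1, hn2⟩ := h1
  obtain ⟨m, hm1, hm2⟩ := h2
  have hnm : n = m := nodup_idx hnd hn1 hm1
  subst hnm
  rw [hn2] at hm2
  exact Option.some_inj.mp hm2

lemma pred_unique (hnd : p.Nodup) (h1 : Adj p x z) (h2 : Adj p y z) : x = y := by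
  obtain ⟨n, hn1, hn2⟩ := h1
  obtain ⟨m, hm1, hm2⟩ := h2
  have hnm : n + 1 = m + 1 := nodup_idx hnd hn2 hm2
  have : n = m := by omega
  subst this
  rw [hn1] at hm1
  exact Option.some_inj.mp hm1

lemma head_no_pred (hnd : p.Nodup) (hhd : p.head? = some s) (h : Adj p x s) :
    False := by
  obtain ⟨n, h1, h2⟩ := h
  rw [List.head?_eq_getElem?] at hhd
  have := nodup_idx hnd h2 hhd
  omega

lemma no_two_cycle (hnd : p.Nodup) (h1 : Adj p x y) (h2 : Adj p y x) : False := by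
  obtain ⟨n, hn1, hn2⟩ := h1
  obtain ⟨m, hm1, hm2⟩ := h2
  have e1 : n = m + 1 := nodup_idx hnd hn1 hm2
  have e2 : n + 1 = m := nodup_idx hnd hn2 hm1
  omega

lemma length_eq_three (hnd : p.Nodup) (hhd : p.head? = some s) (h1 : Adj p s c)
    (h2 : Adj p c d) (hlst : p.getLast? = some d) : p.length = 3 := by
  obtain ⟨n, hn1, hn2⟩ := h1
  obtain ⟨m, hm1, hm2⟩ := h2
  rw [List.head?_eq_getElem?] at hhd
  rw [List.getLast?_eq_getElem?] at hlst
  have e1 : n = 0 := nodup_idx hnd hn1 hhd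
  have e2 : m = n + 1 := nodup_idx hnd hm1 hn2
  have e3 : p.length - 1 = m + 1 := nodup_idx hnd hlst hm2
  have e4 : m + 1 < p.length := (List.getElem?_eq_some_iff.mp hm2).1
  omega

lemma mem_evenEdges' {k x y : ℕ} (h : (x, y) ∈ evenEdges k) :
    ((∃ i, (1 ≤ i ∧ i ≤ (k-2)/2) ∧ ((x = 4*i-2 ∧ y = 4*i-1) ∨ (x = 4*i-1 ∧ y = 4*i-2) ∨
      (x = 4*i-1 ∧ y = 4*i) ∨ (x = 4*i ∧ y = 4*i-1) ∨ (x = 4*i ∧ y = 4*i+1) ∨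
      (x = 4*i+1 ∧ y = 4*i))) ∨
    (∃ i, (1 ≤ i ∧ i ≤ (k-4)/2) ∧ ((x = 4*i-2 ∧ y = 4*i+5) ∨ (x = 4*i+1 ∧ y = 4*i+2)))) ∨
    ((x = 1 ∧ y = 2) ∨ (x = 2*k-6 ∧ y = 2*k-1) ∨ (x = 2*k-3 ∧ y = 2*k-2) ∨
     (x = 2*k-2 ∧ y = 1) ∨ (x = 2*k-2 ∧ y = 5) ∨ (x = 2*k-1 ∧ y = 2*k-2)) := by
  simp only [evenEdges, Finset.mem_union, Finset.mem_biUnion, Finset.mem_Icc,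
    Finset.mem_insert, Finset.mem_singleton, Prod.mk.injEq] at h
  exact h

variable {k q : ℕ}

lemma out_one (hk : 4 ≤ k) (h : (1, y) ∈ evenEdges k) : y = 2 := by
  rcases mem_evenEdges' h with (⟨i, hi, H⟩ | ⟨i, hi, H⟩) | H <;> omega

lemma out_top (hk : 4 ≤ k) (hk2 : k % 2 = 0) (h : (2*k-1, y) ∈ evenEdges k) :
    y = 2*k-2 := by
  rcases mem_evenEdges' h with (⟨i, hi, H⟩ | ⟨i, hi, H⟩) | H <;> omega

lemma out_hub (hk : 4 ≤ k) (hk2 : k % 2 = 0) (h : (2*k-2, y) ∈ evenEdges k) :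
    y = 1 ∨ y = 5 := by
  rcases mem_evenEdges' h with (⟨i, hi, H⟩ | ⟨i, hi, H⟩) | H <;> omega

lemma out_b (hk : 4 ≤ k) (hk2 : k % 2 = 0) (hq1 : 1 ≤ q) (hqt : q ≤ (k-2)/2)
    (hx : x = 4*q-1) (h : (x, y) ∈ evenEdges k) : y = 4*q-2 ∨ y = 4*q := by
  subst hx
  rcases mem_evenEdges' h with (⟨i, hi, H⟩ | ⟨i, hi, H⟩) | H <;> omega

lemma out_c (hk : 4 ≤ k) (hk2 : k % 2 = 0) (hq1 : 1 ≤ q)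
    (hx : x = 4*q) (h : (x, y) ∈ evenEdges k) : y = 4*q-1 ∨ y = 4*q+1 := by
  subst hx
  rcases mem_evenEdges' h with (⟨i, hi, H⟩ | ⟨i, hi, H⟩) | H <;> omega

lemma in_c (hk : 4 ≤ k) (hk2 : k % 2 = 0) (hq1 : 1 ≤ q)
    (hx : x = 4*q) (h : (y, x) ∈ evenEdges k) : y = 4*q-1 ∨ y = 4*q+1 := by
  subst hx
  rcases mem_evenEdges' h with (⟨i, hi, H⟩ | ⟨i, hi, H⟩) | H <;> omega

lemma out_a (hk : 4 ≤ k) (hk2 : k % 2 = 0) (hq1 : 1 ≤ q) (hqt : q ≤ (k-2)/2)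
    (hx : x = 4*q-2) (h : (x, y) ∈ evenEdges k) :
    y = 4*q-1 ∨ (q < (k-2)/2 ∧ y = 4*q+5) ∨ (q = (k-2)/2 ∧ y = 2*k-1) := by
  subst hx
  rcases mem_evenEdges' h with (⟨i, hi, H⟩ | ⟨i, hi, H⟩) | H <;> omega

lemma out_d (hk : 4 ≤ k) (hk2 : k % 2 = 0) (hq1 : 1 ≤ q) (hqt : q ≤ (k-2)/2)
    (hx : x = 4*q+1) (h : (x, y) ∈ evenEdges k) :
    y = 4*q ∨ (q < (k-2)/2 ∧ y = 4*q+2) ∨ (q = (k-2)/2 ∧ y = 2*k-2) := by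
  subst hx
  rcases mem_evenEdges' h with (⟨i, hi, H⟩ | ⟨i, hi, H⟩) | H <;> omega

lemma evenOut_odd {m : ℕ} (hk : 4 ≤ k) (hk2 : k % 2 = 0) (hm1 : 1 ≤ m) (hmk : m ≤ k) :
    evenOut k m % 2 = 1 := by
  unfold evenOut
  split_ifs with h1 h2 h3 h4 h5 <;> (try rw [Nat.even_iff] at h5) <;> omega

lemma evenOut_val {m : ℕ} (hk : 4 ≤ k) (hk2 : k % 2 = 0) (hm1 : 1 ≤ m) (hmk : m ≤ k) :
    (evenOut k m = 3 → m = 1) ∧ (evenOut k m = 2*k-3 → m = k) ∧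
    (evenOut k m = 2*k-1 → m = k-2) ∧ (evenOut k m = 1 → m = 3) ∧
    (∀ j, j % 2 = 1 → 3 ≤ j → j ≤ k-1 → evenOut k m = 2*j-5 → m = j) ∧
    (∀ j, j % 2 = 0 → 2 ≤ j → j ≤ k-4 → evenOut k m = 2*j+3 → m = j) := by
  unfold evenOut
  split_ifs with h1 h2 h3 h4 h5 <;> (try rw [Nat.even_iff] at h5) <;>
    exact ⟨by omega, by omega, by omega, by omega,
      fun j a b c d => by omega, fun j a b c d => by omega⟩

end SkAux

open SkAux in
/-- for even `k ≥ 4` and `j ≠ m` in `{1, …, k}`, there is no Hamiltonian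
path in `S_k` from the incoming vertex `i_j = 2j - 1` to the outgoing vertex `o_m`. -/
theorem evenSk_no_unpaired_hamPath (k : ℕ) (hk : 4 ≤ k) (hke : Even k)
    (j m : ℕ) (hj1 : 1 ≤ j) (hjk : j ≤ k) (hm1 : 1 ≤ m) (hmk : m ≤ k) (hjm : j ≠ m) :
    ¬ ∃ p : List ℕ, IsHamPathOn (fun x y => (x, y) ∈ evenEdges k)
        (Finset.Icc 1 (2 * k - 1)) (2 * j - 1) (evenOut k m) p := by
  rintro ⟨p, hnd, hch, hhd, hlst, hmem⟩
  have hk2 : k % 2 = 0 := Nat.even_iff.mp hke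
  obtain ⟨hv3, hvk, hvk2, hv1, hvodd, hveven⟩ := evenOut_val (m := m) hk hk2 hm1 hmk
  have heodd : evenOut k m % 2 = 1 := evenOut_odd hk hk2 hm1 hmk
  have hmemp : ∀ v, 1 ≤ v → v ≤ 2*k-1 → v ∈ p := fun v h1 h2 =>
    (hmem v).2 (Finset.mem_Icc.mpr ⟨h1, h2⟩)
  have hlen : p.length = 2*k-1 := by
    have h1 : p.toFinset = Finset.Icc 1 (2*k-1) := Finset.ext fun v => by
      rw [List.mem_toFinset]; exact hmem v
    have h2 := List.toFinset_card_of_nodup hnd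
    rw [h1, Nat.card_Icc] at h2
    omega
  have hse : 2*j-1 ≠ evenOut k m := by
    intro h
    have h0 : p[0]? = some (2*j-1) := by rw [← List.head?_eq_getElem?]; exact hhd
    have h1 : p[p.length - 1]? = some (2*j-1) := by
      rw [← List.getLast?_eq_getElem?, hlst, ← h]
    have := nodup_idx hnd h0 h1
    omega
  have getSucc : ∀ x : ℕ, 1 ≤ x → x ≤ 2*k-1 → x ≠ evenOut k m →
      ∃ y, Adj p x y ∧ (x, y) ∈ evenEdges k := by
    intro x h1 h2 h3
    obtain ⟨y, hy⟩ := exists_succ hlst (hmemp x h1 h2) h3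
    exact ⟨y, hy, adj_rel hch hy⟩
  have getPred : ∀ y : ℕ, 1 ≤ y → y ≤ 2*k-1 → y ≠ 2*j-1 →
      ∃ x, Adj p x y ∧ (x, y) ∈ evenEdges k := by
    intro y h1 h2 h3
    obtain ⟨x, hx⟩ := exists_pred hhd (hmemp y h1 h2) h3
    exact ⟨x, hx, adj_rel hch hx⟩
  have notE_even : ∀ x : ℕ, x % 2 = 0 → x ≠ evenOut k m := by
    intro x hx h; omega
  -- Lemma A: if both `a_{q}` and `d_{q}` of block `q` are entered from elsewhere,
  -- then we get a contradiction (provided `b_q` is not the endpoint).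
  have lemA : ∀ q u v : ℕ, 1 ≤ q → q ≤ (k-2)/2 → Adj p u (4*q-2) → u ≠ 4*q-1 →
      Adj p v (4*q+1) → v ≠ 4*q → 4*q-1 ≠ evenOut k m → False := by
    intro q u v hq1 hqt hu hune hv hvne hbe
    obtain ⟨y, hy, hyE⟩ := getSucc (4*q-1) (by omega) (by omega) hbe
    rcases out_b hk hk2 hq1 hqt rfl hyE with h1 | h2
    · exact hune (pred_unique hnd hu (h1 ▸ hy))
    · subst h2
      obtain ⟨w, hw, hwE⟩ := getSucc (4*q) (by omega) (by omega) (notE_even _ (by omega))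
      rcases out_c hk hk2 hq1 rfl hwE with h3 | h4
      · exact no_two_cycle hnd hy (h3 ▸ hw)
      · exact hvne (pred_unique hnd hv (h4 ▸ hw))
  -- Lemma B: if block `q` is traversed with `a_q → b_q` and `d_q → c_q`,
  -- contradiction.
  have lemB : ∀ q : ℕ, 1 ≤ q → q ≤ (k-2)/2 → Adj p (4*q-2) (4*q-1) →
      Adj p (4*q+1) (4*q) → False := by
    intro q hq1 hqt hab hdc
    obtain ⟨w, hw, hwE⟩ := getSucc (4*q) (by omega) (by omega) (notE_even _ (by omega))
    rcases out_c hk hk2 hq1 rfl hwE with h1 | h2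
    · have := pred_unique hnd (h1 ▸ hw) hab
      omega
    · exact no_two_cycle hnd hdc (h2 ▸ hw)
  by_cases hj1e : j = 1
  · -- Branch j = 1 : start vertex is 1
    subst hj1e
    have hhd1 : p.head? = some 1 := by simpa using hhd
    have h3e : (3:ℕ) ≠ evenOut k m := fun h => hjm (hv3 h.symm).symm
    obtain ⟨y, hy, hyE⟩ := getSucc 1 le_rfl (by omega) (by omega)
    have hy2 : y = 2 := out_one hk hyE
    subst hy2
    obtain ⟨z, hz, hzE⟩ := getSucc (2*k-2) (by omega) (by omega) (notE_even _ (by omega))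
    rcases out_hub hk hk2 hzE with h1 | h2
    · exact head_no_pred hnd hhd1 (h1 ▸ hz)
    · subst h2
      exact lemA 1 1 (2*k-2) le_rfl (by omega) (by simpa using hy) (by omega)
        (by simpa using hz) (by omega) (by simpa using h3e)
  by_cases hjke : j = k
  · -- Branch j = k : start vertex is 2k-1
    have hhd' : p.head? = some (2*k-1) := by
      rw [hhd]; exact congrArg some (by omega)
    obtain ⟨y, hy, hyE⟩ := getSucc (2*k-1) (by omega) (by omega) (by omega)
    have hy2 : y = 2*k-2 := out_top hk hk2 hyE
    subst hy2
    obtain ⟨z, hz, hzE⟩ := getSucc (2*k-6) (by omega) (by omega) (notE_even _ (by omega))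
    rcases out_a hk hk2 (q := (k-2)/2) (by omega) le_rfl (by omega) hzE with
      h1 | ⟨hlt, _⟩ | ⟨_, h3⟩
    · -- z = 4t-1
      have ha : Adj p (4*((k-2)/2)-2) (4*((k-2)/2)-1) := by
        rw [show 4*((k-2)/2)-2 = 2*k-6 from by omega]
        exact h1 ▸ hz
      have hne : (2*k-3 : ℕ) ≠ evenOut k m := by
        intro h
        have := hvk h.symm
        omega
      obtain ⟨w, hw, hwE⟩ := getSucc (2*k-3) (by omega) (by omega) hne
      rcases out_d hk hk2 (q := (k-2)/2) (by omega) le_rfl (by omega) hwE with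
        h1' | ⟨hlt, _⟩ | ⟨_, h3'⟩
      · have hd : Adj p (4*((k-2)/2)+1) (4*((k-2)/2)) := by
          rw [show 4*((k-2)/2)+1 = 2*k-3 from by omega]
          exact h1' ▸ hw
        exact lemB ((k-2)/2) (by omega) le_rfl ha hd
      · omega
      · have := pred_unique hnd (h3' ▸ hw) hy
        omega
    · omega
    · exact head_no_pred hnd hhd' (h3 ▸ hz)
  rcases Nat.even_or_odd j with hje | hjo
  · -- Branch j even, 2 ≤ j ≤ k-2 : start vertex is b_q = 4q-1 with q = j/2
    obtain ⟨q, hq⟩ := hje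
    have hq1 : 1 ≤ q := by omega
    have hqt : q ≤ (k-2)/2 := by omega
    have hs : 2*j-1 = 4*q-1 := by omega
    have hhd' : p.head? = some (4*q-1) := by rw [hhd]; exact congrArg some (by omega)
    have hse' : 4*q-1 ≠ evenOut k m := by omega
    obtain ⟨y, hya, hyaE⟩ := getSucc (4*q-2) (by omega) (by omega) (notE_even _ (by omega))
    obtain ⟨z, hzs, hzsE⟩ := getSucc (4*q-1) (by omega) (by omega) hse'
    rcases out_b hk hk2 hq1 hqt rfl hzsE with hz1 | hz2
    · -- z = 4q-2 : start goes backwards, contradiction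
      subst hz1
      obtain ⟨u, hu, huE⟩ := getPred (4*q) (by omega) (by omega) (by omega)
      rcases in_c hk hk2 hq1 rfl huE with hu1 | hu2
      · have := succ_unique hnd (hu1 ▸ hu) hzs
        omega
      · obtain ⟨w, hw, hwE⟩ := getSucc (4*q) (by omega) (by omega) (notE_even _ (by omega))
        rcases out_c hk hk2 hq1 rfl hwE with hw1 | hw2
        · exact head_no_pred hnd hhd' (hw1 ▸ hw)
        · exact no_two_cycle hnd (hu2 ▸ hu) (hw2 ▸ hw)
    · -- z = 4q : forced forward traversal b→c→d
      subst hz2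
      obtain ⟨w, hw, hwE⟩ := getSucc (4*q) (by omega) (by omega) (notE_even _ (by omega))
      rcases out_c hk hk2 hq1 rfl hwE with hw1 | hw2
      · exact head_no_pred hnd hhd' (hw1 ▸ hw)
      subst hw2
      by_cases hde : 4*q+1 = evenOut k m
      · have hlst' : p.getLast? = some (4*q+1) := by
          rw [hlst]; exact congrArg some hde.symm
        have := length_eq_three hnd hhd' hzs hw hlst'
        omega
      · obtain ⟨v, hv, hvE⟩ := getSucc (4*q+1) (by omega) (by omega) hde
        rcases out_d hk hk2 hq1 hqt rfl hvE with hv1 | ⟨hlt, hv2⟩ | ⟨heq, hv3⟩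
        · exact no_two_cycle hnd hw (hv1 ▸ hv)
        · -- q < t : apply lemA to block q+1
          rcases out_a hk hk2 hq1 hqt rfl hyaE with hy1 | ⟨_, hy2⟩ | ⟨heq2, _⟩
          · exact head_no_pred hnd hhd' (hy1 ▸ hya)
          · refine lemA (q+1) (4*q+1) (4*q-2) (by omega) (by omega) ?_ (by omega) ?_
              (by omega) ?_
            · rw [show 4*(q+1)-2 = 4*q+2 from by omega]
              exact hv2 ▸ hv
            · rw [show 4*(q+1)+1 = 4*q+5 from by omega]
              exact hy2 ▸ hya
            · intro h
              apply hjm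
              refine (hveven j (by omega) (by omega) (by omega) (by omega)).symm
          · omega
        · -- q = t : the path must end at 2k-1
          rcases out_a hk hk2 hq1 hqt rfl hyaE with hy1 | ⟨hlt2, _⟩ | ⟨_, hy3⟩
          · exact head_no_pred hnd hhd' (hy1 ▸ hya)
          · omega
          · by_cases hte : 2*k-1 = evenOut k m
            · have hm' : m = k-2 := hvk2 hte.symm
              apply hjm; omega
            · obtain ⟨w2, hw2, hw2E⟩ := getSucc (2*k-1) (by omega) (by omega) hte
              have hw2' : w2 = 2*k-2 := out_top hk hk2 hw2E
              have := pred_unique hnd (hw2' ▸ hw2) (hv3 ▸ hv)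
              omega
  · -- Branch j odd, 3 ≤ j ≤ k-1 : start vertex is d_q = 4q+1 with q = (j-1)/2
    obtain ⟨q, hq⟩ := hjo
    have hq1 : 1 ≤ q := by omega
    have hqt : q ≤ (k-2)/2 := by omega
    have hhd' : p.head? = some (4*q+1) := by rw [hhd]; exact congrArg some (by omega)
    have hse' : 4*q+1 ≠ evenOut k m := by omega
    obtain ⟨z, hz, hzE⟩ := getSucc (4*q+1) (by omega) (by omega) hse'
    -- the successor of the start must be 4q
    have hz4 : z = 4*q := by
      by_contra hne
      obtain ⟨u, hu, huE⟩ := getPred (4*q) (by omega) (by omega) (by omega)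
      rcases in_c hk hk2 hq1 rfl huE with h3 | h4
      · obtain ⟨w, hw, hwE⟩ := getSucc (4*q) (by omega) (by omega) (notE_even _ (by omega))
        rcases out_c hk hk2 hq1 rfl hwE with h5 | h6
        · exact no_two_cycle hnd (h3 ▸ hu) (h5 ▸ hw)
        · exact head_no_pred hnd hhd' (h6 ▸ hw)
      · exact hne (succ_unique hnd hz (h4 ▸ hu))
    subst hz4
    obtain ⟨w, hw, hwE⟩ := getSucc (4*q) (by omega) (by omega) (notE_even _ (by omega))
    rcases out_c hk hk2 hq1 rfl hwE with h1 | h2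
    swap
    · exact head_no_pred hnd hhd' (h2 ▸ hw)
    subst h1
    by_cases hbe : 4*q-1 = evenOut k m
    · have hlst' : p.getLast? = some (4*q-1) := by
        rw [hlst]; exact congrArg some hbe.symm
      have := length_eq_three hnd hhd' hz hw hlst'
      omega
    · obtain ⟨v, hv, hvE⟩ := getSucc (4*q-1) (by omega) (by omega) hbe
      rcases out_b hk hk2 hq1 hqt rfl hvE with h1' | h2'
      swap
      · have := pred_unique hnd (h2' ▸ hv) hz
        omega
      subst h1'
      by_cases hq2 : 2 ≤ q
      · -- q ≥ 2 : apply lemB to block q-1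
        obtain ⟨y1, hy1, hy1E⟩ := getSucc (4*q-6) (by omega) (by omega)
          (notE_even _ (by omega))
        rcases out_a hk hk2 (q := q-1) (by omega) (by omega) (by omega) hy1E with
          ha1 | ⟨_, ha2⟩ | ⟨haq, _⟩
        · have hde' : 4*q-3 ≠ evenOut k m := by
            intro h
            apply hjm
            refine (hvodd j (by omega) (by omega) (by omega) (by omega)).symm
          obtain ⟨y2, hy2, hy2E⟩ := getSucc (4*q-3) (by omega) (by omega) hde'
          rcases out_d hk hk2 (q := q-1) (by omega) (by omega) (by omega) hy2E with
            hd1 | ⟨_, hd2⟩ | ⟨hdq, _⟩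
          · refine lemB (q-1) (by omega) (by omega) ?_ ?_
            · rw [show 4*(q-1)-2 = 4*q-6 from by omega,
                show 4*(q-1)-1 = 4*q-5 from by omega]
              exact (show y1 = 4*q-5 from by omega) ▸ hy1
            · rw [show 4*(q-1)+1 = 4*q-3 from by omega,
                show 4*(q-1) = 4*q-4 from by omega]
              exact (show y2 = 4*q-4 from by omega) ▸ hy2
          · have := pred_unique hnd ((show y2 = 4*q-2 from by omega) ▸ hy2) hv
            omega
          · omega
        · exact head_no_pred hnd hhd' ((show y1 = 4*q+1 from by omega) ▸ hy1)
        · omega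
      · -- q = 1 (j = 3) : vertex 1 must be the endpoint, i.e. m = 3 = j
        have hq1' : q = 1 := by omega
        subst hq1'
        have h1e : (1:ℕ) ≠ evenOut k m := by
          intro h
          apply hjm
          have := hv1 h.symm
          omega
        obtain ⟨y1, hy1, hy1E⟩ := getSucc 1 le_rfl (by omega) h1e
        have hy12 : y1 = 2 := out_one hk hy1E
        have := pred_unique hnd (hy12 ▸ hy1) (show Adj p (4*1-1) (4*1-2) from hv)
        omega
end

section
/- For every odd integer k ≥ 5 and all j, m ∈ {1,…,k} with j ≠ m, there is no Hamiltonian path in the digraph S_k from the incoming vertex i_j to the outgoing vertex o_m. -/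
/-- The directed edge set of the graph `S_k` for odd `k ≥ 5`. -/
def oddEdges (k : ℕ) : Finset (ℕ × ℕ) :=
  ((Finset.Icc 1 ((k - 1) / 2)).biUnion fun i =>
      {(4*i-2, 4*i-1), (4*i-1, 4*i-2), (4*i-1, 4*i), (4*i, 4*i-1),
        (4*i, 4*i+1), (4*i+1, 4*i)}) ∪
  ((Finset.Icc 1 ((k - 3) / 2)).biUnion fun i => {(4*i-2, 4*i+5), (4*i+1, 4*i+2)}) ∪
  ({(1, 2), (2*k-4, 1), (2*k-2, 5)} : Finset (ℕ × ℕ))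

/-- The `m`-th outgoing vertex `o_m` (with `1 ≤ m ≤ k`) of `S_k` for odd `k ≥ 5`:
`o_1 = 2k-1`, `o_{k-1} = 3`, `o_k = 2k-5`, and otherwise
`o_{2j} = 4j+3` and `o_{2j+1} = 4j-3`. -/
def oddOut (k m : ℕ) : ℕ :=
  if m = 1 then 2*k - 1
  else if m = k - 1 then 3
  else if m = k then 2*k - 5
  else if Even m then 2*m + 3
  else 2*m - 5

namespace OddSk

def Edg (B x y : ℕ) : Prop :=
  (∃ j, 1 ≤ j ∧ j ≤ B ∧ ((x=4*j-2 ∧ y=4*j-1) ∨ (x=4*j-1 ∧ y=4*j-2) ∨ (x=4*j-1 ∧ y=4*j)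
      ∨ (x=4*j ∧ y=4*j-1) ∨ (x=4*j ∧ y=4*j+1) ∨ (x=4*j+1 ∧ y=4*j))) ∨
  (∃ j, 1 ≤ j ∧ j ≤ B-1 ∧ ((x=4*j-2 ∧ y=4*j+5) ∨ (x=4*j+1 ∧ y=4*j+2))) ∨
  (x=1 ∧ y=2) ∨ (x=4*B-2 ∧ y=1) ∨ (x=4*B ∧ y=5)

structure Ctx (B : ℕ) (R : ℕ → ℕ → Prop) (idx : ℕ → ℕ) (u v : ℕ) : Prop where
  hB : 2 ≤ B
  edg : ∀ ⦃x y⦄, R x y → Edg B x y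
  ex_succ : ∀ ⦃x⦄, 1 ≤ x → x ≤ 4*B+1 → x ≠ v → ∃ y, R x y
  ex_pred : ∀ ⦃x⦄, 1 ≤ x → x ≤ 4*B+1 → x ≠ u → ∃ y, R y x
  sU : ∀ ⦃x y y'⦄, R x y → R x y' → y = y'
  pU : ∀ ⦃x x' y⦄, R x y → R x' y → x = x'
  nu : ∀ ⦃y⦄, ¬ R y u
  nv : ∀ ⦃y⦄, ¬ R v y
  hidx : ∀ ⦃x y⦄, R x y → idx y = idx x + 1
  hu1 : 1 ≤ u
  huB : u ≤ 4*B+1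
  hu2 : u % 2 = 1
  hv1 : 1 ≤ v
  hvB : v ≤ 4*B+1
  hv2 : v % 2 = 1
  huv : u ≠ v

section
variable {B : ℕ} {R : ℕ → ℕ → Prop} {idx : ℕ → ℕ} {u v : ℕ}

lemma no2 (C : Ctx B R idx u v) {x y : ℕ} (h1 : R x y) (h2 : R y x) : False := by
  have a := C.hidx h1; have b := C.hidx h2; omega

lemma Rbd (C : Ctx B R idx u v) {x y : ℕ} (h : R x y) :
    1 ≤ x ∧ x ≤ 4*B+1 ∧ 1 ≤ y ∧ y ≤ 4*B+1 := by
  have hB := C.hB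
  rcases C.edg h with ⟨j,hj1,hjB,h⟩|⟨j,hj1,hjB,h⟩|h|h|h <;> omega

/-- in-neighbours of `a_i = 4i-2` (recall `d_0 = 1 = 4·1-3`). -/
lemma nbAi (C : Ctx B R idx u v) {x a i : ℕ} (hi : 1 ≤ i) (hiB : i ≤ B)
    (h : R x a) (ha : a = 4*i-2) : x = 4*i-1 ∨ x = 4*i-3 := by
  have hB := C.hB
  rcases C.edg h with ⟨j,hj1,hjB,h⟩|⟨j,hj1,hjB,h⟩|h|h|h <;> omega

lemma nbAo (C : Ctx B R idx u v) {y a i : ℕ} (hi : 1 ≤ i) (hiB : i ≤ B)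
    (h : R a y) (ha : a = 4*i-2) : y = 4*i-1 ∨ (i+1 ≤ B ∧ y = 4*i+5) ∨ (i = B ∧ y = 1) := by
  have hB := C.hB
  rcases C.edg h with ⟨j,hj1,hjB,h⟩|⟨j,hj1,hjB,h⟩|h|h|h <;> omega

lemma nbBi (C : Ctx B R idx u v) {x a i : ℕ} (hi : 1 ≤ i) (hiB : i ≤ B)
    (h : R x a) (ha : a = 4*i-1) : x = 4*i-2 ∨ x = 4*i := by
  have hB := C.hB
  rcases C.edg h with ⟨j,hj1,hjB,h⟩|⟨j,hj1,hjB,h⟩|h|h|h <;> omega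

lemma nbBo (C : Ctx B R idx u v) {y a i : ℕ} (hi : 1 ≤ i) (hiB : i ≤ B)
    (h : R a y) (ha : a = 4*i-1) : y = 4*i-2 ∨ y = 4*i := by
  have hB := C.hB
  rcases C.edg h with ⟨j,hj1,hjB,h⟩|⟨j,hj1,hjB,h⟩|h|h|h <;> omega

lemma nbCi (C : Ctx B R idx u v) {x a i : ℕ} (hi : 1 ≤ i) (hiB : i ≤ B)
    (h : R x a) (ha : a = 4*i) : x = 4*i-1 ∨ x = 4*i+1 := by
  have hB := C.hB
  rcases C.edg h with ⟨j,hj1,hjB,h⟩|⟨j,hj1,hjB,h⟩|h|h|h <;> omega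

lemma nbCo (C : Ctx B R idx u v) {y a i : ℕ} (hi : 1 ≤ i) (hiB : i ≤ B)
    (h : R a y) (ha : a = 4*i) : y = 4*i-1 ∨ y = 4*i+1 ∨ (i = B ∧ y = 5) := by
  have hB := C.hB
  rcases C.edg h with ⟨j,hj1,hjB,h⟩|⟨j,hj1,hjB,h⟩|h|h|h <;> omega

lemma nbDi (C : Ctx B R idx u v) {x a i : ℕ} (hi : 1 ≤ i) (hiB : i ≤ B)
    (h : R x a) (ha : a = 4*i+1) : x = 4*i ∨ (2 ≤ i ∧ x = 4*i-6) ∨ (i = 1 ∧ x = 4*B) := by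
  have hB := C.hB
  rcases C.edg h with ⟨j,hj1,hjB,h⟩|⟨j,hj1,hjB,h⟩|h|h|h <;> omega

lemma nbDo (C : Ctx B R idx u v) {y a i : ℕ} (hi : 1 ≤ i) (hiB : i ≤ B)
    (h : R a y) (ha : a = 4*i+1) : y = 4*i ∨ (i+1 ≤ B ∧ y = 4*i+2) := by
  have hB := C.hB
  rcases C.edg h with ⟨j,hj1,hjB,h⟩|⟨j,hj1,hjB,h⟩|h|h|h <;> omega

lemma nb1i (C : Ctx B R idx u v) {x : ℕ} (h : R x 1) : x = 4*B-2 := by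
  have hB := C.hB
  rcases C.edg h with ⟨j,hj1,hjB,h⟩|⟨j,hj1,hjB,h⟩|h|h|h <;> omega

lemma nb1o (C : Ctx B R idx u v) {y : ℕ} (h : R 1 y) : y = 2 := by
  have hB := C.hB
  rcases C.edg h with ⟨j,hj1,hjB,h⟩|⟨j,hj1,hjB,h⟩|h|h|h <;> omega

/-- no vertex maximising `idx` can exist in a successor-closed set -/
lemma succClosed (C : Ctx B R idx u v) (S : Finset ℕ) (hne : S.Nonempty)
    (hcl : ∀ x ∈ S, ∃ y, R x y ∧ y ∈ S) : False := by
  obtain ⟨x, hx, hmax⟩ := S.exists_max_image idx hne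
  obtain ⟨y, hy, hyS⟩ := hcl x hx
  have := C.hidx hy
  have := hmax y hyS
  omega

def Asc (R : ℕ → ℕ → Prop) (t : ℕ) : Prop :=
  R (4*t-2) (4*t-1) ∧ R (4*t-1) (4*t) ∧ R (4*t) (4*t+1)

def Desc (R : ℕ → ℕ → Prop) (t : ℕ) : Prop :=
  R (4*t+1) (4*t) ∧ R (4*t) (4*t-1) ∧ R (4*t-1) (4*t-2)

lemma Rc {R : ℕ → ℕ → Prop} {x y x' y' : ℕ} (h : R x y) (hx : x = x') (hy : y = y') :
    R x' y' := hx ▸ hy ▸ h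

lemma nvE (C : Ctx B R idx u v) {x y : ℕ} (h : R x y) (hx : x = v) : False := C.nv (hx ▸ h)
lemma nuE (C : Ctx B R idx u v) {x y : ℕ} (h : R x y) (hy : y = u) : False := C.nu (hy ▸ h)

/-- if the path starts `1 → 2 → 3` then block 1 is ascended completely. -/
lemma alpha (C : Ctx B R idx u v) (h12 : R 1 2) (h23 : R 2 3) : Asc R 1 := by
  have hB := C.hB; have hu2 := C.hu2; have hv2 := C.hv2
  have hv3 : v ≠ 3 := by
    intro hv
    obtain ⟨x, hx⟩ := C.ex_pred (x := 4) (by omega) (by omega) (by omega)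
    rcases nbCi C (i := 1) (by omega) (by omega) hx (by omega) with h | h
    · exact nvE C hx (by omega)
    · have h54 : R 5 4 := Rc hx (by omega) rfl
      obtain ⟨y, hy⟩ := C.ex_succ (x := 4) (by omega) (by omega) (by omega)
      rcases nbCo C (i := 1) (by omega) (by omega) hy (by omega) with h' | h' | ⟨h', _⟩
      · exact absurd (C.pU (Rc hy rfl (by omega)) h23) (by omega)
      · exact no2 C (Rc hy rfl (by omega)) h54
      · omega
  obtain ⟨y, hy⟩ := C.ex_succ (x := 3) (by omega) (by omega) (by omega)
  rcases nbBo C (i := 1) (by omega) (by omega) hy (by omega) with h | h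
  · exact absurd (C.pU (Rc hy rfl (by omega)) h12) (by omega)
  have h34 : R 3 4 := Rc hy rfl (by omega)
  obtain ⟨z, hz⟩ := C.ex_succ (x := 4) (by omega) (by omega) (by omega)
  rcases nbCo C (i := 1) (by omega) (by omega) hz (by omega) with h' | h' | ⟨h', _⟩
  · exact absurd (C.pU (Rc hz rfl (by omega)) h23) (by omega)
  · exact ⟨Rc h23 (by omega) (by omega), Rc h34 (by omega) (by omega),
      Rc hz (by omega) (by omega)⟩
  · omega

/-- if the path wraps `1 → 2 → 9` then the end is `3` and `c_B → d_1` is used. -/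
lemma beta (C : Ctx B R idx u v) (hu3 : u ≠ 3) (hu5 : u ≠ 5)
    (h12 : R 1 2) (h29 : R 2 9) : v = 3 ∧ R (4*B) 5 ∧ R 5 4 ∧ R 4 3 := by
  have hB := C.hB; have hu2 := C.hu2; have hv2 := C.hv2
  obtain ⟨x, hx⟩ := C.ex_pred (x := 3) (by omega) (by omega) (by omega)
  rcases nbBi C (i := 1) (by omega) (by omega) hx (by omega) with h | h
  · exact absurd (C.sU (Rc hx h rfl) h29) (by omega)
  have h43 : R 4 3 := Rc hx h rfl
  have hv3 : v = 3 := by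
    by_contra hv3
    obtain ⟨y, hy⟩ := C.ex_succ (x := 3) (by omega) (by omega) (by omega)
    rcases nbBo C (i := 1) (by omega) (by omega) hy (by omega) with h' | h'
    · exact absurd (C.pU (Rc hy rfl h') h12) (by omega)
    · exact no2 C (Rc hy rfl h') h43
  obtain ⟨z, hz⟩ := C.ex_pred (x := 4) (by omega) (by omega) (by omega)
  rcases nbCi C (i := 1) (by omega) (by omega) hz (by omega) with h' | h'
  · exact absurd (nvE C hz (by omega)) id
  have h54 : R 5 4 := Rc hz h' rfl
  obtain ⟨w, hw⟩ := C.ex_pred (x := 5) (by omega) (by omega) (by omega)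
  rcases nbDi C (i := 1) (by omega) (by omega) hw (by omega) with h'' | ⟨h'', _⟩ | ⟨_, h''⟩
  · exact absurd (C.sU (Rc hw h'' rfl) h43) (by omega)
  · omega
  · exact ⟨hv3, Rc hw h'' rfl, h54, h43⟩

/-- entering block 2 at `d_2 = 9` from outside forces block 2 to be descended. -/
lemma enterDesc2 (C : Ctx B R idx u v) (hB3 : 3 ≤ B) {w : ℕ} (hw9 : R w 9) (hw : w ≠ 8)
    (hv7 : v ≠ 7) (hv9 : v ≠ 9) : Desc R 2 := by
  have hB := C.hB; have hu2 := C.hu2; have hv2 := C.hv2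
  obtain ⟨y, hy⟩ := C.ex_succ (x := 9) (by omega) (by omega) (by omega)
  rcases nbDo C (i := 2) (by omega) (by omega) hy (by omega) with h | ⟨_, h⟩
  · -- main 9 → 8
    have h98 : R 9 8 := Rc hy rfl (by omega)
    obtain ⟨z, hz⟩ := C.ex_succ (x := 8) (by omega) (by omega) (by omega)
    rcases nbCo C (i := 2) (by omega) (by omega) hz (by omega) with h' | h' | ⟨h', _⟩
    · -- 8 → 7
      have h87 : R 8 7 := Rc hz rfl (by omega)
      obtain ⟨t, ht⟩ := C.ex_succ (x := 7) (by omega) (by omega) (by omega)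
      rcases nbBo C (i := 2) (by omega) (by omega) ht (by omega) with h'' | h''
      · exact ⟨Rc h98 (by omega) (by omega), Rc h87 (by omega) (by omega),
          Rc ht (by omega) (by omega)⟩
      · exact absurd (no2 C (Rc ht rfl (by omega)) h87) id
    · exact absurd (no2 C (Rc hz rfl (by omega)) h98) id
    · omega
  · -- skip 9 → 10 : c₂ = 8 is stranded
    exfalso
    obtain ⟨x, hx⟩ := C.ex_pred (x := 8) (by omega) (by omega) (by omega)
    rcases nbCi C (i := 2) (by omega) (by omega) hx (by omega) with h' | h'
    · have h78 : R 7 8 := Rc hx h' rfl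
      obtain ⟨z, hz⟩ := C.ex_succ (x := 8) (by omega) (by omega) (by omega)
      rcases nbCo C (i := 2) (by omega) (by omega) hz (by omega) with h'' | h'' | ⟨h'', _⟩
      · exact no2 C (Rc hz rfl (by omega)) h78
      · exact absurd (C.pU (Rc hz rfl (by omega)) hw9) (by omega)
      · omega
    · exact absurd (C.sU (Rc hx h' rfl) (Rc hy rfl h)) (by omega)

/-- a descended block exits at its bottom to the next `d`. -/
lemma dlink (C : Ctx B R idx u v) {t : ℕ} (ht : 1 ≤ t) (htB : t + 1 ≤ B)
    (hD : Desc R t) : R (4*t-2) (4*t+5) := by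
  have hB := C.hB; have hu2 := C.hu2; have hv2 := C.hv2
  obtain ⟨y, hy⟩ := C.ex_succ (x := 4*t-2) (by omega) (by omega) (by omega)
  rcases nbAo C (i := t) (by omega) (by omega) hy (by omega) with h | ⟨_, h⟩ | ⟨h, _⟩
  · exact absurd (C.pU (Rc hy rfl h) hD.2.1) (by omega)
  · exact Rc hy rfl h
  · omega

/-- descending propagates to the next block (away from block `B`). -/
lemma wsA (C : Ctx B R idx u v) {t : ℕ} (ht : 1 ≤ t) (htB : t + 2 ≤ B)
    (hD : Desc R t) : Desc R (t+1) := by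
  have hB := C.hB; have hu2 := C.hu2; have hv2 := C.hv2
  have hlink : R (4*t-2) (4*t+5) := dlink C ht (by omega) hD
  have hvd : v ≠ 4*t+5 := by
    intro hv
    obtain ⟨x, hx⟩ := C.ex_pred (x := 4*t+4) (by omega) (by omega) (by omega)
    rcases nbCi C (i := t+1) (by omega) (by omega) hx (by omega) with h | h
    · have hbc : R (4*t+3) (4*t+4) := Rc hx (by omega) rfl
      obtain ⟨y, hy⟩ := C.ex_succ (x := 4*t+4) (by omega) (by omega) (by omega)
      rcases nbCo C (i := t+1) (by omega) (by omega) hy (by omega) with h' | h' | ⟨h', _⟩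
      · exact no2 C (Rc hy rfl (by omega)) hbc
      · exact absurd (C.pU (Rc hy rfl (by omega)) hlink) (by omega)
      · omega
    · exact nvE C hx (by omega)
  obtain ⟨y, hy⟩ := C.ex_succ (x := 4*t+5) (by omega) (by omega) (by omega)
  rcases nbDo C (i := t+1) (by omega) (by omega) hy (by omega) with h | ⟨_, h⟩
  · -- main d → c
    have hdc : R (4*t+5) (4*t+4) := Rc hy rfl (by omega)
    obtain ⟨z, hz⟩ := C.ex_succ (x := 4*t+4) (by omega) (by omega) (by omega)
    rcases nbCo C (i := t+1) (by omega) (by omega) hz (by omega) with h' | h' | ⟨h', _⟩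
    · -- c → b
      have hcb : R (4*t+4) (4*t+3) := Rc hz rfl (by omega)
      have hvb : v ≠ 4*t+3 := by
        intro hv
        obtain ⟨x, hx⟩ := C.ex_pred (x := 4*t+2) (by omega) (by omega) (by omega)
        rcases nbAi C (i := t+1) (by omega) (by omega) hx (by omega) with h'' | h''
        · exact nvE C hx (by omega)
        · exact absurd (C.sU (Rc hx (show x = 4*t+1 by omega) rfl) hD.1) (by omega)
      obtain ⟨w, hw⟩ := C.ex_succ (x := 4*t+3) (by omega) (by omega) (by omega)
      rcases nbBo C (i := t+1) (by omega) (by omega) hw (by omega) with h'' | h''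
      · exact ⟨Rc hdc (by omega) (by omega), Rc hcb (by omega) (by omega),
          Rc hw (by omega) (by omega)⟩
      · exact absurd (no2 C (Rc hw rfl (by omega)) hcb) id
    · exact absurd (no2 C (Rc hz rfl (by omega)) hdc) id
    · omega
  · -- skip (d_{t+1} → a_{t+2}) : c_{t+1} stranded
    exfalso
    obtain ⟨x, hx⟩ := C.ex_pred (x := 4*t+4) (by omega) (by omega) (by omega)
    rcases nbCi C (i := t+1) (by omega) (by omega) hx (by omega) with h' | h'
    · have hbc : R (4*t+3) (4*t+4) := Rc hx (by omega) rfl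
      obtain ⟨z, hz⟩ := C.ex_succ (x := 4*t+4) (by omega) (by omega) (by omega)
      rcases nbCo C (i := t+1) (by omega) (by omega) hz (by omega) with h'' | h'' | ⟨h'', _⟩
      · exact no2 C (Rc hz rfl (by omega)) hbc
      · exact absurd (C.pU (Rc hz rfl (by omega)) hlink) (by omega)
      · omega
    · exact absurd (C.sU (Rc hx (by omega) rfl) (Rc hy rfl h)) (by omega)

/-- iterated descent. -/
lemma chainDesc (C : Ctx B R idx u v) {t0 : ℕ} (h0 : 1 ≤ t0) (hD : Desc R t0) :
    ∀ t, t0 ≤ t → t + 1 ≤ B → Desc R t := by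
  intro t ht htB
  induction t, ht using Nat.le_induction with
  | base => exact hD
  | succ t ht ih => exact wsA C (by omega) (by omega) (ih (by omega))

/-- descending through block `B` and exiting to `1`. -/
lemma wsB (C : Ctx B R idx u v) (hu1' : u ≠ 1) (hubB : u ≠ 4*B-1)
    (hD : Desc R (B-1)) (hlk : R (4*B-6) (4*B+1)) : Desc R B ∧ R (4*B-2) 1 := by
  have hB := C.hB; have hu2 := C.hu2; have hv2 := C.hv2
  have hD1 : R (4*B-3) (4*B-4) := Rc hD.1 (by omega) (by omega)
  have hvd : v ≠ 4*B+1 := by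
    intro hv
    obtain ⟨x, hx⟩ := C.ex_pred (x := 4*B) (by omega) (by omega) (by omega)
    rcases nbCi C (i := B) (by omega) (by omega) hx (by omega) with h | h
    · have hbc : R (4*B-1) (4*B) := Rc hx h rfl
      obtain ⟨y, hy⟩ := C.ex_succ (x := 4*B) (by omega) (by omega) (by omega)
      rcases nbCo C (i := B) (by omega) (by omega) hy (by omega) with h' | h' | ⟨_, h'⟩
      · exact no2 C (Rc hy rfl h') hbc
      · exact absurd (C.pU (Rc hy rfl h') hlk) (by omega)
      · -- exotic c_B → 5
        have hc5 : R (4*B) 5 := Rc hy rfl h'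
        obtain ⟨z, hz⟩ := C.ex_pred (x := 4*B-1) (by omega) (by omega) (by omega)
        rcases nbBi C (i := B) (by omega) (by omega) hz (by omega) with h'' | h''
        · have hab : R (4*B-2) (4*B-1) := Rc hz h'' rfl
          obtain ⟨x1, hx1⟩ := C.ex_pred (x := 1) (by omega) (by omega) (by omega)
          have h14 := nb1i C hx1
          exact absurd (C.sU (Rc hx1 h14 rfl) hab) (by omega)
        · exact absurd (C.sU (Rc hz h'' rfl) hc5) (by omega)
    · exact nvE C (Rc hx h rfl) (by omega)
  obtain ⟨y, hy⟩ := C.ex_succ (x := 4*B+1) (by omega) (by omega) (by omega)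
  rcases nbDo C (i := B) (by omega) (by omega) hy (by omega) with h | ⟨h, _⟩
  swap
  · omega
  have hdc : R (4*B+1) (4*B) := Rc hy rfl h
  obtain ⟨z, hz⟩ := C.ex_succ (x := 4*B) (by omega) (by omega) (by omega)
  rcases nbCo C (i := B) (by omega) (by omega) hz (by omega) with h' | h' | ⟨_, h'⟩
  · -- c_B → b_B
    have hcb : R (4*B) (4*B-1) := Rc hz rfl h'
    have hvb : v ≠ 4*B-1 := by
      intro hv
      obtain ⟨x, hx⟩ := C.ex_pred (x := 4*B-2) (by omega) (by omega) (by omega)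
      rcases nbAi C (i := B) (by omega) (by omega) hx (by omega) with h'' | h''
      · exact nvE C (Rc hx h'' rfl) (by omega)
      · exact absurd (C.sU (Rc hx h'' rfl) hD1) (by omega)
    obtain ⟨w, hw⟩ := C.ex_succ (x := 4*B-1) (by omega) (by omega) (by omega)
    rcases nbBo C (i := B) (by omega) (by omega) hw (by omega) with h'' | h''
    swap
    · exact absurd (no2 C (Rc hw rfl h'') hcb) id
    have hba : R (4*B-1) (4*B-2) := Rc hw rfl h''
    refine ⟨⟨Rc hdc (by omega) (by omega), Rc hcb (by omega) (by omega),
      Rc hba (by omega) (by omega)⟩, ?_⟩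
    obtain ⟨z2, hz2⟩ := C.ex_succ (x := 4*B-2) (by omega) (by omega) (by omega)
    rcases nbAo C (i := B) (by omega) (by omega) hz2 (by omega) with h3 | ⟨h3, _⟩ | ⟨_, h3⟩
    · exact absurd (no2 C (Rc hz2 rfl h3) hba) id
    · omega
    · exact Rc hz2 rfl h3
  · exact absurd (no2 C (Rc hz rfl h') hdc) id
  · -- exotic c_B → 5
    exfalso
    have hc5 : R (4*B) 5 := Rc hz rfl h'
    obtain ⟨z1, hz1⟩ := C.ex_pred (x := 4*B-1) (by omega) (by omega) (by omega)
    rcases nbBi C (i := B) (by omega) (by omega) hz1 (by omega) with h'' | h''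
    · have hab : R (4*B-2) (4*B-1) := Rc hz1 h'' rfl
      obtain ⟨x1, hx1⟩ := C.ex_pred (x := 1) (by omega) (by omega) (by omega)
      have h14 := nb1i C hx1
      exact absurd (C.sU (Rc hx1 h14 rfl) hab) (by omega)
    · exact absurd (C.sU (Rc hz1 h'' rfl) hc5) (by omega)

/-- full wrap: once some block is descended, all further blocks are descended
and the path continues to vertex `1`. -/
lemma wrap (C : Ctx B R idx u v) (hu1' : u ≠ 1) (hubB : u ≠ 4*B-1) {t0 : ℕ}
    (h1 : 1 ≤ t0) (h2 : t0 ≤ B) (hD : Desc R t0) :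
    (∀ t, t0 ≤ t → t ≤ B → Desc R t) ∧ R (4*B-2) 1 := by
  have hB := C.hB; have hu2 := C.hu2; have hv2 := C.hv2
  by_cases htB : t0 = B
  · subst htB
    obtain ⟨y, hy⟩ := C.ex_succ (x := 4*t0-2) (by omega) (by omega) (by omega)
    rcases nbAo C (i := t0) (by omega) (by omega) hy (by omega) with h | ⟨h, _⟩ | ⟨_, h⟩
    · exact absurd (C.pU (Rc hy rfl h) hD.2.1) (by omega)
    · omega
    · exact ⟨fun t ht1 ht2 => (show t0 = t by omega) ▸ hD,
        Rc hy rfl h⟩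
  · have hchain := chainDesc C h1 hD
    have hDB1 : Desc R (B-1) := hchain (B-1) (by omega) (by omega)
    have hlk : R (4*B-6) (4*B+1) :=
      Rc (dlink C (t := B-1) (by omega) (by omega) hDB1) (by omega) (by omega)
    obtain ⟨hDB, h1'⟩ := wsB C hu1' hubB hDB1 hlk
    refine ⟨fun t ht1 ht2 => ?_, h1'⟩
    by_cases htB' : t = B
    · rw [htB']; exact hDB
    · exact hchain t ht1 (by omega)

def AscR (R : ℕ → ℕ → Prop) (t0 t1 : ℕ) : Prop := ∀ t, t0 ≤ t → t ≤ t1 → Asc R t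
def LinkR (R : ℕ → ℕ → Prop) (t0 t1 : ℕ) : Prop := ∀ t, t0 ≤ t → t < t1 → R (4*t+1) (4*t+2)

/-- possible outcomes of climbing (ascending) blocks `t0, t0+1, …`. -/
def ClimbOut (B : ℕ) (R : ℕ → ℕ → Prop) (u v : ℕ) (t0 : ℕ) : Prop :=
  (∃ t, t0 ≤ t ∧ t+1 ≤ B ∧ v = 4*t+1 ∧ u = 4*t+5 ∧ AscR R t0 t ∧ LinkR R t0 t) ∨
  (∃ t, t0 ≤ t ∧ t+2 ≤ B ∧ u = 4*t+3 ∧ AscR R t0 t ∧ LinkR R t0 t ∧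
      R (4*t+1) (4*t+2) ∧ R (4*t+2) (4*t+9) ∧ R (4*t+3) (4*t+4) ∧ R (4*t+4) (4*t+5)) ∨
  (∃ t, t0 ≤ t ∧ t+2 ≤ B ∧ v = 4*t+3 ∧ u = 4*t+5 ∧ AscR R t0 t ∧ LinkR R t0 t ∧
      R (4*t+1) (4*t+2) ∧ R (4*t+2) (4*t+9)) ∨
  (v = 4*B+1 ∧ AscR R t0 B ∧ LinkR R t0 B) ∨
  (AscR R t0 (B-1) ∧ LinkR R t0 (B-1) ∧ R (4*B-3) (4*B-2) ∧ R (4*B-2) 1 ∧ t0+1 ≤ B)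

section
variable {B : ℕ} {R : ℕ → ℕ → Prop} {idx : ℕ → ℕ} {u v : ℕ}

lemma climbBase (C : Ctx B R idx u v) {t0 : ℕ} (h0 : t0 ≤ B)
    (hA : AscR R t0 B) (hL : LinkR R t0 B) : ClimbOut B R u v t0 := by
  have hB := C.hB; have hu2 := C.hu2; have hv2 := C.hv2
  by_cases hv : v = 4*B+1
  · exact Or.inr (Or.inr (Or.inr (Or.inl ⟨hv, hA, hL⟩)))
  · exfalso
    have hAB := hA B h0 le_rfl
    obtain ⟨y, hy⟩ := C.ex_succ (x := 4*B+1) (by omega) (by omega) (by omega)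
    rcases nbDo C (i := B) (by omega) (by omega) hy (by omega) with h | ⟨h, _⟩
    · exact no2 C (Rc hy rfl h) hAB.2.2
    · omega

lemma climb (C : Ctx B R idx u v) {t0 : ℕ} (h0 : 1 ≤ t0) :
    ∀ t, t0 ≤ t → t ≤ B → AscR R t0 t → LinkR R t0 t → ClimbOut B R u v t0 := by
  have hB := C.hB; have hu2 := C.hu2; have hv2 := C.hv2; have huv := C.huv
  have main : ∀ n t, B - t ≤ n → t0 ≤ t → t ≤ B → AscR R t0 t → LinkR R t0 t →
      ClimbOut B R u v t0 := by
    intro n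
    induction n with
    | zero =>
      intro t hn ht0 htB hA hL
      have hteq : t = B := by omega
      subst hteq
      exact climbBase C ht0 hA hL
    | succ n ih =>
      intro t hn ht0 htB hA hL
      by_cases hteq : t = B
      · subst hteq; exact climbBase C ht0 hA hL
      -- now t < B
      have htB' : t + 1 ≤ B := by omega
      have hAt := hA t ht0 le_rfl
      have hab : R (4*t-2) (4*t-1) := hAt.1
      have hbc : R (4*t-1) (4*t) := hAt.2.1
      have hcd : R (4*t) (4*t+1) := hAt.2.2
      by_cases hvt : v = 4*t+1
      · -- T1 : path ends at d_t ; forces u = d_{t+1}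
        obtain ⟨x, hx⟩ := C.ex_pred (x := 4*t+2) (by omega) (by omega) (by omega)
        rcases nbAi C (i := t+1) (by omega) (by omega) hx (by omega) with h | h
        swap
        · exact absurd (nvE C hx (by omega)) id
        have hba : R (4*t+3) (4*t+2) := Rc hx h rfl
        obtain ⟨x2, hx2⟩ := C.ex_pred (x := 4*t+4) (by omega) (by omega) (by omega)
        rcases nbCi C (i := t+1) (by omega) (by omega) hx2 (by omega) with h2 | h2
        · exact absurd (C.sU (Rc hx2 h2 rfl) hba) (by omega)
        have hdc : R (4*t+5) (4*t+4) := Rc hx2 h2 rfl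
        by_cases hu5 : u = 4*t+5
        · exact Or.inl ⟨t, ht0, by omega, hvt, hu5, hA, hL⟩
        · exfalso
          obtain ⟨x3, hx3⟩ := C.ex_pred (x := 4*t+5) (by omega) (by omega) (by omega)
          rcases nbDi C (i := t+1) (by omega) (by omega) hx3 (by omega)
            with h3 | ⟨_, h3⟩ | ⟨h3, _⟩
          · exact no2 C (Rc hx3 h3 rfl) hdc
          · exact absurd (C.sU (Rc hx3 (show x3 = 4*t-2 by omega) rfl) hab) (by omega)
          · omega
      · -- d_t continues to a_{t+1}
        obtain ⟨y, hy⟩ := C.ex_succ (x := 4*t+1) (by omega) (by omega) (by omega)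
        rcases nbDo C (i := t) (by omega) (by omega) hy (by omega) with h | ⟨_, h⟩
        · exact absurd (no2 C (Rc hy rfl h) hcd) id
        have hlink : R (4*t+1) (4*t+2) := Rc hy rfl h
        have hL' : LinkR R t0 (t+1) := by
          intro t' h1 h2
          by_cases he : t' = t
          · subst he; exact hlink
          · exact hL t' h1 (by omega)
        obtain ⟨y2, hy2⟩ := C.ex_succ (x := 4*t+2) (by omega) (by omega) (by omega)
        rcases nbAo C (i := t+1) (by omega) (by omega) hy2 (by omega)
          with h2 | ⟨hsB, h2⟩ | ⟨hsB, h2⟩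
        · -- a_{t+1} → b_{t+1}
          have hab2 : R (4*t+2) (4*t+3) := Rc hy2 rfl (by omega)
          by_cases hvb : v = 4*t+3
          · -- T2 : contradiction
            exfalso
            obtain ⟨x, hx⟩ := C.ex_pred (x := 4*t+4) (by omega) (by omega) (by omega)
            rcases nbCi C (i := t+1) (by omega) (by omega) hx (by omega) with h3 | h3
            · exact absurd (nvE C hx (by omega)) id
            have hdc : R (4*t+5) (4*t+4) := Rc hx h3 rfl
            obtain ⟨z, hz⟩ := C.ex_succ (x := 4*t+4) (by omega) (by omega) (by omega)
            rcases nbCo C (i := t+1) (by omega) (by omega) hz (by omega)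
              with h4 | h4 | ⟨hB4, h4⟩
            · exact absurd (C.pU (Rc hz rfl h4) hab2) (by omega)
            · exact no2 C (Rc hz rfl h4) hdc
            · -- exotic c_B → 5 (here t+1 = B)
              have hc5 : R (4*t+4) 5 := Rc hz rfl h4
              by_cases hu5 : u = 4*t+5
              · obtain ⟨x1, hx1⟩ := C.ex_pred (x := 1) (by omega) (by omega) (by omega)
                have h14 := nb1i C hx1
                exact absurd (C.sU (Rc hx1 (show x1 = 4*t+2 by omega) rfl) hab2) (by omega)
              · obtain ⟨x3, hx3⟩ := C.ex_pred (x := 4*t+5) (by omega) (by omega) (by omega)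
                rcases nbDi C (i := t+1) (by omega) (by omega) hx3 (by omega)
                  with h5 | ⟨_, h5⟩ | ⟨h5, _⟩
                · exact absurd (C.sU (Rc hx3 h5 rfl) hc5) (by omega)
                · exact absurd (C.sU (Rc hx3 (show x3 = 4*t-2 by omega) rfl) hab) (by omega)
                · omega
          · -- b_{t+1} continues
            obtain ⟨w, hw⟩ := C.ex_succ (x := 4*t+3) (by omega) (by omega) (by omega)
            rcases nbBo C (i := t+1) (by omega) (by omega) hw (by omega) with h3 | h3
            · exact absurd (C.pU (Rc hw rfl h3) hlink) (by omega)
            have hbc2 : R (4*t+3) (4*t+4) := Rc hw rfl h3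
            obtain ⟨z, hz⟩ := C.ex_succ (x := 4*t+4) (by omega) (by omega) (by omega)
            rcases nbCo C (i := t+1) (by omega) (by omega) hz (by omega)
              with h4 | h4 | ⟨hB4, h4⟩
            · exact absurd (no2 C (Rc hz rfl h4) hbc2) id
            · -- Asc (t+1) established : recurse
              have hcd2 : R (4*t+4) (4*t+5) := Rc hz rfl h4
              have hA' : AscR R t0 (t+1) := by
                intro t' h1 h2
                by_cases he : t' = t+1
                · subst he
                  exact ⟨Rc hab2 (by omega) (by omega), Rc hbc2 (by omega) (by omega),
                    Rc hcd2 (by omega) (by omega)⟩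
                · exact hA t' h1 (by omega)
              exact ih (t+1) (by omega) (by omega) (by omega) hA' hL'
            · -- exotic c_B → 5 (t+1 = B)
              exfalso
              have hc5 : R (4*t+4) 5 := Rc hz rfl h4
              by_cases hu5 : u = 4*t+5
              · obtain ⟨x1, hx1⟩ := C.ex_pred (x := 1) (by omega) (by omega) (by omega)
                have h14 := nb1i C hx1
                exact absurd (C.sU (Rc hx1 (show x1 = 4*t+2 by omega) rfl) hab2) (by omega)
              · obtain ⟨x3, hx3⟩ := C.ex_pred (x := 4*t+5) (by omega) (by omega) (by omega)
                rcases nbDi C (i := t+1) (by omega) (by omega) hx3 (by omega)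
                  with h5 | ⟨_, h5⟩ | ⟨h5, _⟩
                · exact absurd (C.sU (Rc hx3 h5 rfl) hc5) (by omega)
                · exact absurd (C.sU (Rc hx3 (show x3 = 4*t-2 by omega) rfl) hab) (by omega)
                · omega
        · -- skip : a_{t+1} → d_{t+2}
          have hskip : R (4*t+2) (4*t+9) := Rc hy2 rfl (by omega)
          by_cases hub : u = 4*t+3
          · -- O2
            obtain ⟨w, hw⟩ := C.ex_succ (x := 4*t+3) (by omega) (by omega) (by omega)
            rcases nbBo C (i := t+1) (by omega) (by omega) hw (by omega) with h3 | h3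
            · exact absurd (C.pU (Rc hw rfl h3) hlink) (by omega)
            have huc : R (4*t+3) (4*t+4) := Rc hw rfl h3
            obtain ⟨z, hz⟩ := C.ex_succ (x := 4*t+4) (by omega) (by omega) (by omega)
            rcases nbCo C (i := t+1) (by omega) (by omega) hz (by omega)
              with h4 | h4 | ⟨hB4, h4⟩
            · exact absurd (no2 C (Rc hz rfl h4) huc) id
            · exact Or.inr (Or.inl ⟨t, ht0, by omega, hub, hA, hL, hlink, hskip, huc,
                Rc hz rfl h4⟩)
            · omega
          · obtain ⟨x, hx⟩ := C.ex_pred (x := 4*t+3) (by omega) (by omega) (by omega)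
            rcases nbBi C (i := t+1) (by omega) (by omega) hx (by omega) with h3 | h3
            · exact absurd (C.sU (Rc hx h3 rfl) hskip) (by omega)
            have hcb : R (4*t+4) (4*t+3) := Rc hx h3 rfl
            by_cases hvb : v = 4*t+3
            · -- O3
              obtain ⟨x2, hx2⟩ := C.ex_pred (x := 4*t+4) (by omega) (by omega) (by omega)
              rcases nbCi C (i := t+1) (by omega) (by omega) hx2 (by omega) with h4 | h4
              · exact absurd (nvE C hx2 (by omega)) id
              have hdc : R (4*t+5) (4*t+4) := Rc hx2 h4 rfl
              by_cases hu5 : u = 4*t+5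
              · exact Or.inr (Or.inr (Or.inl ⟨t, ht0, by omega, hvb, hu5, hA, hL,
                  hlink, hskip⟩))
              · exfalso
                obtain ⟨x3, hx3⟩ := C.ex_pred (x := 4*t+5) (by omega) (by omega) (by omega)
                rcases nbDi C (i := t+1) (by omega) (by omega) hx3 (by omega)
                  with h5 | ⟨_, h5⟩ | ⟨h5, _⟩
                · exact no2 C (Rc hx3 h5 rfl) hdc
                · exact absurd (C.sU (Rc hx3 (show x3 = 4*t-2 by omega) rfl) hab) (by omega)
                · omega
            · -- b_{t+1} stranded : contradiction
              exfalso
              obtain ⟨w, hw⟩ := C.ex_succ (x := 4*t+3) (by omega) (by omega) (by omega)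
              rcases nbBo C (i := t+1) (by omega) (by omega) hw (by omega) with h4 | h4
              · exact absurd (C.pU (Rc hw rfl h4) hlink) (by omega)
              · exact absurd (no2 C (Rc hw rfl h4) hcb) id
        · -- t+1 = B and a_B → 1 : O7
          refine Or.inr (Or.inr (Or.inr (Or.inr ⟨?_, ?_, ?_, ?_, by omega⟩)))
          · exact fun t' h1 h2 => hA t' h1 (by omega)
          · exact fun t' h1 h2 => hL t' h1 (by omega)
          · exact Rc hlink (by omega) (by omega)
          · exact Rc hy2 (by omega) (by omega)
  intro t ht0 htB hA hL
  exact main (B - t) t le_rfl ht0 htB hA hL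

end
end

section
variable {B : ℕ} {R : ℕ → ℕ → Prop} {idx : ℕ → ℕ} {u v : ℕ}

/-- the legal start/end pairs. -/
def Legal (B u v : ℕ) : Prop :=
  (u = 1 ∧ v = 4*B+1) ∨ (∃ s, 1 ≤ s ∧ s ≤ B ∧ u = 4*s+1 ∧ v = 4*s-3) ∨
  (∃ s, 1 ≤ s ∧ s+1 ≤ B ∧ u = 4*s-1 ∧ v = 4*s+3) ∨ (u = 4*B-1 ∧ v = 3)

lemma scMem {B : ℕ} {x : ℕ} {P : ℕ → Prop} [DecidablePred P] :
    x ∈ (Finset.Icc 1 (4*B+1)).filter P ↔ (1 ≤ x ∧ x ≤ 4*B+1) ∧ P x := by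
  simp [Finset.mem_filter, Finset.mem_Icc, and_assoc]

/-- `u = d_s`, `v = b_s`: the rest of the graph is successor-closed. -/
lemma sc1 (C : Ctx B R idx u v) {s : ℕ} (hs1 : 1 ≤ s) (hsB : s ≤ B)
    (hu : u = 4*s+1) (hv : v = 4*s-1) (hcb : R (4*s) (4*s-1)) : False := by
  have hB := C.hB; have hu2 := C.hu2; have hv2 := C.hv2
  refine succClosed C ((Finset.Icc 1 (4*B+1)).filter
    (fun x => x ≠ 4*s-1 ∧ x ≠ 4*s ∧ x ≠ 4*s+1)) ⟨1, ?_⟩ ?_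
  · simp only [scMem]; omega
  intro x hx
  simp only [scMem] at hx
  obtain ⟨y, hy⟩ := C.ex_succ (x := x) (by omega) (by omega) (by omega)
  refine ⟨y, hy, ?_⟩
  have hyb := Rbd C hy
  simp only [scMem]
  refine ⟨by omega, ?_, ?_, ?_⟩
  · intro he
    rcases nbBi C (i := s) (by omega) (by omega) (Rc hy rfl he) (by omega) with h | h
    · exact absurd (C.pU (Rc hy rfl he) hcb) (by omega)
    · omega
  · intro he
    rcases nbCi C (i := s) (by omega) (by omega) (Rc hy rfl he) (by omega) with h | h <;> omega
  · intro he; exact nuE C hy (by omega)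

/-- `u = b_s`, `v = d_s`: the rest of the graph is successor-closed. -/
lemma sc2 (C : Ctx B R idx u v) {s : ℕ} (hs1 : 1 ≤ s) (hsB : s ≤ B)
    (hu : u = 4*s-1) (hv : v = 4*s+1) (hcd : R (4*s) (4*s+1)) : False := by
  have hB := C.hB; have hu2 := C.hu2; have hv2 := C.hv2
  refine succClosed C ((Finset.Icc 1 (4*B+1)).filter
    (fun x => x ≠ 4*s-1 ∧ x ≠ 4*s ∧ x ≠ 4*s+1)) ⟨1, ?_⟩ ?_
  · simp only [scMem]; omega
  intro x hx
  simp only [scMem] at hx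
  obtain ⟨y, hy⟩ := C.ex_succ (x := x) (by omega) (by omega) (by omega)
  refine ⟨y, hy, ?_⟩
  have hyb := Rbd C hy
  simp only [scMem]
  refine ⟨by omega, ?_, ?_, ?_⟩
  · intro he; exact nuE C hy (by omega)
  · intro he
    rcases nbCi C (i := s) (by omega) (by omega) (Rc hy rfl he) (by omega) with h | h <;> omega
  · intro he
    rcases nbDi C (i := s) (by omega) (by omega) (Rc hy rfl he) (by omega)
      with h | ⟨_, h⟩ | ⟨_, h⟩
    · omega
    · exact absurd (C.pU (Rc hy rfl he) hcd) (by omega)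
    · exact absurd (C.pU (Rc hy rfl he) hcd) (by omega)

/-- `u = b_s`, `v = d_{s+1}` with blocks `s, s+1` partially traversed. -/
lemma sc3 (C : Ctx B R idx u v) {s : ℕ} (hs1 : 1 ≤ s) (hsB : s + 1 ≤ B)
    (hu : u = 4*s-1) (hv : v = 4*s+5) (hcd : R (4*s) (4*s+1))
    (hcd2 : R (4*s+4) (4*s+5)) : False := by
  have hB := C.hB; have hu2 := C.hu2; have hv2 := C.hv2
  refine succClosed C ((Finset.Icc 1 (4*B+1)).filter
    (fun x => x ≠ 4*s-1 ∧ x ≠ 4*s ∧ x ≠ 4*s+1 ∧ x ≠ 4*s+2 ∧ x ≠ 4*s+3 ∧ x ≠ 4*s+4 ∧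
      x ≠ 4*s+5)) ⟨1, ?_⟩ ?_
  · simp only [scMem]; omega
  intro x hx
  simp only [scMem] at hx
  obtain ⟨y, hy⟩ := C.ex_succ (x := x) (by omega) (by omega) (by omega)
  refine ⟨y, hy, ?_⟩
  have hyb := Rbd C hy
  simp only [scMem]
  refine ⟨by omega, ?_, ?_, ?_, ?_, ?_, ?_, ?_⟩
  · intro he; exact nuE C hy (by omega)
  · intro he
    rcases nbCi C (i := s) (by omega) (by omega) (Rc hy rfl he) (by omega) with h | h <;> omega
  · intro he
    rcases nbDi C (i := s) (by omega) (by omega) (Rc hy rfl he) (by omega)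
      with h | ⟨_, h⟩ | ⟨_, h⟩
    · omega
    · exact absurd (C.pU (Rc hy rfl he) hcd) (by omega)
    · exact absurd (C.pU (Rc hy rfl he) hcd) (by omega)
  · intro he
    rcases nbAi C (i := s+1) (by omega) (by omega) (Rc hy rfl he) (by omega) with h | h <;> omega
  · intro he
    rcases nbBi C (i := s+1) (by omega) (by omega) (Rc hy rfl he) (by omega) with h | h <;> omega
  · intro he
    rcases nbCi C (i := s+1) (by omega) (by omega) (Rc hy rfl he) (by omega) with h | h <;> omega
  · intro he
    rcases nbDi C (i := s+1) (by omega) (by omega) (Rc hy rfl he) (by omega)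
      with h | ⟨_, h⟩ | ⟨h, _⟩
    · omega
    · exact absurd (C.pU (Rc hy rfl he) hcd2) (by omega)
    · omega

/-- `u = b_B` went straight to `a_B` and then to `1 = v`. -/
lemma sc4 (C : Ctx B R idx u v) (hu : u = 4*B-1) (hv : v = 1)
    (hua : R (4*B-1) (4*B-2)) : False := by
  have hB := C.hB; have hu2 := C.hu2; have hv2 := C.hv2
  refine succClosed C ((Finset.Icc 1 (4*B+1)).filter
    (fun x => x ≠ 1 ∧ x ≠ 4*B-2 ∧ x ≠ 4*B-1)) ⟨2, ?_⟩ ?_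
  · simp only [scMem]; omega
  intro x hx
  simp only [scMem] at hx
  obtain ⟨y, hy⟩ := C.ex_succ (x := x) (by omega) (by omega) (by omega)
  refine ⟨y, hy, ?_⟩
  have hyb := Rbd C hy
  simp only [scMem]
  refine ⟨by omega, ?_, ?_, ?_⟩
  · intro he; have := nb1i C (Rc hy rfl he); omega
  · intro he
    rcases nbAi C (i := B) (by omega) (by omega) (Rc hy rfl he) (by omega) with h | h
    · omega
    · exact absurd (C.pU (Rc hy rfl he) hua) (by omega)
  · intro he; exact nuE C hy (by omega)

/-- `u = b_s`, `s+1 = B`, `v = 1` with `u → c_s → d_s → a_B → 1`. -/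
lemma sc5 (C : Ctx B R idx u v) {s : ℕ} (hs1 : 1 ≤ s) (hsB : s + 1 = B)
    (hu : u = 4*s-1) (hv : v = 1) (hcd : R (4*s) (4*s+1)) (hda : R (4*s+1) (4*s+2)) :
    False := by
  have hB := C.hB; have hu2 := C.hu2; have hv2 := C.hv2
  refine succClosed C ((Finset.Icc 1 (4*B+1)).filter
    (fun x => x ≠ 4*s-1 ∧ x ≠ 4*s ∧ x ≠ 4*s+1 ∧ x ≠ 4*s+2 ∧ x ≠ 1)) ⟨2, ?_⟩ ?_
  · simp only [scMem]; omega
  intro x hx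
  simp only [scMem] at hx
  obtain ⟨y, hy⟩ := C.ex_succ (x := x) (by omega) (by omega) (by omega)
  refine ⟨y, hy, ?_⟩
  have hyb := Rbd C hy
  simp only [scMem]
  refine ⟨by omega, ?_, ?_, ?_, ?_, ?_⟩
  · intro he; exact nuE C hy (by omega)
  · intro he
    rcases nbCi C (i := s) (by omega) (by omega) (Rc hy rfl he) (by omega) with h | h <;> omega
  · intro he
    rcases nbDi C (i := s) (by omega) (by omega) (Rc hy rfl he) (by omega)
      with h | ⟨_, h⟩ | ⟨_, h⟩
    · omega
    · exact absurd (C.pU (Rc hy rfl he) hcd) (by omega)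
    · exact absurd (C.pU (Rc hy rfl he) hcd) (by omega)
  · intro he
    rcases nbAi C (i := s+1) (by omega) (by omega) (Rc hy rfl he) (by omega) with h | h
    · exact absurd (C.pU (Rc hy rfl he) hda) (by omega)
    · omega
  · intro he; have := nb1i C (Rc hy rfl he); omega

end

section
variable {B : ℕ} {R : ℕ → ℕ → Prop} {idx : ℕ → ℕ} {u v : ℕ}

/-- helper: backward chase from `v = 1` through block 1: yields `c_B → d_1`. -/
lemma backv1 (C : Ctx B R idx u v) (hv1 : v = 1) (hu3 : u ≠ 3) (hu5 : u ≠ 5) :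
    R (4*B) 5 ∧ R 3 2 ∧ R 4 3 ∧ R 5 4 := by
  have hB := C.hB; have hu2 := C.hu2; have hv2 := C.hv2
  obtain ⟨x, hx⟩ := C.ex_pred (x := 2) (by omega) (by omega) (by omega)
  rcases nbAi C (i := 1) (by omega) (by omega) hx (by omega) with h | h
  swap
  · exact absurd (nvE C hx (by omega)) id
  have h32 : R 3 2 := Rc hx h rfl
  obtain ⟨x2, hx2⟩ := C.ex_pred (x := 3) (by omega) (by omega) (by omega)
  rcases nbBi C (i := 1) (by omega) (by omega) hx2 (by omega) with h | h
  · exact absurd (no2 C (Rc hx2 h rfl) h32) id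
  have h43 : R 4 3 := Rc hx2 h rfl
  obtain ⟨x3, hx3⟩ := C.ex_pred (x := 4) (by omega) (by omega) (by omega)
  rcases nbCi C (i := 1) (by omega) (by omega) hx3 (by omega) with h | h
  · exact absurd (no2 C (Rc hx3 h rfl) h43) id
  have h54 : R 5 4 := Rc hx3 h rfl
  obtain ⟨x4, hx4⟩ := C.ex_pred (x := 5) (by omega) (by omega) (by omega)
  rcases nbDi C (i := 1) (by omega) (by omega) hx4 (by omega) with h | ⟨h, _⟩ | ⟨_, h⟩
  · exact absurd (no2 C (Rc hx4 h rfl) h54) id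
  · omega
  · exact ⟨Rc hx4 h rfl, h32, h43, h54⟩

/-- helper: a known `c_B → 5` plus known predecessors of `1` and successors around block
`B` kill the predecessor chase of `c_B`. -/
lemma predCB (C : Ctx B R idx u v) (hc5 : R (4*B) 5) (hk1 : R (4*B-2) 1)
    (hk2 : R (4*B-6) (4*B-5)) (hbu : 4*B-1 ≠ u) (hdu : 4*B+1 ≠ u) : False := by
  have hB := C.hB; have hu2 := C.hu2; have hv2 := C.hv2
  obtain ⟨x, hx⟩ := C.ex_pred (x := 4*B) (by omega) (by omega) (by omega)
  rcases nbCi C (i := B) (by omega) (by omega) hx (by omega) with h | h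
  · have hbcB : R (4*B-1) (4*B) := Rc hx h rfl
    obtain ⟨x2, hx2⟩ := C.ex_pred (x := 4*B-1) (by omega) (by omega) (by omega)
    rcases nbBi C (i := B) (by omega) (by omega) hx2 (by omega) with h2 | h2
    · exact absurd (C.sU (Rc hx2 h2 rfl) hk1) (by omega)
    · exact no2 C (Rc hx2 h2 rfl) hbcB
  · have hdcB : R (4*B+1) (4*B) := Rc hx h rfl
    obtain ⟨x2, hx2⟩ := C.ex_pred (x := 4*B+1) (by omega) (by omega) (by omega)
    rcases nbDi C (i := B) (by omega) (by omega) hx2 (by omega) with h2 | ⟨_, h2⟩ | ⟨h2, _⟩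
    · exact no2 C (Rc hx2 h2 rfl) hdcB
    · exact absurd (C.sU (Rc hx2 (show x2 = 4*B-6 by omega) rfl) hk2) (by omega)
    · omega

/-- MASTER, case `u = 1`. -/
lemma masterM0 (C : Ctx B R idx u v) (hu : u = 1) : Legal B u v := by
  have hB := C.hB; have hu2 := C.hu2; have hv2 := C.hv2; have huv := C.huv
  obtain ⟨y, hy⟩ := C.ex_succ (x := 1) (by omega) (by omega) (by omega)
  have h12 : R 1 2 := Rc hy rfl (nb1o C hy)
  obtain ⟨y2, hy2⟩ := C.ex_succ (x := 2) (by omega) (by omega) (by omega)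
  rcases nbAo C (i := 1) (by omega) (by omega) hy2 (by omega) with h | ⟨_, h⟩ | ⟨h, _⟩
  · -- 2 → 3 : ascend everything
    have hAsc := alpha C h12 (Rc hy2 rfl h)
    have hout := climb C (t0 := 1) (by omega) 1 le_rfl (by omega)
      (fun t' h1 h2 => (show (1:ℕ) = t' by omega) ▸ hAsc)
      (fun t' h1 h2 => absurd (lt_of_lt_of_le h2 h1) (by omega))
    rcases hout with ⟨t, _, _, _, hut, _, _⟩ | ⟨t, ht1, _, hut, _⟩ |
      ⟨t, ht1, _, _, hut, _⟩ | ⟨hv4, _, _⟩ | ⟨_, _, _, hend, _⟩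
    · omega
    · omega
    · omega
    · exact Or.inl ⟨hu, hv4⟩
    · exact absurd (nuE C hend (by omega)) id
  · -- 2 → 9 : forced end v = 3, then contradiction
    exfalso
    have h29 : R 2 9 := Rc hy2 rfl h
    obtain ⟨x, hx⟩ := C.ex_pred (x := 3) (by omega) (by omega) (by omega)
    rcases nbBi C (i := 1) (by omega) (by omega) hx (by omega) with h2 | h2
    · exact absurd (C.sU (Rc hx h2 rfl) h29) (by omega)
    have h43 : R 4 3 := Rc hx h2 rfl
    have hv3 : v = 3 := by
      by_contra hv3
      obtain ⟨y3, hy3⟩ := C.ex_succ (x := 3) (by omega) (by omega) (by omega)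
      rcases nbBo C (i := 1) (by omega) (by omega) hy3 (by omega) with h3 | h3
      · exact absurd (C.pU (Rc hy3 rfl h3) h12) (by omega)
      · exact no2 C (Rc hy3 rfl h3) h43
    obtain ⟨x2, hx2⟩ := C.ex_pred (x := 4) (by omega) (by omega) (by omega)
    rcases nbCi C (i := 1) (by omega) (by omega) hx2 (by omega) with h3 | h3
    · exact nvE C hx2 (by omega)
    have h54 : R 5 4 := Rc hx2 h3 rfl
    obtain ⟨x3, hx3⟩ := C.ex_pred (x := 5) (by omega) (by omega) (by omega)
    rcases nbDi C (i := 1) (by omega) (by omega) hx3 (by omega) with h4 | ⟨h4, _⟩ | ⟨_, h4⟩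
    · exact absurd (C.sU (Rc hx3 h4 rfl) h43) (by omega)
    · omega
    have hc5 : R (4*B) 5 := Rc hx3 h4 rfl
    -- endgame at block B
    obtain ⟨y4, hy4⟩ := C.ex_succ (x := 4*B+1) (by omega) (by omega) (by omega)
    rcases nbDo C (i := B) (by omega) (by omega) hy4 (by omega) with h5 | ⟨h5, _⟩
    swap
    · omega
    have hdc : R (4*B+1) (4*B) := Rc hy4 rfl h5
    obtain ⟨x4, hx4⟩ := C.ex_pred (x := 4*B-1) (by omega) (by omega) (by omega)
    rcases nbBi C (i := B) (by omega) (by omega) hx4 (by omega) with h6 | h6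
    swap
    · exact absurd (C.sU (Rc hx4 h6 rfl) hc5) (by omega)
    have hab : R (4*B-2) (4*B-1) := Rc hx4 h6 rfl
    obtain ⟨y5, hy5⟩ := C.ex_succ (x := 4*B-1) (by omega) (by omega) (by omega)
    rcases nbBo C (i := B) (by omega) (by omega) hy5 (by omega) with h7 | h7
    · exact no2 C (Rc hy5 rfl h7) hab
    · exact absurd (C.pU (Rc hy5 rfl h7) hdc) (by omega)
  · omega

/-- MASTER, case `u = d_s = 4s+1`. -/
lemma masterM1 (C : Ctx B R idx u v) {s : ℕ} (hs1 : 1 ≤ s) (hsB : s ≤ B)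
    (hu : u = 4*s+1) : Legal B u v := by
  have hB := C.hB; have hu2 := C.hu2; have hv2 := C.hv2; have huv := C.huv
  -- u → c_s
  obtain ⟨y, hy⟩ := C.ex_succ (x := 4*s+1) (by omega) (by omega) (by omega)
  rcases nbDo C (i := s) (by omega) (by omega) hy (by omega)
    with h | ⟨hsB', h⟩
  swap
  · -- skip u → a_{s+1} : c_s stranded
    exfalso
    obtain ⟨x, hx⟩ := C.ex_pred (x := 4*s) (by omega) (by omega) (by omega)
    rcases nbCi C (i := s) (by omega) (by omega) hx (by omega) with h2 | h2
    · have hbc : R (4*s-1) (4*s) := Rc hx h2 rfl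
      obtain ⟨z, hz⟩ := C.ex_succ (x := 4*s) (by omega) (by omega) (by omega)
      rcases nbCo C (i := s) (by omega) (by omega) hz (by omega) with h3 | h3 | ⟨h3, _⟩
      · exact no2 C (Rc hz rfl h3) hbc
      · exact nuE C hz (by omega)
      · omega
    · exact absurd (C.sU (Rc hx (show x = 4*s+1 by omega) rfl) (Rc hy rfl h))
        (by omega)
  have hdc : R (4*s+1) (4*s) := Rc hy rfl h
  -- c_s → b_s
  obtain ⟨z, hz⟩ := C.ex_succ (x := 4*s) (by omega) (by omega) (by omega)
  rcases nbCo C (i := s) (by omega) (by omega) hz (by omega) with h2 | h2 | ⟨hsB2, h2⟩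
  rotate_left
  · exact absurd (no2 C (Rc hz rfl h2) hdc) id
  · -- exotic c_B → 5 with u = d_B
    exfalso
    have hc5 : R (4*B) 5 := Rc hz (by omega) h2
    obtain ⟨x, hx⟩ := C.ex_pred (x := 4*B-1) (by omega) (by omega) (by omega)
    rcases nbBi C (i := B) (by omega) (by omega) hx (by omega) with h3 | h3
    swap
    · exact absurd (C.sU (Rc hx h3 rfl) hc5) (by omega)
    have hab : R (4*B-2) (4*B-1) := Rc hx h3 rfl
    obtain ⟨x1, hx1⟩ := C.ex_pred (x := 1) (by omega) (by omega) (by omega)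
    exact absurd (C.sU (Rc hx1 (nb1i C hx1) rfl) hab) (by omega)
  have hcb : R (4*s) (4*s-1) := Rc hz rfl h2
  by_cases hvb : v = 4*s-1
  · exact absurd (sc1 C hs1 hsB hu hvb hcb) id
  -- b_s → a_s : block s descended
  obtain ⟨w, hw⟩ := C.ex_succ (x := 4*s-1) (by omega) (by omega) (by omega)
  rcases nbBo C (i := s) (by omega) (by omega) hw (by omega) with h3 | h3
  swap
  · exact absurd (no2 C (Rc hw rfl h3) hcb) id
  have hba : R (4*s-1) (4*s-2) := Rc hw rfl h3
  have hDs : Desc R s := ⟨hdc, hcb, hba⟩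
  obtain ⟨hDall, haB1⟩ := wrap C (by omega) (by omega) hs1 hsB hDs
  have hDB := hDall B hsB le_rfl
  by_cases hv1 : v = 1
  · -- legal iff s = 1
    by_cases hs1' : s = 1
    · exact Or.inr (Or.inl ⟨s, hs1, hsB, hu, by omega⟩)
    · exfalso
      obtain ⟨hcB5, _, _, _⟩ := backv1 C hv1 (by omega) (by omega)
      exact absurd (C.sU hcB5 hDB.2.1) (by omega)
  -- v ≠ 1 : continue 1 → 2
  obtain ⟨y1, hy1⟩ := C.ex_succ (x := 1) (by omega) (by omega) (by omega)
  have h12 : R 1 2 := Rc hy1 rfl (nb1o C hy1)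
  by_cases hs1' : s = 1
  · -- contradiction: 2 has predecessors 1 and 3
    exact absurd (C.pU h12 (Rc (hDall 1 (by omega) (by omega)).2.2 (show 4*1-1 = 3 by omega) (show 4*1-2 = 2 by omega)))
      (by omega)
  obtain ⟨y2, hy2⟩ := C.ex_succ (x := 2) (by omega) (by omega) (by omega)
  rcases nbAo C (i := 1) (by omega) (by omega) hy2 (by omega) with h4 | ⟨_, h4⟩ | ⟨h4, _⟩
  · -- α : ascend from block 1
    have hAsc := alpha C h12 (Rc hy2 rfl h4)
    have hout := climb C (t0 := 1) (by omega) 1 le_rfl (by omega)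
      (fun t' h1 h2 => (show (1:ℕ) = t' by omega) ▸ hAsc)
      (fun t' h1 h2 => absurd (lt_of_lt_of_le h2 h1) (by omega))
    rcases hout with ⟨t, ht1, htB, hvt, hut, _, _⟩ | ⟨t, ht1, _, hut, _⟩ |
      ⟨t, ht1, _, hvt, hut, _⟩ | ⟨hv4, hA4, _⟩ | ⟨_, _, hdB, _, _⟩
    · exact Or.inr (Or.inl ⟨s, hs1, hsB, hu, by omega⟩)
    · omega
    · omega
    · exact absurd (no2 C (hA4 B (by omega) le_rfl).1 hDB.2.2) id
    · exact absurd (C.pU hdB hDB.2.2) (by omega)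
  · -- β : 1 → 2 → 9
    exfalso
    obtain ⟨_, hcB5, _, _⟩ := beta C (by omega) (by omega) h12 (Rc hy2 rfl h4)
    exact absurd (C.sU hcB5 hDB.2.1) (by omega)
  · omega

end

section
variable {B : ℕ} {R : ℕ → ℕ → Prop} {idx : ℕ → ℕ} {u v : ℕ}

/-- MASTER, case `u = b_s`, first step `u → a_s`, `s = B`. -/
lemma masterM2BAsB (C : Ctx B R idx u v) (hu : u = 4*B-1)
    (hua : R (4*B-1) (4*B-2)) (haB1 : R (4*B-2) 1) : Legal B u v := by
  have hB := C.hB; have hu2 := C.hu2; have hv2 := C.hv2; have huv := C.huv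
  by_cases hv1 : v = 1
  · exact absurd (sc4 C hu hv1 hua) id
  obtain ⟨y1, hy1⟩ := C.ex_succ (x := 1) (by omega) (by omega) (by omega)
  have h12 : R 1 2 := Rc hy1 rfl (nb1o C hy1)
  obtain ⟨y2, hy2⟩ := C.ex_succ (x := 2) (by omega) (by omega) (by omega)
  rcases nbAo C (i := 1) (by omega) (by omega) hy2 (by omega) with h4 | ⟨_, h4⟩ | ⟨h4, _⟩
  · -- α
    exfalso
    have hAsc := alpha C h12 (Rc hy2 rfl h4)
    have hout := climb C (t0 := 1) (by omega) 1 le_rfl (by omega)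
      (fun t' h1 h2 => (show (1:ℕ) = t' by omega) ▸ hAsc)
      (fun t' h1 h2 => absurd (lt_of_lt_of_le h2 h1) (by omega))
    rcases hout with ⟨t, ht1, htB, hvt, hut, _, _⟩ | ⟨t, ht1, ht2, hut, _⟩ |
      ⟨t, ht1, _, hvt, hut, _⟩ | ⟨hv4, hA4, _⟩ | ⟨_, _, hdB, _, _⟩
    · omega
    · omega
    · omega
    · exact absurd (C.sU (hA4 B (by omega) le_rfl).1 haB1) (by omega)
    · exact absurd (C.pU hdB hua) (by omega)
  · -- β : legal end at 3
    obtain ⟨hv3, _, _, _⟩ := beta C (by omega) (by omega) h12 (Rc hy2 rfl h4)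
    exact Or.inr (Or.inr (Or.inr ⟨hu, hv3⟩))
  · omega

/-- MASTER, case `u = b_s`, first step `u → a_s`, `s < B`. -/
lemma masterM2BAlt (C : Ctx B R idx u v) {s : ℕ} (hs1 : 1 ≤ s) (hsB : s + 1 ≤ B)
    (hu : u = 4*s-1) (hua : R (4*s-1) (4*s-2)) (hlink : R (4*s-2) (4*s+5)) :
    Legal B u v := by
  have hB := C.hB; have hu2 := C.hu2; have hv2 := C.hv2; have huv := C.huv
  by_cases hvd : v = 4*s+5
  · exfalso
    obtain ⟨x, hx⟩ := C.ex_pred (x := 4*s+4) (by omega) (by omega) (by omega)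
    rcases nbCi C (i := s+1) (by omega) (by omega) hx (by omega) with h | h
    swap
    · exact nvE C hx (by omega)
    have hbc2 : R (4*s+3) (4*s+4) := Rc hx (show x = 4*s+3 by omega) rfl
    obtain ⟨z, hz⟩ := C.ex_succ (x := 4*s+4) (by omega) (by omega) (by omega)
    rcases nbCo C (i := s+1) (by omega) (by omega) hz (by omega) with h2 | h2 | ⟨hB2, h2⟩
    · exact no2 C (Rc hz rfl (show z = 4*s+3 by omega)) hbc2
    · exact absurd (C.pU (Rc hz rfl (show z = 4*s+5 by omega)) hlink) (by omega)
    · -- exotic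
      have hc5 : R (4*s+4) 5 := Rc hz rfl h2
      obtain ⟨x2, hx2⟩ := C.ex_pred (x := 4*s+3) (by omega) (by omega) (by omega)
      rcases nbBi C (i := s+1) (by omega) (by omega) hx2 (by omega) with h3 | h3
      swap
      · exact absurd (C.sU (Rc hx2 (show x2 = 4*s+4 by omega) rfl) hc5) (by omega)
      have hab2 : R (4*s+2) (4*s+3) := Rc hx2 (show x2 = 4*s+2 by omega) rfl
      obtain ⟨x3, hx3⟩ := C.ex_pred (x := 1) (by omega) (by omega) (by omega)
      exact absurd (C.sU (Rc hx3 (show x3 = 4*s+2 by have h9 := nb1i C hx3; omega) rfl) hab2)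
        (by omega)
  obtain ⟨y3, hy3⟩ := C.ex_succ (x := 4*s+5) (by omega) (by omega) (by omega)
  rcases nbDo C (i := s+1) (by omega) (by omega) hy3 (by omega) with h | ⟨hB2, h⟩
  swap
  · -- skip d_{s+1} → a_{s+2} : c_{s+1} stranded
    exfalso
    obtain ⟨x, hx⟩ := C.ex_pred (x := 4*s+4) (by omega) (by omega) (by omega)
    rcases nbCi C (i := s+1) (by omega) (by omega) hx (by omega) with h2 | h2
    · have hbc2 : R (4*s+3) (4*s+4) := Rc hx (show x = 4*s+3 by omega) rfl
      obtain ⟨z, hz⟩ := C.ex_succ (x := 4*s+4) (by omega) (by omega) (by omega)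
      rcases nbCo C (i := s+1) (by omega) (by omega) hz (by omega) with h3 | h3 | ⟨h3, _⟩
      · exact no2 C (Rc hz rfl (show z = 4*s+3 by omega)) hbc2
      · exact absurd (C.pU (Rc hz rfl (show z = 4*s+5 by omega)) hlink) (by omega)
      · omega
    · exact absurd (C.sU (Rc hx (show x = 4*s+5 by omega) rfl) (Rc hy3 rfl h)) (by omega)
  have hdc2 : R (4*s+5) (4*s+4) := Rc hy3 rfl (show y3 = 4*s+4 by omega)
  obtain ⟨z, hz⟩ := C.ex_succ (x := 4*s+4) (by omega) (by omega) (by omega)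
  rcases nbCo C (i := s+1) (by omega) (by omega) hz (by omega) with h2 | h2 | ⟨hB2, h2⟩
  rotate_left
  · exact absurd (no2 C (Rc hz rfl (show z = 4*s+5 by omega)) hdc2) id
  · -- exotic
    exfalso
    have hc5 : R (4*s+4) 5 := Rc hz rfl h2
    obtain ⟨x2, hx2⟩ := C.ex_pred (x := 4*s+3) (by omega) (by omega) (by omega)
    rcases nbBi C (i := s+1) (by omega) (by omega) hx2 (by omega) with h3 | h3
    swap
    · exact absurd (C.sU (Rc hx2 (show x2 = 4*s+4 by omega) rfl) hc5) (by omega)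
    have hab2 : R (4*s+2) (4*s+3) := Rc hx2 (show x2 = 4*s+2 by omega) rfl
    obtain ⟨x3, hx3⟩ := C.ex_pred (x := 1) (by omega) (by omega) (by omega)
    exact absurd (C.sU (Rc hx3 (show x3 = 4*s+2 by have h9 := nb1i C hx3; omega) rfl) hab2)
      (by omega)
  have hcb2 : R (4*s+4) (4*s+3) := Rc hz rfl (show z = 4*s+3 by omega)
  by_cases hvb : v = 4*s+3
  · exact Or.inr (Or.inr (Or.inl ⟨s, hs1, hsB, hu, hvb⟩))
  obtain ⟨w, hw⟩ := C.ex_succ (x := 4*s+3) (by omega) (by omega) (by omega)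
  rcases nbBo C (i := s+1) (by omega) (by omega) hw (by omega) with h3 | h3
  swap
  · exact absurd (no2 C (Rc hw rfl (show w = 4*s+4 by omega)) hcb2) id
  have hba2 : R (4*s+3) (4*s+2) := Rc hw rfl (show w = 4*s+2 by omega)
  have hDs : Desc R (s+1) := ⟨Rc hdc2 (by omega) (by omega), Rc hcb2 (by omega) (by omega),
    Rc hba2 (by omega) (by omega)⟩
  obtain ⟨hDall, haB1⟩ := wrap C (by omega) (by omega) (by omega) hsB hDs
  have hDB := hDall B hsB le_rfl
  by_cases hv1 : v = 1
  · exfalso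
    by_cases hs1' : s = 1
    · -- u = 3 : c_1 = 4 is stranded
      obtain ⟨x, hx⟩ := C.ex_pred (x := 4) (by omega) (by omega) (by omega)
      rcases nbCi C (i := 1) (by omega) (by omega) hx (by omega) with h4 | h4
      · exact absurd (C.sU (Rc hx (show x = 3 by omega) rfl)
          (Rc hua (show 4*s-1 = 3 by omega) (show 4*s-2 = 2 by omega))) (by omega)
      have hdc1 : R 5 4 := Rc hx (show x = 5 by omega) rfl
      obtain ⟨z2, hz2⟩ := C.ex_succ (x := 4) (by omega) (by omega) (by omega)
      rcases nbCo C (i := 1) (by omega) (by omega) hz2 (by omega) with h5 | h5 | ⟨h5, _⟩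
      · exact nuE C hz2 (by omega)
      · exact no2 C (Rc hz2 rfl (show z2 = 5 by omega)) hdc1
      · omega
    · obtain ⟨hcB5, _, _, _⟩ := backv1 C hv1 (by omega) (by omega)
      exact absurd (C.sU hcB5 hDB.2.1) (by omega)
  obtain ⟨y1, hy1⟩ := C.ex_succ (x := 1) (by omega) (by omega) (by omega)
  have h12 : R 1 2 := Rc hy1 rfl (nb1o C hy1)
  by_cases hs1' : s = 1
  · exact absurd (C.pU h12 (Rc hua (show 4*s-1 = 3 by omega) (show 4*s-2 = 2 by omega)))
      (by omega)
  obtain ⟨y2, hy2⟩ := C.ex_succ (x := 2) (by omega) (by omega) (by omega)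
  rcases nbAo C (i := 1) (by omega) (by omega) hy2 (by omega) with h4 | ⟨_, h4⟩ | ⟨h4, _⟩
  · -- α
    have hAsc := alpha C h12 (Rc hy2 rfl h4)
    have hout := climb C (t0 := 1) (by omega) 1 le_rfl (by omega)
      (fun t' h1 h2 => (show (1:ℕ) = t' by omega) ▸ hAsc)
      (fun t' h1 h2 => absurd (lt_of_lt_of_le h2 h1) (by omega))
    exfalso
    rcases hout with ⟨t, ht1, htB, hvt, hut, _, _⟩ | ⟨t, ht1, ht2, hut, _, _, _, _, huc2, _⟩ |
      ⟨t, ht1, _, hvt, hut, _⟩ | ⟨hv4, hA4, _⟩ | ⟨_, _, hdB, _, _⟩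
    · omega
    · exact absurd (C.sU (Rc huc2 (show 4*t+3 = 4*s-1 by omega) rfl) hua) (by omega)
    · omega
    · exact absurd (C.sU (hA4 s hs1 (by omega)).1 hlink) (by omega)
    · exact absurd (C.pU hdB hDB.2.2) (by omega)
  · -- β
    exfalso
    obtain ⟨_, hcB5, _, _⟩ := beta C (by omega) (by omega) h12 (Rc hy2 rfl h4)
    exact absurd (C.sU hcB5 hDB.2.1) (by omega)
  · omega

end

section
variable {B : ℕ} {R : ℕ → ℕ → Prop} {idx : ℕ → ℕ} {u v : ℕ}

/-- case `u = b_B` with `u → c_B → d_1`: impossible. -/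
lemma masterM2BCex (C : Ctx B R idx u v) (hu : u = 4*B-1)
    (hucs : R (4*B-1) (4*B)) (hc5 : R (4*B) 5) : False := by
  have hB := C.hB; have hu2 := C.hu2; have hv2 := C.hv2; have huv := C.huv
  -- v = 4B+1
  have hvd : v = 4*B+1 := by
    by_contra hvd
    obtain ⟨y, hy⟩ := C.ex_succ (x := 4*B+1) (by omega) (by omega) (by omega)
    rcases nbDo C (i := B) (by omega) (by omega) hy (by omega) with h | ⟨h, _⟩
    · exact absurd (C.pU (Rc hy rfl h) hucs) (by omega)
    · omega
  -- successor of 5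
  obtain ⟨y5, hy5⟩ := C.ex_succ (x := 5) (by omega) (by omega) (by omega)
  rcases nbDo C (i := 1) (by omega) (by omega) hy5 (by omega) with h | ⟨hB2, h⟩
  · -- 5 → 4 : descend block 1 and chain
    have h54 : R 5 4 := Rc hy5 rfl h
    obtain ⟨z4, hz4⟩ := C.ex_succ (x := 4) (by omega) (by omega) (by omega)
    rcases nbCo C (i := 1) (by omega) (by omega) hz4 (by omega) with h2 | h2 | ⟨h2, _⟩
    rotate_left
    · exact no2 C (Rc hz4 rfl (show z4 = 5 by omega)) h54
    · omega
    have h43 : R 4 3 := Rc hz4 rfl h2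
    obtain ⟨w3, hw3⟩ := C.ex_succ (x := 3) (by omega) (by omega) (by omega)
    rcases nbBo C (i := 1) (by omega) (by omega) hw3 (by omega) with h3 | h3
    swap
    · exact no2 C (Rc hw3 rfl (show w3 = 4 by omega)) h43
    have h32 : R 3 2 := Rc hw3 rfl h3
    have hD1 : Desc R 1 := ⟨Rc h54 (by omega) (by omega), Rc h43 (by omega) (by omega),
      Rc h32 (by omega) (by omega)⟩
    have hD := chainDesc C (by omega) hD1 (B-1) (by omega) (by omega)
    obtain ⟨x, hx⟩ := C.ex_pred (x := 4*B-2) (by omega) (by omega) (by omega)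
    rcases nbAi C (i := B) (by omega) (by omega) hx (by omega) with h4 | h4
    · exact absurd (C.sU (Rc hx h4 rfl) hucs) (by omega)
    · exact absurd (C.sU (Rc hx (show x = 4*B-3 by omega) rfl)
        (Rc hD.1 (show 4*(B-1)+1 = 4*B-3 by omega) (show 4*(B-1) = 4*B-4 by omega))) (by omega)
  · -- 5 → 6
    have h56 : R 5 6 := Rc hy5 rfl h
    obtain ⟨z6, hz6⟩ := C.ex_succ (x := 6) (by omega) (by omega) (by omega)
    rcases nbAo C (i := 2) (by omega) (by omega) hz6 (by omega) with h2 | ⟨hB3, h2⟩ | ⟨hB2', h2⟩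
    · -- 6 → 7
      have h67 : R 6 7 := Rc hz6 rfl (show z6 = 7 by omega)
      by_cases hBe2 : B = 2
      · exact nuE C h67 (by omega)
      -- B ≥ 3 : ascend from block 2
      obtain ⟨w, hw⟩ := C.ex_succ (x := 7) (by omega) (by omega) (by omega)
      rcases nbBo C (i := 2) (by omega) (by omega) hw (by omega) with h3 | h3
      · exact no2 C (Rc hw rfl (show w = 6 by omega)) h67
      have h78 : R 7 8 := Rc hw rfl (show w = 8 by omega)
      obtain ⟨z8, hz8⟩ := C.ex_succ (x := 8) (by omega) (by omega) (by omega)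
      rcases nbCo C (i := 2) (by omega) (by omega) hz8 (by omega) with h4 | h4 | ⟨h4, _⟩
      rotate_left
      rotate_left
      · omega
      · exact no2 C (Rc hz8 rfl (show z8 = 7 by omega)) h78
      have h89 : R 8 9 := Rc hz8 rfl (show z8 = 9 by omega)
      have hAsc2 : Asc R 2 := ⟨Rc h67 (by omega) (by omega), Rc h78 (by omega) (by omega),
        Rc h89 (by omega) (by omega)⟩
      have hout := climb C (t0 := 2) (by omega) 2 le_rfl (by omega)
        (fun t' h1 h2 => (show (2:ℕ) = t' by omega) ▸ hAsc2)
        (fun t' h1 h2 => absurd (lt_of_lt_of_le h2 h1) (by omega))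
      rcases hout with ⟨t, ht1, htB, hvt, hut, _, _⟩ | ⟨t, ht1, ht2, hut, _⟩ |
        ⟨t, ht1, _, hvt, hut, _⟩ | ⟨hv4, hA4, _⟩ | ⟨hA7, _, hdB7, haB17, ht7⟩
      · omega
      · omega
      · omega
      · exact nuE C (hA4 B (by omega) le_rfl).1 (by omega)
      · -- O7 : wrap to 1 then block 1 dies
        obtain ⟨y1, hy1⟩ := C.ex_succ (x := 1) (by omega) (by omega) (by omega)
        have h12 : R 1 2 := Rc hy1 rfl (nb1o C hy1)
        obtain ⟨y2, hy2⟩ := C.ex_succ (x := 2) (by omega) (by omega) (by omega)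
        rcases nbAo C (i := 1) (by omega) (by omega) hy2 (by omega)
          with h5 | ⟨_, h5⟩ | ⟨h5, _⟩
        · have h23 : R 2 3 := Rc hy2 rfl h5
          obtain ⟨w2, hw2⟩ := C.ex_succ (x := 3) (by omega) (by omega) (by omega)
          rcases nbBo C (i := 1) (by omega) (by omega) hw2 (by omega) with h6 | h6
          · exact absurd (C.pU (Rc hw2 rfl h6) h12) (by omega)
          have h34 : R 3 4 := Rc hw2 rfl (show w2 = 4 by omega)
          obtain ⟨z9, hz9⟩ := C.ex_succ (x := 4) (by omega) (by omega) (by omega)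
          rcases nbCo C (i := 1) (by omega) (by omega) hz9 (by omega) with h7 | h7 | ⟨h7, _⟩
          · exact no2 C (Rc hz9 rfl (show z9 = 3 by omega)) h34
          · exact absurd (C.pU (Rc hz9 rfl (show z9 = 5 by omega)) hc5) (by omega)
          · omega
        · exact absurd (C.pU (Rc hy2 rfl h5) (hA7 2 le_rfl (by omega)).2.2) (by omega)
        · omega
    · -- 6 → 13
      have h613 : R 6 13 := Rc hz6 rfl (show z6 = 13 by omega)
      by_cases hBe3 : B = 3
      · -- B = 3 : b_2 = 7 is stranded
        obtain ⟨x, hx⟩ := C.ex_pred (x := 7) (by omega) (by omega) (by omega)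
        rcases nbBi C (i := 2) (by omega) (by omega) hx (by omega) with h3 | h3
        · exact absurd (C.sU (Rc hx (show x = 6 by omega) rfl) h613) (by omega)
        have hcb' : R 8 7 := Rc hx (show x = 8 by omega) rfl
        obtain ⟨x2, hx2⟩ := C.ex_pred (x := 8) (by omega) (by omega) (by omega)
        rcases nbCi C (i := 2) (by omega) (by omega) hx2 (by omega) with h4 | h4
        · exact no2 C (Rc hx2 (show x2 = 7 by omega) rfl) hcb'
        have hdc' : R 9 8 := Rc hx2 (show x2 = 9 by omega) rfl
        obtain ⟨w2, hw2⟩ := C.ex_succ (x := 7) (by omega) (by omega) (by omega)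
        rcases nbBo C (i := 2) (by omega) (by omega) hw2 (by omega) with h5 | h5
        · exact absurd (C.pU (Rc hw2 rfl (show w2 = 6 by omega)) h56) (by omega)
        · exact absurd (C.pU (Rc hw2 rfl (show w2 = 8 by omega)) hdc') (by omega)
      · -- B ≥ 4 : descend from block 3
        obtain ⟨y13, hy13⟩ := C.ex_succ (x := 13) (by omega) (by omega) (by omega)
        rcases nbDo C (i := 3) (by omega) (by omega) hy13 (by omega) with h3 | ⟨_, h3⟩
        swap
        · -- skip 13 → 14
          obtain ⟨x, hx⟩ := C.ex_pred (x := 12) (by omega) (by omega) (by omega)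
          rcases nbCi C (i := 3) (by omega) (by omega) hx (by omega) with h4 | h4
          · have hbc3 : R 11 12 := Rc hx (show x = 11 by omega) rfl
            obtain ⟨z, hz⟩ := C.ex_succ (x := 12) (by omega) (by omega) (by omega)
            rcases nbCo C (i := 3) (by omega) (by omega) hz (by omega) with h5 | h5 | ⟨h5, _⟩
            · exact no2 C (Rc hz rfl (show z = 11 by omega)) hbc3
            · exact absurd (C.pU (Rc hz rfl (show z = 13 by omega)) h613) (by omega)
            · omega
          · exact absurd (C.sU (Rc hx (show x = 13 by omega) rfl) (Rc hy13 rfl h3)) (by omega)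
        have h1312 : R 13 12 := Rc hy13 rfl (show y13 = 12 by omega)
        obtain ⟨z12, hz12⟩ := C.ex_succ (x := 12) (by omega) (by omega) (by omega)
        rcases nbCo C (i := 3) (by omega) (by omega) hz12 (by omega) with h4 | h4 | ⟨h4, _⟩
        rotate_left
        · exact no2 C (Rc hz12 rfl (show z12 = 13 by omega)) h1312
        · omega
        have h1211 : R 12 11 := Rc hz12 rfl h4
        obtain ⟨w, hw⟩ := C.ex_succ (x := 11) (by omega) (by omega) (by omega)
        rcases nbBo C (i := 3) (by omega) (by omega) hw (by omega) with h5 | h5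
        swap
        · exact no2 C (Rc hw rfl (show w = 12 by omega)) h1211
        have h1110 : R 11 10 := Rc hw rfl (show w = 10 by omega)
        have hD3 : Desc R 3 := ⟨Rc h1312 (by omega) (by omega), Rc h1211 (by omega) (by omega),
          Rc h1110 (by omega) (by omega)⟩
        have hD := chainDesc C (by omega) hD3 (B-1) (by omega) (by omega)
        obtain ⟨x, hx⟩ := C.ex_pred (x := 4*B-2) (by omega) (by omega) (by omega)
        rcases nbAi C (i := B) (by omega) (by omega) hx (by omega) with h6 | h6
        · exact absurd (C.sU (Rc hx h6 rfl) hucs) (by omega)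
        · exact absurd (C.sU (Rc hx (show x = 4*B-3 by omega) rfl)
            (Rc hD.1 (show 4*(B-1)+1 = 4*B-3 by omega) (show 4*(B-1) = 4*B-4 by omega))) (by omega)
    · -- B = 2 and 6 → 1
      have h61 : R 6 1 := Rc hz6 rfl h2
      obtain ⟨y1, hy1⟩ := C.ex_succ (x := 1) (by omega) (by omega) (by omega)
      have h12 : R 1 2 := Rc hy1 rfl (nb1o C hy1)
      obtain ⟨y2, hy2⟩ := C.ex_succ (x := 2) (by omega) (by omega) (by omega)
      rcases nbAo C (i := 1) (by omega) (by omega) hy2 (by omega) with h5 | ⟨_, h5⟩ | ⟨h5, _⟩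
      · -- 2 → 3
        have h23 : R 2 3 := Rc hy2 rfl h5
        obtain ⟨w2, hw2⟩ := C.ex_succ (x := 3) (by omega) (by omega) (by omega)
        rcases nbBo C (i := 1) (by omega) (by omega) hw2 (by omega) with h6 | h6
        · exact absurd (C.pU (Rc hw2 rfl h6) h12) (by omega)
        have h34 : R 3 4 := Rc hw2 rfl (show w2 = 4 by omega)
        obtain ⟨z9, hz9⟩ := C.ex_succ (x := 4) (by omega) (by omega) (by omega)
        rcases nbCo C (i := 1) (by omega) (by omega) hz9 (by omega) with h7 | h7 | ⟨h7, _⟩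
        · exact no2 C (Rc hz9 rfl (show z9 = 3 by omega)) h34
        · exact absurd (C.pU (Rc hz9 rfl (show z9 = 5 by omega)) hc5) (by omega)
        · omega
      · -- 2 → 9
        have h29 : R 2 9 := Rc hy2 rfl h5
        obtain ⟨x, hx⟩ := C.ex_pred (x := 3) (by omega) (by omega) (by omega)
        rcases nbBi C (i := 1) (by omega) (by omega) hx (by omega) with h6 | h6
        · exact absurd (C.sU (Rc hx h6 rfl) h29) (by omega)
        have h43 : R 4 3 := Rc hx h6 rfl
        obtain ⟨w2, hw2⟩ := C.ex_succ (x := 3) (by omega) (by omega) (by omega)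
        rcases nbBo C (i := 1) (by omega) (by omega) hw2 (by omega) with h7 | h7
        · exact absurd (C.pU (Rc hw2 rfl h7) h12) (by omega)
        · exact no2 C (Rc hw2 rfl (show w2 = 4 by omega)) h43
      · omega

end

section
variable {B : ℕ} {R : ℕ → ℕ → Prop} {idx : ℕ → ℕ} {u v : ℕ}

/-- MASTER, case `u = b_s` with first step `u → c_s`. -/
lemma masterM2BC (C : Ctx B R idx u v) {s : ℕ} (hs1 : 1 ≤ s) (hsB : s ≤ B)
    (hu : u = 4*s-1) (hucs : R (4*s-1) (4*s)) : Legal B u v := by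
  have hB := C.hB; have hu2 := C.hu2; have hv2 := C.hv2; have huv := C.huv
  obtain ⟨z, hz⟩ := C.ex_succ (x := 4*s) (by omega) (by omega) (by omega)
  rcases nbCo C (i := s) (by omega) (by omega) hz (by omega) with h | h | ⟨hsBe, h⟩
  · exact absurd (nuE C hz (by omega)) id
  swap
  · -- exotic (s = B)
    exact absurd (masterM2BCex C (by omega)
      (Rc hucs (show 4*s-1 = 4*B-1 by omega) (show 4*s = 4*B by omega))
      (Rc hz (show 4*s = 4*B by omega) h)) id
  have hcd : R (4*s) (4*s+1) := Rc hz rfl h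
  by_cases hvd : v = 4*s+1
  · exact absurd (sc2 C hs1 hsB hu hvd hcd) id
  obtain ⟨y, hy⟩ := C.ex_succ (x := 4*s+1) (by omega) (by omega) (by omega)
  rcases nbDo C (i := s) (by omega) (by omega) hy (by omega) with h2 | ⟨hsB', h2⟩
  · exact absurd (no2 C (Rc hy rfl h2) hcd) id
  have hda : R (4*s+1) (4*s+2) := Rc hy rfl h2
  obtain ⟨y2, hy2⟩ := C.ex_succ (x := 4*s+2) (by omega) (by omega) (by omega)
  rcases nbAo C (i := s+1) (by omega) (by omega) hy2 (by omega)
    with h3 | ⟨hsB2, h3⟩ | ⟨hsB2, h3⟩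
  · -- BB : a_{s+1} → b_{s+1}
    have hab2 : R (4*s+2) (4*s+3) := Rc hy2 rfl (show y2 = 4*s+3 by omega)
    by_cases hvb : v = 4*s+3
    · exact Or.inr (Or.inr (Or.inl ⟨s, hs1, hsB', hu, hvb⟩))
    obtain ⟨w, hw⟩ := C.ex_succ (x := 4*s+3) (by omega) (by omega) (by omega)
    rcases nbBo C (i := s+1) (by omega) (by omega) hw (by omega) with h4 | h4
    · exact absurd (C.pU (Rc hw rfl (show w = 4*s+2 by omega)) hda) (by omega)
    have hbc2 : R (4*s+3) (4*s+4) := Rc hw rfl (show w = 4*s+4 by omega)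
    obtain ⟨z2, hz2⟩ := C.ex_succ (x := 4*s+4) (by omega) (by omega) (by omega)
    rcases nbCo C (i := s+1) (by omega) (by omega) hz2 (by omega) with h5 | h5 | ⟨hsBe2, h5⟩
    · exact absurd (no2 C (Rc hz2 rfl (show z2 = 4*s+3 by omega)) hbc2) id
    swap
    · -- exotic (s+1 = B) : vertex 1 stranded
      exfalso
      obtain ⟨x1, hx1⟩ := C.ex_pred (x := 1) (by omega) (by omega) (by omega)
      exact absurd (C.sU (Rc hx1 (show x1 = 4*s+2 by have h9 := nb1i C hx1; omega) rfl)
        hab2) (by omega)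
    have hcd2 : R (4*s+4) (4*s+5) := Rc hz2 rfl (show z2 = 4*s+5 by omega)
    by_cases hvd2 : v = 4*s+5
    · exact absurd (sc3 C hs1 hsB' hu hvd2 hcd hcd2) id
    have hAsc2 : Asc R (s+1) := ⟨Rc hab2 (by omega) (by omega),
      Rc hbc2 (by omega) (by omega), Rc hcd2 (by omega) (by omega)⟩
    have hout := climb C (t0 := s+1) (by omega) (s+1) le_rfl hsB'
      (fun t' h1 h2 => (show s+1 = t' by omega) ▸ hAsc2)
      (fun t' h1 h2 => absurd (lt_of_lt_of_le h2 h1) (by omega))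
    exfalso
    rcases hout with ⟨t, ht1, htB, hvt, hut, _, _⟩ | ⟨t, ht1, ht2, hut, _⟩ |
      ⟨t, ht1, _, hvt, hut, _⟩ | ⟨hv4, hA4, _⟩ | ⟨hA7, hL7, hdB7, haB17, ht7⟩
    · omega
    · omega
    · omega
    · obtain ⟨x1, hx1⟩ := C.ex_pred (x := 1) (by omega) (by omega) (by omega)
      exact absurd (C.sU (Rc hx1 (nb1i C hx1) rfl) (hA4 B (by omega) le_rfl).1) (by omega)
    · -- O7
      by_cases hv1 : v = 1
      · by_cases hs1' : s = 1
        · -- u = 3 : vertex 2 has no predecessor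
          obtain ⟨x, hx⟩ := C.ex_pred (x := 2) (by omega) (by omega) (by omega)
          rcases nbAi C (i := 1) (by omega) (by omega) hx (by omega) with h6 | h6
          · exact absurd (C.sU (Rc hx (show x = 3 by omega) rfl)
              (Rc hucs (show 4*s-1 = 3 by omega) (show 4*s = 4 by omega))) (by omega)
          · exact nvE C hx (by omega)
        · obtain ⟨hcB5, _, _, _⟩ := backv1 C hv1 (by omega) (by omega)
          exact predCB C hcB5 haB17
            (Rc (hA7 (B-1) (by omega) le_rfl).1 (show 4*(B-1)-2 = 4*B-6 by omega)
              (show 4*(B-1)-1 = 4*B-5 by omega)) (by omega) (by omega)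
      obtain ⟨y1, hy1⟩ := C.ex_succ (x := 1) (by omega) (by omega) (by omega)
      have h12 : R 1 2 := Rc hy1 rfl (nb1o C hy1)
      obtain ⟨y7, hy7⟩ := C.ex_succ (x := 2) (by omega) (by omega) (by omega)
      rcases nbAo C (i := 1) (by omega) (by omega) hy7 (by omega) with h6 | ⟨_, h6⟩ | ⟨h6, _⟩
      · -- α
        have h23 : R 2 3 := Rc hy7 rfl h6
        by_cases hs1' : s = 1
        · exact nuE C h23 (by omega)
        have hAsc := alpha C h12 h23
        have hout2 := climb C (t0 := 1) (by omega) 1 le_rfl (by omega)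
          (fun t' h1 h2 => (show (1:ℕ) = t' by omega) ▸ hAsc)
          (fun t' h1 h2 => absurd (lt_of_lt_of_le h2 h1) (by omega))
        rcases hout2 with ⟨t, ht1', htB', hvt', hut', _, _⟩ |
          ⟨t, ht1', ht2', hut', _, _, _, hskip', _, _⟩ |
          ⟨t, ht1', _, hvt', hut', _⟩ | ⟨hv4', hA4', _⟩ | ⟨hA7', _, _, _, _⟩
        · omega
        · exact absurd (C.pU (Rc hskip' rfl (show 4*t+9 = 4*s+5 by omega)) hcd2) (by omega)
        · omega
        · exact nuE C (hA4' s hs1 hsB).1 (by omega)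
        · exact nuE C (hA7' s hs1 (by omega)).1 (by omega)
      · -- β-ish : 2 → 9
        have h29 : R 2 9 := Rc hy7 rfl h6
        by_cases hs1' : s = 1
        · exact absurd (C.pU h29 (Rc (hA7 2 (by omega) (by omega)).2.2
            (show 4*2 = 8 by omega) (show 4*2+1 = 9 by omega))) (by omega)
        obtain ⟨x, hx⟩ := C.ex_pred (x := 3) (by omega) (by omega) (by omega)
        rcases nbBi C (i := 1) (by omega) (by omega) hx (by omega) with h7 | h7
        · exact absurd (C.sU (Rc hx h7 rfl) h29) (by omega)
        have hcb1 : R 4 3 := Rc hx h7 rfl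
        by_cases hv3 : v = 3
        · obtain ⟨x2, hx2⟩ := C.ex_pred (x := 4) (by omega) (by omega) (by omega)
          rcases nbCi C (i := 1) (by omega) (by omega) hx2 (by omega) with h8 | h8
          · exact nvE C hx2 (by omega)
          have hdc1 : R 5 4 := Rc hx2 (show x2 = 5 by omega) rfl
          obtain ⟨x3, hx3⟩ := C.ex_pred (x := 5) (by omega) (by omega) (by omega)
          rcases nbDi C (i := 1) (by omega) (by omega) hx3 (by omega)
            with h9 | ⟨h9, _⟩ | ⟨_, h9⟩
          · exact absurd (no2 C (Rc hx3 h9 rfl) hdc1) id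
          · omega
          · exact predCB C (Rc hx3 h9 rfl) haB17
              (Rc (hA7 (B-1) (by omega) le_rfl).1 (show 4*(B-1)-2 = 4*B-6 by omega)
                (show 4*(B-1)-1 = 4*B-5 by omega)) (by omega) (by omega)
        · obtain ⟨w2, hw2⟩ := C.ex_succ (x := 3) (by omega) (by omega) (by omega)
          rcases nbBo C (i := 1) (by omega) (by omega) hw2 (by omega) with h8 | h8
          · exact absurd (C.pU (Rc hw2 rfl h8) h12) (by omega)
          · exact absurd (no2 C (Rc hw2 rfl (show w2 = 4 by omega)) hcb1) id
      · omega
  · -- skip : a_{s+1} → d_{s+2}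
    have hskip : R (4*s+2) (4*s+9) := Rc hy2 rfl h3
    obtain ⟨x, hx⟩ := C.ex_pred (x := 4*s+3) (by omega) (by omega) (by omega)
    rcases nbBi C (i := s+1) (by omega) (by omega) hx (by omega) with h4 | h4
    · exact absurd (C.sU (Rc hx (show x = 4*s+2 by omega) rfl) hskip) (by omega)
    have hcb2 : R (4*s+4) (4*s+3) := Rc hx (show x = 4*s+4 by omega) rfl
    by_cases hvb : v = 4*s+3
    · exact Or.inr (Or.inr (Or.inl ⟨s, hs1, by omega, hu, hvb⟩))
    exfalso
    obtain ⟨w, hw⟩ := C.ex_succ (x := 4*s+3) (by omega) (by omega) (by omega)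
    rcases nbBo C (i := s+1) (by omega) (by omega) hw (by omega) with h4 | h4
    · exact absurd (C.pU (Rc hw rfl (show w = 4*s+2 by omega)) hda) (by omega)
    · exact absurd (no2 C (Rc hw rfl (show w = 4*s+4 by omega)) hcb2) id
  · -- wrapA : s+1 = B and a_B → 1
    have haB1 : R (4*s+2) 1 := Rc hy2 rfl h3
    by_cases hv1 : v = 1
    · exact absurd (sc5 C hs1 (by omega) hu hv1 hcd hda) id
    obtain ⟨y1, hy1⟩ := C.ex_succ (x := 1) (by omega) (by omega) (by omega)
    have h12 : R 1 2 := Rc hy1 rfl (nb1o C hy1)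
    obtain ⟨y7, hy7⟩ := C.ex_succ (x := 2) (by omega) (by omega) (by omega)
    rcases nbAo C (i := 1) (by omega) (by omega) hy7 (by omega) with h6 | ⟨_, h6⟩ | ⟨h6, _⟩
    · -- α
      have h23 : R 2 3 := Rc hy7 rfl h6
      by_cases hs1' : s = 1
      · exact absurd (nuE C h23 (by omega)) id
      have hAsc := alpha C h12 h23
      have hout2 := climb C (t0 := 1) (by omega) 1 le_rfl (by omega)
        (fun t' h1 h2 => (show (1:ℕ) = t' by omega) ▸ hAsc)
        (fun t' h1 h2 => absurd (lt_of_lt_of_le h2 h1) (by omega))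
      rcases hout2 with ⟨t, ht1', htB', hvt', hut', _, _⟩ |
        ⟨t, ht1', ht2', hut', hA2, hL2, hlink2, hskip2, huc2, hcd2'⟩ |
        ⟨t, ht1', _, hvt', hut', _⟩ | ⟨hv4', hA4', _⟩ | ⟨hA7', _, _, _, _⟩
      · omega
      · -- the legal wrap-around: leads to v = b_B
        have hskipB : R (4*s-2) (4*B+1) := Rc hskip2 (show 4*t+2 = 4*s-2 by omega)
          (show 4*t+9 = 4*B+1 by omega)
        by_cases hvB1 : v = 4*B+1
        · -- impossible: c_B would be stranded
          exfalso
          obtain ⟨x, hx⟩ := C.ex_pred (x := 4*B) (by omega) (by omega) (by omega)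
          rcases nbCi C (i := B) (by omega) (by omega) hx (by omega) with h7 | h7
          · have hbcB' : R (4*B-1) (4*B) := Rc hx h7 rfl
            obtain ⟨x2, hx2⟩ := C.ex_pred (x := 4*B-1) (by omega) (by omega) (by omega)
            rcases nbBi C (i := B) (by omega) (by omega) hx2 (by omega) with h8 | h8
            · exact absurd (C.sU (Rc hx2 h8 rfl) (Rc haB1 (show 4*s+2 = 4*B-2 by omega)
                rfl)) (by omega)
            · exact no2 C (Rc hx2 h8 rfl) hbcB'
          · exact nvE C hx (by omega)
        obtain ⟨yB, hyB⟩ := C.ex_succ (x := 4*B+1) (by omega) (by omega) (by omega)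
        rcases nbDo C (i := B) (by omega) (by omega) hyB (by omega) with h7 | ⟨h7, _⟩
        swap
        · omega
        have hdcB : R (4*B+1) (4*B) := Rc hyB rfl h7
        obtain ⟨zB, hzB⟩ := C.ex_succ (x := 4*B) (by omega) (by omega) (by omega)
        rcases nbCo C (i := B) (by omega) (by omega) hzB (by omega) with h8 | h8 | ⟨_, h8⟩
        rotate_left
        · exact absurd (no2 C (Rc hzB rfl h8) hdcB) id
        · exact absurd (C.pU (Rc hzB rfl h8)
            (Rc (hA2 1 le_rfl (by omega)).2.2 (show 4*1 = 4 by omega)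
              (show 4*1+1 = 5 by omega))) (by omega)
        have hcbB : R (4*B) (4*B-1) := Rc hzB rfl h8
        by_cases hvbB : v = 4*B-1
        · exact Or.inr (Or.inr (Or.inl ⟨s, hs1, by omega, hu, by omega⟩))
        · exfalso
          obtain ⟨wB, hwB⟩ := C.ex_succ (x := 4*B-1) (by omega) (by omega) (by omega)
          rcases nbBo C (i := B) (by omega) (by omega) hwB (by omega) with h9 | h9
          · exact absurd (C.pU (Rc hwB rfl (show wB = 4*s+2 by omega)) hda) (by omega)
          · exact absurd (no2 C (Rc hwB rfl h9) hcbB) id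
      · omega
      · exact absurd (nuE C (hA4' s hs1 hsB).1 (by omega)) id
      · exact absurd (nuE C (hA7' s hs1 (by omega)).1 (by omega)) id
    · -- β-ish : 2 → 9
      have h29 : R 2 9 := Rc hy7 rfl h6
      by_cases hs1' : s = 1
      · -- B = 2, u = 3 : may legally end at 7
        have hB2 : B = 2 := by omega
        by_cases hv9 : v = 9
        · -- then b₂ = 7 is stranded
          exfalso
          obtain ⟨x, hx⟩ := C.ex_pred (x := 7) (by omega) (by omega) (by omega)
          rcases nbBi C (i := 2) (by omega) (by omega) hx (by omega) with h7 | h7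
          · exact absurd (C.sU (Rc hx (show x = 6 by omega) rfl)
              (Rc haB1 (show 4*s+2 = 6 by omega) rfl)) (by omega)
          have hcb' : R 8 7 := Rc hx (show x = 8 by omega) rfl
          obtain ⟨x2, hx2⟩ := C.ex_pred (x := 8) (by omega) (by omega) (by omega)
          rcases nbCi C (i := 2) (by omega) (by omega) hx2 (by omega) with h8 | h8
          · exact no2 C (Rc hx2 (show x2 = 7 by omega) rfl) hcb'
          · exact nvE C hx2 (by omega)
        obtain ⟨yB, hyB⟩ := C.ex_succ (x := 9) (by omega) (by omega) (by omega)
        rcases nbDo C (i := 2) (by omega) (by omega) hyB (by omega) with h7 | ⟨h7, _⟩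
        swap
        · omega
        have h98 : R 9 8 := Rc hyB rfl (show yB = 8 by omega)
        obtain ⟨zB, hzB⟩ := C.ex_succ (x := 8) (by omega) (by omega) (by omega)
        rcases nbCo C (i := 2) (by omega) (by omega) hzB (by omega) with h8 | h8 | ⟨_, h8⟩
        rotate_left
        · exact absurd (no2 C (Rc hzB rfl (show zB = 9 by omega)) h98) id
        · exact absurd (C.pU (Rc hzB rfl h8)
            (Rc hcd (show 4*s = 4 by omega) (show 4*s+1 = 5 by omega))) (by omega)
        have h87 : R 8 7 := Rc hzB rfl (show zB = 7 by omega)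
        by_cases hv7 : v = 7
        · exact Or.inr (Or.inr (Or.inl ⟨1, le_rfl, by omega, by omega, by omega⟩))
        · exfalso
          obtain ⟨w2, hw2⟩ := C.ex_succ (x := 7) (by omega) (by omega) (by omega)
          rcases nbBo C (i := 2) (by omega) (by omega) hw2 (by omega) with h9 | h9
          · exact absurd (C.pU (Rc hw2 rfl (show w2 = 6 by omega))
              (Rc hda (show 4*s+1 = 5 by omega) (show 4*s+2 = 6 by omega))) (by omega)
          · exact absurd (no2 C (Rc hw2 rfl (show w2 = 8 by omega)) h87) id
      exfalso
      by_cases hs2' : s = 2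
      · exact absurd (C.pU h29 (Rc hcd (show 4*s = 8 by omega) (show 4*s+1 = 9 by omega)))
          (by omega)
      -- s ≥ 3
      obtain ⟨x, hx⟩ := C.ex_pred (x := 3) (by omega) (by omega) (by omega)
      rcases nbBi C (i := 1) (by omega) (by omega) hx (by omega) with h7 | h7
      · exact absurd (C.sU (Rc hx h7 rfl) h29) (by omega)
      have hcb1 : R 4 3 := Rc hx h7 rfl
      by_cases hv3 : v = 3
      · have hD2 := enterDesc2 C (by omega) h29 (by omega) (by omega) (by omega)
        have hDs := chainDesc C (by omega) hD2 s (by omega) (by omega)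
        exact absurd (C.sU hDs.1 hda) (by omega)
      · obtain ⟨w2, hw2⟩ := C.ex_succ (x := 3) (by omega) (by omega) (by omega)
        rcases nbBo C (i := 1) (by omega) (by omega) hw2 (by omega) with h8 | h8
        · exact absurd (C.pU (Rc hw2 rfl h8) h12) (by omega)
        · exact absurd (no2 C (Rc hw2 rfl (show w2 = 4 by omega)) hcb1) id
    · omega

end

section
variable {B : ℕ} {R : ℕ → ℕ → Prop} {idx : ℕ → ℕ} {u v : ℕ}

/-- MASTER, case `u = b_s = 4s-1`. -/
lemma masterM2 (C : Ctx B R idx u v) {s : ℕ} (hs1 : 1 ≤ s) (hsB : s ≤ B)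
    (hu : u = 4*s-1) : Legal B u v := by
  have hB := C.hB; have hu2 := C.hu2; have hv2 := C.hv2; have huv := C.huv
  obtain ⟨y, hy⟩ := C.ex_succ (x := 4*s-1) (by omega) (by omega) (by omega)
  rcases nbBo C (i := s) (by omega) (by omega) hy (by omega) with h | h
  · -- BA
    have hua : R (4*s-1) (4*s-2) := Rc hy rfl h
    obtain ⟨y2, hy2⟩ := C.ex_succ (x := 4*s-2) (by omega) (by omega) (by omega)
    rcases nbAo C (i := s) (by omega) (by omega) hy2 (by omega)
      with h2 | ⟨hsB', h2⟩ | ⟨hsBe, h2⟩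
    · exact absurd (no2 C (Rc hy2 rfl h2) hua) id
    · exact masterM2BAlt C hs1 hsB' hu hua (Rc hy2 rfl h2)
    · exact masterM2BAsB C (by omega)
        (Rc hua (show 4*s-1 = 4*B-1 by omega) (show 4*s-2 = 4*B-2 by omega))
        (Rc hy2 (show 4*s-2 = 4*B-2 by omega) h2)
  · exact masterM2BC C hs1 hsB hu (Rc hy rfl h)

/-- THE MASTER LEMMA: any Hamiltonian-path structure has a legal start/end pair. -/
lemma master (C : Ctx B R idx u v) : Legal B u v := by
  have hB := C.hB; have hu2 := C.hu2; have hu1 := C.hu1; have huB := C.huB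
  by_cases h1 : u = 1
  · exact masterM0 C h1
  rcases (show u % 4 = 1 ∨ u % 4 = 3 by omega) with h | h
  · exact masterM1 C (s := u/4) (by omega) (by omega) (by omega)
  · exact masterM2 C (s := (u+1)/4) (by omega) (by omega) (by omega)

end

/-- bridge between `oddEdges` and `Edg`. -/
lemma edg_bridge {k B x y : ℕ} (hB : 2 ≤ B) (hk : k = 2*B+1) :
    (x, y) ∈ oddEdges k ↔ Edg B x y := by
  subst hk
  unfold oddEdges Edg
  rw [show (2*B+1-1)/2 = B by omega, show (2*B+1-3)/2 = B-1 by omega,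
    show 2*(2*B+1)-4 = 4*B-2 by omega, show 2*(2*B+1)-2 = 4*B by omega]
  simp only [Finset.mem_union, Finset.mem_biUnion, Finset.mem_insert, Finset.mem_singleton,
    Finset.mem_Icc, Prod.mk.injEq]
  constructor
  · rintro ((⟨i, hi, hc⟩ | ⟨i, hi, hc⟩) | h | h | h)
    · exact Or.inl ⟨i, hi.1, hi.2, by tauto⟩
    · exact Or.inr (Or.inl ⟨i, hi.1, hi.2, by tauto⟩)
    · exact Or.inr (Or.inr (Or.inl h))
    · exact Or.inr (Or.inr (Or.inr (Or.inl h)))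
    · exact Or.inr (Or.inr (Or.inr (Or.inr h)))
  · rintro (⟨i, hi1, hi2, hc⟩ | ⟨i, hi1, hi2, hc⟩ | h | h | h)
    · exact Or.inl (Or.inl ⟨i, ⟨hi1, hi2⟩, by tauto⟩)
    · exact Or.inl (Or.inr ⟨i, ⟨hi1, hi2⟩, by tauto⟩)
    · exact Or.inr (Or.inl h)
    · exact Or.inr (Or.inr (Or.inl h))
    · exact Or.inr (Or.inr (Or.inr h))

lemma oddOut_vals {k m : ℕ} (hk : 5 ≤ k) (hko : k % 2 = 1) (hm1 : 1 ≤ m) (hmk : m ≤ k) :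
    (m = 1 ∧ oddOut k m = 2*k-1) ∨ (m = k-1 ∧ oddOut k m = 3) ∨
    (m = k ∧ oddOut k m = 2*k-5) ∨ (m % 2 = 0 ∧ 2 ≤ m ∧ m ≤ k-3 ∧ oddOut k m = 2*m+3) ∨
    (m % 2 = 1 ∧ 3 ≤ m ∧ m ≤ k-2 ∧ oddOut k m = 2*m-5) := by
  unfold oddOut
  split_ifs with h1 h2 h3 h4
  · exact Or.inl ⟨h1, rfl⟩
  · exact Or.inr (Or.inl ⟨h2, rfl⟩)
  · exact Or.inr (Or.inr (Or.inl ⟨h3, rfl⟩))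
  · obtain ⟨t, ht⟩ := h4
    exact Or.inr (Or.inr (Or.inr (Or.inl ⟨by omega, by omega, by omega, rfl⟩)))
  · rw [Nat.even_iff, ← Nat.not_odd_iff, Nat.odd_iff, not_not] at h4
    exact Or.inr (Or.inr (Or.inr (Or.inr ⟨h4, by omega, by omega, rfl⟩)))

lemma getElem?_indexOf {p : List ℕ} (hNd : p.Nodup) {n x : ℕ} (h : p[n]? = some x) :
    p.idxOf x = n := by
  obtain ⟨hlt, he⟩ := List.getElem?_eq_some_iff.mp h
  subst he
  exact List.Nodup.idxOf_getElem hNd n hlt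

end OddSk

/-- for odd `k ≥ 5` and `j ≠ m` in `{1, …, k}`, there is no Hamiltonian
path in `S_k` from the incoming vertex `i_j = 2j - 1` to the outgoing vertex `o_m`. -/
theorem oddSk_no_unpaired_hamPath (k : ℕ) (hk : 5 ≤ k) (hko : Odd k)
    (j m : ℕ) (hj1 : 1 ≤ j) (hjk : j ≤ k) (hm1 : 1 ≤ m) (hmk : m ≤ k) (hjm : j ≠ m) :
    ¬ ∃ p : List ℕ, IsHamPathOn (fun x y => (x, y) ∈ oddEdges k)
        (Finset.Icc 1 (2 * k - 1)) (2 * j - 1) (oddOut k m) p := by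
  rintro ⟨p, hNd, hCh, hHd, hLa, hMem⟩
  have hko' : k % 2 = 1 := Nat.odd_iff.mp hko
  set B : ℕ := (k-1)/2 with hBdef
  have hkB : k = 2*B+1 := by omega
  have hB2 : 2 ≤ B := by omega
  set u : ℕ := 2*j-1 with hudef
  set v : ℕ := oddOut k m with hvdef
  set R : ℕ → ℕ → Prop := fun x y => ∃ n : ℕ, p[n]? = some x ∧ p[n+1]? = some y with hRdef
  -- basic list facts
  have hmemi : ∀ x, x ∈ p ↔ (1 ≤ x ∧ x ≤ 4*B+1) := by
    intro x
    rw [hMem x, Finset.mem_Icc]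
    omega
  have hget_of_mem : ∀ x, 1 ≤ x → x ≤ 4*B+1 → ∃ n : ℕ, p[n]? = some x := by
    intro x h1 h2
    exact List.mem_iff_getElem?.mp ((hmemi x).mpr ⟨h1, h2⟩)
  have hHd' : p[0]? = some u := by rw [← List.head?_eq_getElem?]; exact hHd
  have hLa' : p[p.length - 1]? = some v := by rw [← List.getLast?_eq_getElem?]; exact hLa
  have hlen : 1 ≤ p.length := by
    rcases p with _ | ⟨a, q⟩
    · simp at hHd
    · simp
  have hvv : OddSk.Edg B u u ∨ True := Or.inr trivial
  -- parity and bounds of endpoints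
  have huP : u % 2 = 1 ∧ 1 ≤ u ∧ u ≤ 4*B+1 := by omega
  have hvP : v % 2 = 1 ∧ 1 ≤ v ∧ v ≤ 4*B+1 := by
    have := OddSk.oddOut_vals hk hko' hm1 hmk
    omega
  -- u ≠ v
  have huv : u ≠ v := by
    intro he
    have h0 : p.idxOf u = 0 := OddSk.getElem?_indexOf hNd hHd'
    have h1 : p.idxOf v = p.length - 1 := OddSk.getElem?_indexOf hNd hLa'
    have hlen1 : p.length = 1 := by rw [he] at h0; omega
    obtain ⟨n1, hn1⟩ := hget_of_mem 1 (by omega) (by omega)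
    obtain ⟨n2, hn2⟩ := hget_of_mem 2 (by omega) (by omega)
    have e1 : n1 = 0 := by have := (List.getElem?_eq_some_iff.mp hn1).1; omega
    have e2 : n2 = 0 := by have := (List.getElem?_eq_some_iff.mp hn2).1; omega
    rw [e1] at hn1; rw [e2] at hn2
    rw [hn1] at hn2
    simp at hn2
  -- the context
  have C : OddSk.Ctx B R (fun x => p.idxOf x) u v := by
    refine ⟨hB2, ?_, ?_, ?_, ?_, ?_, ?_, ?_, ?_, huP.2.1, huP.2.2, huP.1,
      hvP.2.1, hvP.2.2, hvP.1, huv⟩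
    · -- edg
      rintro x y ⟨n, hx, hy⟩
      have hlt : n + 1 < p.length := (List.getElem?_eq_some_iff.mp hy).1
      have hx' : p[n] = x := (List.getElem?_eq_some_iff.mp hx).2
      have hy' : p[n+1] = y := (List.getElem?_eq_some_iff.mp hy).2
      have hc := List.isChain_iff_getElem.mp hCh n (by omega)
      simp only [hx', hy'] at hc
      exact (OddSk.edg_bridge hB2 hkB).mp hc
    · -- ex_succ
      intro x h1 h2 hxv
      obtain ⟨n, hn⟩ := hget_of_mem x h1 h2
      rcases he : p[n+1]? with _ | y
      · exfalso
        have hlt : n < p.length := (List.getElem?_eq_some_iff.mp hn).1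
        have : p.length ≤ n + 1 := by
          by_contra hcon
          rw [List.getElem?_eq_none_iff] at he
          omega
        have : n = p.length - 1 := by omega
        rw [this] at hn
        rw [hn] at hLa'
        simp at hLa'
        exact hxv hLa'.symm.symm
      · exact ⟨y, n, hn, he⟩
    · -- ex_pred
      intro x h1 h2 hxu
      obtain ⟨n, hn⟩ := hget_of_mem x h1 h2
      rcases n with _ | n'
      · exfalso
        rw [hn] at hHd'
        simp at hHd'
        exact hxu hHd'.symm.symm
      · rcases he : p[n']? with _ | y
        · exfalso
          have hlt : n'+1 < p.length := (List.getElem?_eq_some_iff.mp hn).1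
          rw [List.getElem?_eq_none_iff] at he
          omega
        · exact ⟨y, n', he, hn⟩
    · -- sU
      rintro x y y' ⟨n, hx, hy⟩ ⟨n', hx', hy'⟩
      have e1 := OddSk.getElem?_indexOf hNd hx
      have e2 := OddSk.getElem?_indexOf hNd hx'
      have : n = n' := by omega
      subst this
      rw [hy] at hy'
      simpa using hy'
    · -- pU
      rintro x x' y ⟨n, hx, hy⟩ ⟨n', hx', hy'⟩
      have e1 := OddSk.getElem?_indexOf hNd hy
      have e2 := OddSk.getElem?_indexOf hNd hy'
      have : n = n' := by omega
      subst this
      rw [hx] at hx'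
      simpa using hx'
    · -- nu
      rintro y ⟨n, hy, hu'⟩
      have e1 := OddSk.getElem?_indexOf hNd hu'
      have e2 := OddSk.getElem?_indexOf hNd hHd'
      omega
    · -- nv
      rintro y ⟨n, hv', hy⟩
      have e1 := OddSk.getElem?_indexOf hNd hv'
      have e2 := OddSk.getElem?_indexOf hNd hLa'
      have hlt : n + 1 < p.length := (List.getElem?_eq_some_iff.mp hy).1
      omega
    · -- hidx
      rintro x y ⟨n, hx, hy⟩
      have e1 := OddSk.getElem?_indexOf hNd hx
      have e2 := OddSk.getElem?_indexOf hNd hy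
      omega
  -- conclude
  have hL := OddSk.master C
  have hov := OddSk.oddOut_vals hk hko' hm1 hmk
  rcases hL with ⟨hu', hv'⟩ | ⟨s, hs1, hsB, hu', hv'⟩ | ⟨s, hs1, hsB, hu', hv'⟩ | ⟨hu', hv'⟩
  · exact hjm (by omega)
  · exact hjm (by omega)
  · exact hjm (by omega)
  · exact hjm (by omega)
end

section
/- For every even integer k ≥ 4 and every j ∈ {1,…,k}, there exists a Hamiltonian path in the digraph S_k from the incoming vertex i_j to the outgoing vertex o_j. -/
namespace SkEven

/-- Bundle of path-segment properties. -/
structure Seg (E : ℕ → ℕ → Prop) (u v : ℕ) (l : List ℕ) (S : ℕ → Prop) : Prop where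
  hd : l.head? = some u
  lst : l.getLast? = some v
  nd : l.Nodup
  chain : l.Chain' E
  mem : ∀ x, x ∈ l ↔ S x

theorem Seg.append {E : ℕ → ℕ → Prop} {u v w z : ℕ} {l₁ l₂ : List ℕ} {S₁ S₂ : ℕ → Prop}
    (h₁ : Seg E u v l₁ S₁) (h₂ : Seg E w z l₂ S₂)
    (e : E v w) (disj : ∀ x, S₁ x → S₂ x → False) :
    Seg E u z (l₁ ++ l₂) (fun x => S₁ x ∨ S₂ x) where
  hd := by rw [List.head?_append, h₁.hd]; rfl
  lst := by rw [List.getLast?_append, h₂.lst]; rfl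
  nd := List.nodup_append'.mpr ⟨h₁.nd, h₂.nd,
    by intro a ha hb; exact disj a ((h₁.mem a).1 ha) ((h₂.mem a).1 hb)⟩
  chain := List.isChain_append.mpr ⟨h₁.chain, h₂.chain, by
    rw [h₁.lst, h₂.hd]
    intro x hx y hy
    simp only [Option.mem_def, Option.some.injEq] at hx hy
    subst hx; subst hy; exact e⟩
  mem := fun x => by simp only [List.mem_append, h₁.mem, h₂.mem]

theorem Seg.congr {E : ℕ → ℕ → Prop} {u v : ℕ} {l : List ℕ} {S S' : ℕ → Prop}
    (h : Seg E u v l S) (hS : ∀ x, S x ↔ S' x) : Seg E u v l S' :=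
  ⟨h.hd, h.lst, h.nd, h.chain, fun x => (h.mem x).trans (hS x)⟩

theorem Seg.reverse {E : ℕ → ℕ → Prop} {u v : ℕ} {l : List ℕ} {S : ℕ → Prop}
    (h : Seg E u v l S) : Seg (flip E) v u l.reverse S where
  hd := by rw [List.head?_reverse, h.lst]
  lst := by rw [List.getLast?_reverse, h.hd]
  nd := List.nodup_reverse.mpr h.nd
  chain := List.isChain_reverse.mpr h.chain
  mem := fun x => by rw [List.mem_reverse]; exact h.mem x

theorem chain'_range' {E : ℕ → ℕ → Prop} :
    ∀ (n a : ℕ), (∀ m, a ≤ m → m + 1 < a + n → E m (m+1)) → List.Chain' E (List.range' a n)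
  | 0, _, _ => List.isChain_nil
  | 1, _, _ => List.isChain_singleton _
  | (n+2), a, h => by
    rw [show n+2 = (n+1)+1 from rfl, List.range'_succ, List.range'_succ, List.Chain', List.isChain_cons_cons]
    refine ⟨h a le_rfl (by omega), ?_⟩
    have := chain'_range' (n+1) (a+1) (fun m hm hlt => h m (by omega) (by omega))
    rwa [List.range'_succ] at this

/-- ascending list a, a+1, ..., b -/
def asc (a b : ℕ) : List ℕ := List.range' a (b + 1 - a)

/-- descending list a, a-1, ..., b -/
def desc (a b : ℕ) : List ℕ := (asc b a).reverse

theorem asc_seg {E : ℕ → ℕ → Prop} {a b : ℕ} (hab : a ≤ b)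
    (he : ∀ m, a ≤ m → m < b → E m (m+1)) :
    Seg E a b (asc a b) (fun x => a ≤ x ∧ x ≤ b) where
  hd := by
    unfold asc
    rw [show b + 1 - a = (b - a) + 1 by omega, List.range'_succ]
    rfl
  lst := by
    unfold asc
    rw [show b + 1 - a = (b - a) + 1 by omega, List.range'_concat, List.getLast?_append]
    have : a + 1 * (b - a) = b := by omega
    rw [this]
    rfl
  nd := List.nodup_range'
  chain := chain'_range' _ _ (fun m hm hlt => he m hm (by omega))
  mem := fun x => by rw [asc, List.mem_range'_1]; omega

theorem desc_seg {E : ℕ → ℕ → Prop} {a b : ℕ} (hba : b ≤ a)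
    (he : ∀ m, b < m → m ≤ a → E m (m-1)) :
    Seg E a b (desc a b) (fun x => b ≤ x ∧ x ≤ a) := by
  have h : Seg (flip E) b a (asc b a) (fun x => b ≤ x ∧ x ≤ a) :=
    asc_seg hba (fun m hm hlt => by
      have := he (m+1) (by omega) (by omega)
      simpa [flip] using this)
  exact h.reverse



theorem evenEdges_of_seg {k i : ℕ} (h1 : 1 ≤ i) (h2 : i ≤ (k-2)/2) {e : ℕ × ℕ}
    (he : e = (4*i-2, 4*i-1) ∨ e = (4*i-1, 4*i-2) ∨ e = (4*i-1, 4*i) ∨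
      e = (4*i, 4*i-1) ∨ e = (4*i, 4*i+1) ∨ e = (4*i+1, 4*i)) : e ∈ evenEdges k := by
  unfold evenEdges
  refine Finset.mem_union_left _ (Finset.mem_union_left _ (Finset.mem_biUnion.mpr
    ⟨i, Finset.mem_Icc.mpr ⟨h1, h2⟩, ?_⟩))
  rcases he with h|h|h|h|h|h <;> subst h <;> simp

theorem evenEdges_of_cross {k i : ℕ} (h1 : 1 ≤ i) (h2 : i ≤ (k-4)/2) {e : ℕ × ℕ}
    (he : e = (4*i-2, 4*i+5) ∨ e = (4*i+1, 4*i+2)) : e ∈ evenEdges k := by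
  unfold evenEdges
  refine Finset.mem_union_left _ (Finset.mem_union_right _ (Finset.mem_biUnion.mpr
    ⟨i, Finset.mem_Icc.mpr ⟨h1, h2⟩, ?_⟩))
  rcases he with h|h <;> subst h <;> simp

theorem evenEdges_of_special {k : ℕ} {e : ℕ × ℕ}
    (he : e = (1,2) ∨ e = (2*k-6, 2*k-1) ∨ e = (2*k-3, 2*k-2) ∨ e = (2*k-2, 1) ∨
      e = (2*k-2, 5) ∨ e = (2*k-1, 2*k-2)) : e ∈ evenEdges k := by
  unfold evenEdges
  refine Finset.mem_union_right _ ?_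
  rcases he with h|h|h|h|h|h <;> subst h <;> simp

theorem edge_succ {k m c : ℕ} (hk : 4 ≤ k) (hc : k = c + c)
    (h1 : 1 ≤ m) (h2 : m ≤ 2*k-3) : (m, m+1) ∈ evenEdges k := by
  rcases eq_or_ne m 1 with rfl | hm1
  · exact evenEdges_of_special (Or.inl rfl)
  rcases eq_or_ne m (2*k-3) with rfl | hm2
  · refine evenEdges_of_special (Or.inr (Or.inr (Or.inl ?_)))
    simp only [Prod.mk.injEq, true_and, and_true]; omega
  have hm : m % 4 = 0 ∨ m % 4 = 1 ∨ m % 4 = 2 ∨ m % 4 = 3 := by omega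
  rcases hm with h|h|h|h
  · refine evenEdges_of_seg (i := m/4) (by omega) (by omega)
      (Or.inr (Or.inr (Or.inr (Or.inr (Or.inl ?_)))))
    simp only [Prod.mk.injEq, true_and, and_true]; omega
  · refine evenEdges_of_cross (i := m/4) (by omega) (by omega) (Or.inr ?_)
    simp only [Prod.mk.injEq, true_and, and_true]; omega
  · refine evenEdges_of_seg (i := (m+2)/4) (by omega) (by omega) (Or.inl ?_)
    simp only [Prod.mk.injEq, true_and, and_true]; omega
  · refine evenEdges_of_seg (i := (m+1)/4) (by omega) (by omega)
      (Or.inr (Or.inr (Or.inl ?_)))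
    simp only [Prod.mk.injEq, true_and, and_true]; omega

theorem edge_pred {k m c : ℕ} (hk : 4 ≤ k) (hc : k = c + c)
    (h1 : 3 ≤ m) (h2 : m ≤ 2*k-3) (h3 : m % 4 ≠ 2) : (m, m-1) ∈ evenEdges k := by
  have hm : m % 4 = 0 ∨ m % 4 = 1 ∨ m % 4 = 3 := by omega
  rcases hm with h|h|h
  · refine evenEdges_of_seg (i := m/4) (by omega) (by omega)
      (Or.inr (Or.inr (Or.inr (Or.inl ?_))))
    simp only [Prod.mk.injEq, true_and, and_true]; omega
  · refine evenEdges_of_seg (i := (m-1)/4) (by omega) (by omega)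
      (Or.inr (Or.inr (Or.inr (Or.inr (Or.inr ?_)))))
    simp only [Prod.mk.injEq, true_and, and_true]; omega
  · refine evenEdges_of_seg (i := (m+1)/4) (by omega) (by omega)
      (Or.inr (Or.inl ?_))
    simp only [Prod.mk.injEq, true_and, and_true]; omega

/-- `Dl k r s`: the block path `B_s ++ B_{s+1} ++ ... ++ B_{s+r-1} ++ [2k-1, 2k-2]`,
where `B_i = [4i+5, 4i+4, 4i+3, 4i+2]`. -/
def Dl (k : ℕ) : ℕ → ℕ → List ℕ
  | 0, _ => [2*k-1, 2*k-2]
  | (r+1), s => desc (4*s+5) (4*s+2) ++ Dl k r (s+1)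

theorem Dl_seg {k c : ℕ} (hk : 4 ≤ k) (hc : k = c + c) :
    ∀ r s : ℕ, 1 ≤ s → r + s = (k-2)/2 →
    ∃ h, (4*s-2, h) ∈ evenEdges k ∧
      Seg (fun x y => (x,y) ∈ evenEdges k) h (2*k-2) (Dl k r s)
        (fun x => 4*s+2 ≤ x ∧ x ≤ 2*k-1)
  | 0, s, hs1, hs2 => by
    refine ⟨2*k-1, ?_, ?_, ?_, ?_, ?_, ?_⟩
    · refine evenEdges_of_special (Or.inr (Or.inl ?_))
      simp only [Prod.mk.injEq, true_and, and_true]; omega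
    · rfl
    · rfl
    · simp only [Dl, List.nodup_cons, List.mem_singleton, List.not_mem_nil,
        List.nodup_nil, and_true, not_false_iff]
      omega
    · simp only [Dl, List.Chain', List.isChain_cons_cons, List.isChain_singleton, and_true]
      exact evenEdges_of_special (Or.inr (Or.inr (Or.inr (Or.inr (Or.inr rfl)))))
    · intro x
      simp only [Dl, List.mem_cons, List.mem_singleton, List.not_mem_nil, or_false]
      omega
  | (r+1), s, hs1, hs2 => by
    obtain ⟨h, hent, hseg⟩ := Dl_seg hk hc r (s+1) (by omega) (by omega)
    have hblock : Seg (fun x y => (x,y) ∈ evenEdges k) (4*s+5) (4*s+2)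
        (desc (4*s+5) (4*s+2)) (fun x => 4*s+2 ≤ x ∧ x ≤ 4*s+5) :=
      desc_seg (by omega) (fun m hm1 hm2 =>
        edge_pred hk hc (by omega) (by omega) (by omega))
    have hj : ((4*s+2 : ℕ), h) ∈ evenEdges k := by
      rwa [show (4*(s+1)-2 : ℕ) = 4*s+2 by omega] at hent
    refine ⟨4*s+5, ?_, ?_⟩
    · exact evenEdges_of_cross (i := s) hs1 (by omega) (Or.inl rfl)
    · refine (hblock.append hseg hj ?_).congr ?_
      · intro x hx1 hx2; omega
      · intro x; constructor
        · rintro (h1 | h1) <;> omega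
        · intro h1
          by_cases h2 : x ≤ 4*s+5
          · exact Or.inl ⟨h1.1, h2⟩
          · exact Or.inr ⟨by omega, h1.2⟩


theorem topSeg {k c : ℕ} (hk : 4 ≤ k) (hc : k = c + c) :
    Seg (fun x y => (x,y) ∈ evenEdges k) (2*k-1) (2*k-2) [2*k-1, 2*k-2]
      (fun x => 2*k-2 ≤ x ∧ x ≤ 2*k-1) where
  hd := rfl
  lst := rfl
  nd := by
    simp only [List.nodup_cons, List.mem_singleton, List.not_mem_nil, not_false_iff,
      List.nodup_nil, and_true]
    omega
  chain := by
    simp only [List.Chain', List.isChain_cons_cons, List.isChain_singleton, and_true]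
    exact evenEdges_of_special (Or.inr (Or.inr (Or.inr (Or.inr (Or.inr rfl)))))
  mem := fun x => by
    simp only [List.mem_cons, List.mem_singleton, List.not_mem_nil, or_false]
    omega

end SkEven

open SkEven in
/-- for even `k ≥ 4` and every `j ∈ {1, …, k}`, there is a Hamiltonian path
in `S_k` from the incoming vertex `i_j = 2j - 1` to the outgoing vertex `o_j`. -/
theorem evenSk_paired_hamPath (k : ℕ) (hk : 4 ≤ k) (hke : Even k)
    (j : ℕ) (hj1 : 1 ≤ j) (hjk : j ≤ k) :
    ∃ p : List ℕ, IsHamPathOn (fun x y => (x, y) ∈ evenEdges k)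
      (Finset.Icc 1 (2 * k - 1)) (2 * j - 1) (evenOut k j) p := by
  obtain ⟨c, hc⟩ := hke
  have toHam : ∀ {u v : ℕ} {l : List ℕ} {S : ℕ → Prop},
      Seg (fun x y => (x,y) ∈ evenEdges k) u v l S → (∀ x, S x ↔ (1 ≤ x ∧ x ≤ 2*k-1)) →
      IsHamPathOn (fun x y => (x,y) ∈ evenEdges k) (Finset.Icc 1 (2*k-1)) u v l :=
    fun h hS => ⟨h.nd, h.chain, h.hd, h.lst, fun x => by rw [h.mem, hS, Finset.mem_Icc]⟩
  have espec1 : ((2*k-2 : ℕ), (1:ℕ)) ∈ evenEdges k :=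
    evenEdges_of_special (Or.inr (Or.inr (Or.inr (Or.inl rfl))))
  have espec5 : ((2*k-2 : ℕ), (5:ℕ)) ∈ evenEdges k :=
    evenEdges_of_special (Or.inr (Or.inr (Or.inr (Or.inr (Or.inl rfl)))))
  have espec6 : ((2*k-6 : ℕ), (2*k-1:ℕ)) ∈ evenEdges k :=
    evenEdges_of_special (Or.inr (Or.inl rfl))
  rcases eq_or_ne j 1 with rfl | hj_1
  · -- j = 1 : path [1,2] ++ D_1 ++ [5,4,3]
    obtain ⟨h, hent, hD⟩ := Dl_seg hk hc ((k-2)/2 - 1) 1 le_rfl (by omega)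
    have hent2 : ((2:ℕ), h) ∈ evenEdges k := by
      rwa [show (4*1-2 : ℕ) = 2 by omega] at hent
    have s1 : Seg (fun x y => (x,y) ∈ evenEdges k) 1 2 (asc 1 2)
        (fun x => 1 ≤ x ∧ x ≤ 2) :=
      asc_seg (by omega) (fun m h1 h2 => edge_succ hk hc (by omega) (by omega))
    have s3 : Seg (fun x y => (x,y) ∈ evenEdges k) 5 3 (desc 5 3)
        (fun x => 3 ≤ x ∧ x ≤ 5) :=
      desc_seg (by omega) (fun m h1 h2 => edge_pred hk hc (by omega) (by omega) (by omega))
    have hall := (s1.append hD hent2 (by intro x h1 h2; omega)).append s3 espec5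
      (by rintro x (h1 | h1) h2 <;> omega)
    rw [show (2*1-1 : ℕ) = 1 by omega, show evenOut k 1 = 3 by simp [evenOut]]
    exact ⟨_, toHam hall (by intro x; omega)⟩
  rcases eq_or_ne j k with hjeq | hj_k
  · -- j = k : path [2k-1, 2k-2] ++ [1, 2, ..., 2k-3]
    rw [hjeq]
    have s2 : Seg (fun x y => (x,y) ∈ evenEdges k) 1 (2*k-3) (asc 1 (2*k-3))
        (fun x => 1 ≤ x ∧ x ≤ 2*k-3) :=
      asc_seg (by omega) (fun m h1 h2 => edge_succ hk hc (by omega) (by omega))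
    have hall := (topSeg hk hc).append s2 espec1 (by intro x h1 h2; omega)
    have hout : evenOut k k = 2*k-3 := by
      unfold evenOut
      rw [if_neg (by omega), if_neg (by omega), if_neg (by omega), if_pos rfl]
    rw [hout]
    exact ⟨_, toHam hall (by intro x; omega)⟩
  rcases eq_or_ne j (k-2) with hjeq | hj_k2
  · -- j = k-2 : path [2k-5,...,2k-2] ++ [1,...,2k-6] ++ [2k-1]
    rw [hjeq]
    have a1 : Seg (fun x y => (x,y) ∈ evenEdges k) (2*k-5) (2*k-2) (asc (2*k-5) (2*k-2))
        (fun x => 2*k-5 ≤ x ∧ x ≤ 2*k-2) :=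
      asc_seg (by omega) (fun m h1 h2 => edge_succ hk hc (by omega) (by omega))
    have a2 : Seg (fun x y => (x,y) ∈ evenEdges k) 1 (2*k-6) (asc 1 (2*k-6))
        (fun x => 1 ≤ x ∧ x ≤ 2*k-6) :=
      asc_seg (by omega) (fun m h1 h2 => edge_succ hk hc (by omega) (by omega))
    have a3 : Seg (fun x y => (x,y) ∈ evenEdges k) (2*k-1) (2*k-1) (asc (2*k-1) (2*k-1))
        (fun x => 2*k-1 ≤ x ∧ x ≤ 2*k-1) :=
      asc_seg le_rfl (fun m h1 h2 => by omega)
    have hall := ((a1.append a2 espec1 (by intro x h1 h2; omega)).append a3 espec6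
      (by rintro x (h1 | h1) h2 <;> omega))
    have hout : evenOut k (k-2) = 2*k-1 := by
      unfold evenOut
      rw [if_neg (by omega), if_pos rfl]
    rw [hout, show 2*(k-2)-1 = 2*k-5 by omega]
    exact ⟨_, toHam hall (by intro x; omega)⟩
  rcases Nat.even_or_odd j with hje | hje
  · -- j even, 2 ≤ j ≤ k-4
    obtain ⟨m, hm⟩ := hje
    have hm1 : 1 ≤ m := by omega
    have hm2 : m ≤ (k-4)/2 := by omega
    obtain ⟨h, hent, hD⟩ := Dl_seg hk hc ((k-2)/2 - (m+1)) (m+1) (by omega) (by omega)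
    have hent2 : ((4*m+2:ℕ), h) ∈ evenEdges k := by
      rwa [show (4*(m+1)-2 : ℕ) = 4*m+2 by omega] at hent
    have a1 : Seg (fun x y => (x,y) ∈ evenEdges k) (4*m-1) (4*m+2) (asc (4*m-1) (4*m+2))
        (fun x => 4*m-1 ≤ x ∧ x ≤ 4*m+2) :=
      asc_seg (by omega) (fun mm h1 h2 => edge_succ hk hc (by omega) (by omega))
    have a2 : Seg (fun x y => (x,y) ∈ evenEdges k) 1 (4*m-2) (asc 1 (4*m-2))
        (fun x => 1 ≤ x ∧ x ≤ 4*m-2) :=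
      asc_seg (by omega) (fun mm h1 h2 => edge_succ hk hc (by omega) (by omega))
    have d3 : Seg (fun x y => (x,y) ∈ evenEdges k) (4*m+5) (4*m+3) (desc (4*m+5) (4*m+3))
        (fun x => 4*m+3 ≤ x ∧ x ≤ 4*m+5) :=
      desc_seg (by omega) (fun mm h1 h2 => edge_pred hk hc (by omega) (by omega) (by omega))
    have ecross : ((4*m-2:ℕ), (4*m+5:ℕ)) ∈ evenEdges k := by
      refine evenEdges_of_cross (i := m) hm1 hm2 (Or.inl ?_)
      simp only [Prod.mk.injEq, true_and, and_true]
    have hall := (((a1.append hD hent2 (by intro x h1 h2; omega)).append a2 espec1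
        (by rintro x (h1 | h1) h2 <;> omega)).append d3
        ecross
        (by rintro x ((h1 | h1) | h1) h2 <;> omega))
    have hout : evenOut k j = 4*m+3 := by
      unfold evenOut
      rw [if_neg hj_1, if_neg hj_k2, if_neg (show j ≠ k-1 by omega), if_neg hj_k,
        if_pos ⟨m, hm⟩]
      omega
    rw [hout, show 2*j-1 = 4*m-1 by omega]
    exact ⟨_, toHam hall (by intro x; omega)⟩
  · -- j odd, 3 ≤ j ≤ k-1
    obtain ⟨m, hm⟩ := hje
    have hm1 : 1 ≤ m := by omega
    have hm2 : m ≤ (k-2)/2 := by omega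
    obtain ⟨h, hent, hD⟩ := Dl_seg hk hc ((k-2)/2 - m) m hm1 (by omega)
    have d1 : Seg (fun x y => (x,y) ∈ evenEdges k) (4*m+1) (4*m-2) (desc (4*m+1) (4*m-2))
        (fun x => 4*m-2 ≤ x ∧ x ≤ 4*m+1) :=
      desc_seg (by omega) (fun mm h1 h2 => edge_pred hk hc (by omega) (by omega) (by omega))
    have a2 : Seg (fun x y => (x,y) ∈ evenEdges k) 1 (4*m-3) (asc 1 (4*m-3))
        (fun x => 1 ≤ x ∧ x ≤ 4*m-3) :=
      asc_seg (by omega) (fun mm h1 h2 => edge_succ hk hc (by omega) (by omega))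
    have hall := ((d1.append hD hent (by intro x h1 h2; omega)).append a2 espec1
      (by rintro x (h1 | h1) h2 <;> omega))
    have hout : evenOut k j = 4*m-3 := by
      unfold evenOut
      rcases eq_or_ne j (k-1) with hk1 | hk1
      · rw [if_neg hj_1, if_neg (show j ≠ k-2 by omega), if_pos hk1]
        omega
      · rw [if_neg hj_1, if_neg (show j ≠ k-2 by omega), if_neg hk1, if_neg hj_k,
          if_neg (show ¬ Even j from fun ⟨r, hr⟩ => by omega)]
        omega
    rw [hout, show 2*j-1 = 4*m+1 by omega]
    exact ⟨_, toHam hall (by intro x; omega)⟩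
end
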